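/- arXiv:1511.05882 — 2 statements merged into one kernel-verified Lean document; each statement's English description precedes it below -/
import Mathlib

section
/- For any scattered space (X, τ) and any ordinal λ, the space (X, τ_λ) is scattered and its rank function is ℓ^λ ∘ ρ_τ, i.e., ρ_{τ_λ}(x) = ℓ^λ(ρ_τ(x)) for every x ∈ X. -/
open Ordinal Set

noncomputable section

universe u

/-! ## Basic topological notions (explicit topologies) -/

/-- The derived set (set of limit points) of `A` w.r.t. the topology `t`. -/
def dSet {X : Type u} (t : TopologicalSpace X) (A : Set X) : Set X :=
  {x | ∀ U : Set X, t.IsOpen U → x ∈ U → ∃ y, y ∈ U ∩ A ∧ y ≠ x}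

/-- Transfinite iterates of the derived-set operator, starting from the whole space. -/
def dIter {X : Type u} (t : TopologicalSpace X) (o : Ordinal.{u}) : Set X :=
  Ordinal.limitRecOn o Set.univ (fun _ ih => dSet t ih)
    (fun o _ ih => ⋂ (o' : Ordinal.{u}) (h : o' < o), ih o' h)

/-- The Cantor–Bendixson rank of a point: the least `ξ` with `x ∉ d^{ξ+1} X`. -/
def ptRank {X : Type u} (t : TopologicalSpace X) (x : X) : Ordinal.{u} :=
  sInf {ξ : Ordinal.{u} | x ∉ dIter t (ξ + 1)}

/-- The rank of a space: `sup_{x ∈ X} (ρ(x) + 1)`. -/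
def spRank (X : Type u) (t : TopologicalSpace X) : Ordinal.{u} :=
  ⨆ x : X, ptRank t x + 1

/-- A space is scattered if every nonempty subset has an isolated point. -/
def IsScattered {X : Type u} (t : TopologicalSpace X) : Prop :=
  ∀ A : Set X, A.Nonempty → ∃ x ∈ A, ∃ U : Set X, t.IsOpen U ∧ U ∩ A = {x}

/-- A `d`-map: continuous, open and pointwise discrete. -/
def IsDMap {X : Type u} {Y : Type*} (t : TopologicalSpace X) (s : TopologicalSpace Y)
    (f : X → Y) : Prop :=
  @Continuous _ _ t s f ∧ @IsOpenMap _ _ t s f ∧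
    ∀ y : Y, ∀ x : X, f x = y →
      ∃ U : Set X, t.IsOpen U ∧ x ∈ U ∧ ∀ z ∈ U, f z = y → z = x

/-! ## Hyperexponentials and hyperlogarithms -/

/-- The exponential `e ξ = -1 + ω^ξ`. -/
def eFun (x : Ordinal.{u}) : Ordinal.{u} := ω ^ x - 1

/-- `E` is the family of hyperexponentials: a family of normal functions with `E 1 = e`,
`E (α+β) = E α ∘ E β`, pointwise minimal among all such families. -/
def IsHyperexpFamily (E : Ordinal.{u} → Ordinal.{u} → Ordinal.{u}) : Prop :=
  (∀ a, Order.IsNormal (E a)) ∧ E 1 = eFun ∧ (∀ a b, E (a + b) = E a ∘ E b) ∧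
    ∀ F : Ordinal.{u} → Ordinal.{u} → Ordinal.{u},
      (∀ a, Order.IsNormal (F a)) → F 1 = eFun → (∀ a b, F (a + b) = F a ∘ F b) →
        ∀ a b, E a b ≤ F a b

/-- The end logarithm: `ℓ 0 = 0` and `ℓ ξ` is the unique `β` with `ξ = α + ω^β`. -/
def ellFun (x : Ordinal.{u}) : Ordinal.{u} :=
  if x = 0 then 0 else sInf {b : Ordinal.{u} | ∃ a, x = a + ω ^ b}

/-- An initial function maps initial segments onto initial segments. -/
def IsInitialFun (f : Ordinal.{u} → Ordinal.{u}) : Prop :=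
  ∀ o : Ordinal.{u}, ∃ o' : Ordinal.{u}, f '' Set.Iio o = Set.Iio o'

/-- `L` is the family of hyperlogarithms: a family of initial functions with `L 1 = ℓ`,
`L (α+β) = L β ∘ L α`, pointwise maximal among all such families. -/
def IsHyperlogFamily (L : Ordinal.{u} → Ordinal.{u} → Ordinal.{u}) : Prop :=
  (∀ a, IsInitialFun (L a)) ∧ L 1 = ellFun ∧ (∀ a b, L (a + b) = L b ∘ L a) ∧
    ∀ M : Ordinal.{u} → Ordinal.{u} → Ordinal.{u},
      (∀ a, IsInitialFun (M a)) → M 1 = ellFun → (∀ a b, M (a + b) = M b ∘ M a) →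
        ∀ a b, M a b ≤ L a b

/-! ## Icard topologies -/

/-- The generalized Icard topology `τ_λ` based on a space `(X, t)`, relative to a family `L`
of hyperlogarithms: the least topology containing `t` and all sets
`(α, β]_ξ = {x | α < ℓ^ξ ρ_t(x) ≤ β}` (including `α = -1`, i.e. `[0, β]_ξ`), for `ξ < λ`. -/
def IcardTop {X : Type u} (L : Ordinal.{u} → Ordinal.{u} → Ordinal.{u})
    (t : TopologicalSpace X) (lam : Ordinal.{u}) : TopologicalSpace X :=
  t ⊓ TopologicalSpace.generateFrom
    {S : Set X | ∃ ξ < lam,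
      (∃ b : Ordinal.{u}, S = {x | L ξ (ptRank t x) ≤ b}) ∨
      (∃ a b : Ordinal.{u}, a < b ∧ S = {x | a < L ξ (ptRank t x) ∧ L ξ (ptRank t x) ≤ b})}

/-! ## Ordinal spaces -/

/-- The ordinal corresponding to a point of `Θ.ToType`. -/
def ordVal {Θ : Ordinal.{u}} (x : Θ.ToType) : Ordinal.{u} :=
  @Ordinal.typein Θ.ToType (· < ·) isWellOrder_lt x

/-- The left topology `I₀` on (the canonical type of order type) `Θ`, generated by the
intervals `[0, β]`. -/
def leftTop (Θ : Ordinal.{u}) : TopologicalSpace Θ.ToType :=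
  TopologicalSpace.generateFrom {S : Set Θ.ToType | ∃ b : Θ.ToType, S = Set.Iic b}

/-- The interval topology `I₁` on `Θ`, generated by the sets `[0, β]` and `(α, β]`. -/
def intervalTop (Θ : Ordinal.{u}) : TopologicalSpace Θ.ToType :=
  TopologicalSpace.generateFrom
    {S : Set Θ.ToType | (∃ b, S = Set.Iic b) ∨ ∃ a b : Θ.ToType, S = Set.Ioc a b}

/-- The Icard topology `I_λ = (I₀)_λ` on the ordinal `Θ`: the least topology containing the
left topology and all sets `{x < Θ | α < ℓ^ξ x ≤ β}` for `ξ < λ`. -/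
def ordIcard (L : Ordinal.{u} → Ordinal.{u} → Ordinal.{u}) (Θ lam : Ordinal.{u}) :
    TopologicalSpace Θ.ToType :=
  leftTop Θ ⊓ TopologicalSpace.generateFrom
    {S : Set Θ.ToType | ∃ ξ < lam,
      (∃ b : Ordinal.{u}, S = {x | L ξ (ordVal x) ≤ b}) ∨
      (∃ a b : Ordinal.{u}, a < b ∧ S = {x | a < L ξ (ordVal x) ∧ L ξ (ordVal x) ≤ b})}

/-! ## Modal logic: GL and topological (d-)semantics -/

/-- Formulas of the basic modal language. -/
inductive Fml : Type
  | bot : Fml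
  | var : ℕ → Fml
  | imp : Fml → Fml → Fml
  | box : Fml → Fml

namespace Fml

/-- Negation. -/
def neg (p : Fml) : Fml := p.imp .bot

/-- Diamond. -/
def dia (p : Fml) : Fml := (p.neg.box).neg

end Fml

/-- The valuation determined by an assignment `V` of sets to propositional variables, in the
`d`-semantics: `⟦◇φ⟧ = d⟦φ⟧`, i.e. `⟦◻φ⟧` is the complement of the derived set of the
complement of `⟦φ⟧`. -/
def fval {X : Type u} (t : TopologicalSpace X) (V : ℕ → Set X) : Fml → Set X
  | .bot => ∅
  | .var n => V n
  | .imp p q => (fval t V p)ᶜ ∪ fval t V q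
  | .box p => (dSet t (fval t V p)ᶜ)ᶜ

/-- Classical tautologies (boxed formulas and variables treated as atoms). -/
def Tautology (φ : Fml) : Prop :=
  ∀ v : Fml → Bool, v .bot = false → (∀ p q : Fml, v (p.imp q) = (!(v p) || v q)) →
    v φ = true

/-- Provability in the Gödel–Löb provability logic `GL`. -/
inductive GLProv : Fml → Prop
  | taut {φ : Fml} : Tautology φ → GLProv φ
  | axK (p q : Fml) : GLProv (((p.imp q).box).imp ((p.box).imp q.box))
  | axLob (p : Fml) : GLProv ((((p.box).imp p).box).imp p.box)
  | mp {p q : Fml} : GLProv (p.imp q) → GLProv p → GLProv q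
  | nec {p : Fml} : GLProv p → GLProv p.box

/-- A set of formulas is GL-consistent if no finite conjunction of its members provably
implies `⊥`. -/
def GLConsistent (Γ : Set Fml) : Prop :=
  ¬ ∃ l : List Fml, (∀ φ ∈ l, φ ∈ Γ) ∧ GLProv (l.foldr .imp .bot)

/-- `Γ` is satisfied in the space `(X, t)`. -/
def SatisfiedIn {X : Type u} (t : TopologicalSpace X) (Γ : Set Fml) : Prop :=
  ∃ (V : ℕ → Set X) (x : X), ∀ φ ∈ Γ, x ∈ fval t V φ

/-- `GL` is strongly complete with respect to `(X, t)`. -/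
def StronglyCompleteFor {X : Type u} (t : TopologicalSpace X) : Prop :=
  ∀ Γ : Set Fml, GLConsistent Γ → SatisfiedIn t Γ

/-- Validity of a formula in a space under the `d`-semantics. -/
def ValidIn {X : Type u} (t : TopologicalSpace X) (φ : Fml) : Prop :=
  ∀ V : ℕ → Set X, fval t V φ = Set.univ

/-! ## Trees and ω-bouquets -/

/-- The upset topology of a relation: opens are the `R`-upward closed sets. -/
def upTop {T : Type u} (R : T → T → Prop) : TopologicalSpace T where
  IsOpen U := ∀ x ∈ U, ∀ y, R x y → y ∈ U
  isOpen_univ := fun x _ y _ => trivial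
  isOpen_inter := fun s t hs ht x hx y hR => ⟨hs x hx.1 y hR, ht x hx.2 y hR⟩
  isOpen_sUnion := fun S hS x hx y hR => by
    obtain ⟨s, hsS, hxs⟩ := hx
    exact ⟨s, hsS, hS s hsS x hxs y hR⟩

/-- A countable, converse well-founded tree. -/
structure IsOmegaTree {T : Type u} (R : T → T → Prop) : Prop where
  countable : Countable T
  trans : ∀ a b c, R a b → R b c → R a c
  irrefl : ∀ a, ¬ R a a
  predWellOrdered : ∀ t : T, IsWellOrder {s : T // R s t} (fun a b => R a.1 b.1)
  root : ∃! r : T, ∀ s : T, ¬ R s r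
  converseWellFounded : WellFounded (fun a b : T => R b a)

/-- The daughters (immediate successors) of a node. -/
def daughters {T : Type u} (R : T → T → Prop) (w : T) : Set T :=
  {v | R w v ∧ ¬ ∃ u, R w u ∧ R u v}

/-- The bouquet topology `σ_R`: the least topology extending the upset topology such that
whenever `w` has limit rank, `(v_i)` enumerates the daughters of `w` without repetition and
`n < ω`, the set `{w} ∪ ⋃_{i > n} ({v_i} ∪ R(v_i))` is open. -/
def sigmaTop {T : Type u} (R : T → T → Prop) : TopologicalSpace T :=
  upTop R ⊓ TopologicalSpace.generateFrom
    {S : Set T | ∃ w : T, Order.IsSuccLimit (ptRank (upTop R) w) ∧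
      ∃ v : ℕ → T, Function.Injective v ∧ Set.range v = daughters R w ∧
        ∃ n : ℕ, S = {w} ∪ ⋃ (i : ℕ) (_ : n < i), ({v i} ∪ {u | R (v i) u})}

/-! ## The club topology (via its neighborhood characterization) -/

/-- `C` is a club in (i.e. a closed unbounded subset of) the point `x`. -/
def IsClubIn {Θ : Ordinal.{u}} (C : Set Θ.ToType) (x : Θ.ToType) : Prop :=
  (∀ y ∈ C, y < x) ∧ (∀ z, z < x → ∃ y ∈ C, z < y) ∧
    ∀ z, z < x → (∃ w, w < z) → (∀ w, w < z → ∃ y ∈ C, w < y ∧ y < z) → z ∈ C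

/-- `t` is the club topology on `Θ`: a set `U` is a neighborhood of a point `x ∈ U` iff
`U` contains a club in `x` or `cf(x) < ℵ₁`. -/
def IsClubTop (Θ : Ordinal.{u}) (t : TopologicalSpace Θ.ToType) : Prop :=
  ∀ (U : Set Θ.ToType) (x : Θ.ToType), x ∈ U →
    (U ∈ @nhds _ t x ↔
      (Ordinal.cof (ordVal x) < Cardinal.aleph 1 ∨ ∃ C ⊆ U, IsClubIn C x))

/-! ### Auxiliary development -/

namespace IcardAux

/-! #### The end logarithm -/

lemma ellFun_zero : ellFun (0 : Ordinal.{u}) = 0 := if_pos rfl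

lemma exists_tail_decomp : ∀ x : Ordinal.{u}, x ≠ 0 → ∃ γ e : Ordinal.{u}, x = γ + ω ^ e := by
  intro x
  induction x using Ordinal.induction with
  | _ x IH =>
    intro hx
    set l := Ordinal.log ω x with hl
    have hop : (ω : Ordinal.{u}) ^ l ≠ 0 := (Ordinal.opow_pos l omega0_pos).ne'
    have hMod : ω ^ l * (x / ω ^ l) + x % ω ^ l = x := Ordinal.div_add_mod x (ω ^ l)
    have hr : x % ω ^ l < ω ^ l := Ordinal.mod_lt x hop
    by_cases h0 : x % ω ^ l = 0
    · have hq : x / ω ^ l < ω := by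
        rw [Ordinal.div_lt hop]
        have := Ordinal.lt_opow_succ_log_self one_lt_omega0 x
        rwa [Ordinal.opow_succ] at this
      obtain ⟨n, hn⟩ := Ordinal.lt_omega0.1 hq
      have hn0 : n ≠ 0 := by
        rintro rfl
        apply hx
        rw [← hMod, h0, hn]
        simp
      obtain ⟨m, rfl⟩ := Nat.exists_eq_succ_of_ne_zero hn0
      refine ⟨ω ^ l * m, l, ?_⟩
      rw [← hMod, h0, hn, add_zero]
      push_cast
      rw [mul_add, mul_one]
    · have hrx : x % ω ^ l < x := lt_of_lt_of_le hr (Ordinal.opow_log_le_self ω hx)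
      obtain ⟨γ, e, hge⟩ := IH _ hrx h0
      exact ⟨ω ^ l * (x / ω ^ l) + γ, e, by rw [add_assoc, ← hge, hMod]⟩

/-- The set of "tail exponents". -/
def tailSet (x : Ordinal.{u}) : Set Ordinal.{u} := {b | ∃ a, x = a + ω ^ b}

lemma tailSet_nonempty {x : Ordinal.{u}} (hx : x ≠ 0) : (tailSet x).Nonempty := by
  obtain ⟨γ, e, h⟩ := exists_tail_decomp x hx
  exact ⟨e, γ, h⟩

lemma ellFun_eq_sInf {x : Ordinal.{u}} (hx : x ≠ 0) : ellFun x = sInf (tailSet x) := if_neg hx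

lemma ellFun_mem {x : Ordinal.{u}} (hx : x ≠ 0) : ellFun x ∈ tailSet x := by
  rw [ellFun_eq_sInf hx]; exact csInf_mem (tailSet_nonempty hx)

lemma exists_ellFun_decomp {x : Ordinal.{u}} (hx : x ≠ 0) :
    ∃ γ, x = γ + ω ^ ellFun x := ellFun_mem hx

lemma ellFun_le {x a b : Ordinal.{u}} (h : x = a + ω ^ b) : ellFun x ≤ b := by
  have hx : x ≠ 0 := by
    rw [h]
    exact (lt_of_lt_of_le (Ordinal.opow_pos b omega0_pos) ((le_add_self : _ ≤ a + _))).ne'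
  rw [ellFun_eq_sInf hx]
  exact csInf_le (OrderBot.bddBelow _) ⟨a, h⟩

lemma opow_ellFun_le {x : Ordinal.{u}} (hx : x ≠ 0) : ω ^ ellFun x ≤ x := by
  obtain ⟨γ, h⟩ := exists_ellFun_decomp hx
  have := (le_add_self : (ω ^ ellFun x) ≤ γ + (ω ^ ellFun x))
  rwa [← h] at this

lemma ellFun_lt_of_lt_opow {z e : Ordinal.{u}} (hz : z ≠ 0) (h : z < ω ^ e) :
    ellFun z < e := by
  by_contra hle
  push_neg at hle
  have : (ω : Ordinal.{u}) ^ e ≤ ω ^ ellFun z :=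
    Ordinal.opow_le_opow_right omega0_pos hle
  exact absurd (lt_of_lt_of_le h (le_trans this (opow_ellFun_le hz))) (lt_irrefl z)

lemma ellFun_add {z : Ordinal.{u}} (γ : Ordinal.{u}) (hz : z ≠ 0) :
    ellFun (γ + z) = ellFun z := by
  have hgz : γ + z ≠ 0 := by
    intro h
    exact hz (le_antisymm (le_trans ((le_add_self : z ≤ γ + z)) h.le) ((zero_le : 0 ≤ z)))
  apply le_antisymm
  · obtain ⟨a, ha⟩ := exists_ellFun_decomp hz
    exact ellFun_le (x := γ + z) (a := γ + a) (b := ellFun z)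
      (by rw [add_assoc, ← ha])
  · rw [ellFun_eq_sInf hgz]
    apply le_csInf (tailSet_nonempty hgz)
    rintro b ⟨a, hab⟩
    rcases le_or_gt γ a with hga | hga
    · obtain ⟨d, rfl⟩ : ∃ d, a = γ + d := ⟨a - γ, (Ordinal.add_sub_cancel_of_le hga).symm⟩
      rw [add_assoc] at hab
      have : z = d + ω ^ b := (add_right_inj γ).1 hab
      exact ellFun_le this
    · have hd : γ = a + (γ - a) := (Ordinal.add_sub_cancel_of_le hga.le).symm
      have hzb : z ≤ ω ^ b := by
        have : a + ((γ - a) + z) = a + ω ^ b := by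
          rw [← add_assoc, ← hd, hab]
        have h2 : (γ - a) + z = ω ^ b := (add_right_inj a).1 this
        calc z ≤ (γ - a) + z := (le_add_self : z ≤ _ + z)
        _ = ω ^ b := h2
      have : (ω : Ordinal.{u}) ^ ellFun z ≤ ω ^ b := le_trans (opow_ellFun_le hz) hzb
      exact (Ordinal.opow_le_opow_iff_right one_lt_omega0).1 this

lemma ellFun_opow (e : Ordinal.{u}) : ellFun ((ω : Ordinal.{u}) ^ e) = e := by
  have hne : (ω : Ordinal.{u}) ^ e ≠ 0 := (Ordinal.opow_pos e omega0_pos).ne'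
  apply le_antisymm
  · exact ellFun_le (a := 0) (by rw [zero_add])
  · by_contra hlt
    push_neg at hlt
    obtain ⟨γ, hg⟩ := exists_ellFun_decomp hne
    have hg1 : γ < ω ^ e := by
      rcases lt_or_ge γ (ω ^ e) with h | h
      · exact h
      · exfalso
        have : ω ^ e + ω ^ ellFun (ω ^ e) ≤ γ + ω ^ ellFun (ω ^ e) := add_le_add_left h _
        rw [← hg] at this
        have h2 : (0:Ordinal.{u}) < ω ^ ellFun ((ω:Ordinal.{u}) ^ e) := Ordinal.opow_pos _ omega0_pos
        have h3 : (ω:Ordinal.{u}) ^ e < ω ^ e + ω ^ ellFun ((ω:Ordinal.{u}) ^ e) := by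
          simpa using add_lt_add_right h2 ((ω:Ordinal.{u}) ^ e)
        exact absurd (lt_of_lt_of_le h3 this) (lt_irrefl _)
    have hg2 : (ω : Ordinal.{u}) ^ ellFun ((ω:Ordinal.{u}) ^ e) < ω ^ e :=
      (Ordinal.opow_lt_opow_iff_right one_lt_omega0).2 hlt
    have hfin : γ + ω ^ ellFun ((ω:Ordinal.{u}) ^ e) < ω ^ e :=
      Ordinal.principal_add_omega0_opow e hg1 hg2
    rw [← hg] at hfin
    exact absurd hfin (lt_irrefl _)

lemma ellFun_add_opow (γ e : Ordinal.{u}) : ellFun (γ + ω ^ e) = e := by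
  rw [ellFun_add γ (Ordinal.opow_pos e omega0_pos).ne', ellFun_opow]

lemma ellFun_succ (x : Ordinal.{u}) : ellFun (x + 1) = 0 := by
  have := ellFun_add_opow x 0
  rwa [Ordinal.opow_zero] at this

lemma ellFun_le_self (x : Ordinal.{u}) : ellFun x ≤ x := by
  by_cases hx : x = 0
  · subst hx; rw [ellFun_zero]
  · exact le_trans (Ordinal.right_le_opow _ one_lt_omega0) (opow_ellFun_le hx)

lemma ellFun_eq_self_iff_ge_omega {x : Ordinal.{u}} (hx : x ≠ 0) (h : ellFun x = x) :
    ω ≤ x := by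
  by_contra hlt
  push_neg at hlt
  have hxx : x < ω ^ x := by
    calc x < ω := hlt
    _ = ω ^ (1:Ordinal.{u}) := (Ordinal.opow_one ω).symm
    _ ≤ ω ^ x := Ordinal.opow_le_opow_right omega0_pos (Ordinal.one_le_iff_ne_zero.2 hx)
  have := opow_ellFun_le hx
  rw [h] at this
  exact absurd (lt_of_lt_of_le hxx this) (lt_irrefl x)

end IcardAux

namespace IcardAux

/-! #### Initial functions -/

lemma isInitialFun_of_dc {f : Ordinal.{u} → Ordinal.{u}}
    (h : ∀ o x, x < o → ∀ c < f x, ∃ y < o, f y = c) : IsInitialFun f := by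
  intro o
  have hsm : Small.{u} (f '' Iio o) := by
    have : Small.{u} (Iio o) := inferInstance
    exact small_of_surjective (f := fun y : Iio o => (⟨f y.1, y.1, y.2, rfl⟩ : f '' Iio o))
      (by rintro ⟨c, y, hy, rfl⟩; exact ⟨⟨y, hy⟩, rfl⟩)
  have hbdd : BddAbove (f '' Iio o) := Ordinal.bddAbove_iff_small.2 hsm
  obtain ⟨B, hB⟩ := hbdd
  have hne : {u : Ordinal.{u} | u ∉ f '' Iio o}.Nonempty := by
    refine ⟨B + 1, fun hmem => ?_⟩
    exact absurd (hB hmem) (by simp)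
  refine ⟨sInf {u : Ordinal.{u} | u ∉ f '' Iio o}, ?_⟩
  have hmemInf := csInf_mem hne
  ext c
  constructor
  · intro hc
    by_contra hge
    simp only [mem_Iio, not_lt] at hge
    rcases eq_or_lt_of_le hge with heq | hlt
    · exact hmemInf (heq ▸ hc)
    · obtain ⟨x, hx, rfl⟩ := hc
      obtain ⟨y, hy, hfy⟩ := h o x hx _ hlt
      exact hmemInf ⟨y, hy, hfy⟩
  · intro hc
    by_contra hnc
    have hcS : c ∈ {u : Ordinal.{u} | u ∉ f '' Iio o} := hnc
    exact absurd hc (not_lt.2 (csInf_le (OrderBot.bddBelow _) hcS))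

lemma initial_zero {f : Ordinal.{u} → Ordinal.{u}} (hf : IsInitialFun f) : f 0 = 0 := by
  obtain ⟨o', himg⟩ := hf 1
  have h0 : f 0 ∈ Iio o' := himg ▸ ⟨0, by simp⟩
  have : (0 : Ordinal.{u}) ∈ Iio o' := lt_of_le_of_lt (zero_le : (0 : Ordinal.{u}) ≤ _) h0
  rw [← himg] at this
  obtain ⟨y, hy, hfy⟩ := this
  have hy0 : y = 0 := Ordinal.lt_one_iff_zero.1 hy
  exact hy0 ▸ hfy

lemma initial_le_self {f : Ordinal.{u} → Ordinal.{u}} (hf : IsInitialFun f) :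
    ∀ x, f x ≤ x := by
  intro x
  induction x using Ordinal.induction with
  | _ x IH =>
    by_contra hlt
    push_neg at hlt
    obtain ⟨o', himg⟩ := hf (x + 1)
    have hfx : f x ∈ Iio o' := himg ▸ ⟨x, lt_add_one x, rfl⟩
    have hxmem : x ∈ Iio o' := lt_trans hlt hfx
    rw [← himg] at hxmem
    obtain ⟨y, hy, hfy⟩ := hxmem
    have hyle : y ≤ x := by
      rw [mem_Iio, Ordinal.add_one_eq_succ, Order.lt_succ_iff] at hy
      exact hy
    rcases eq_or_lt_of_le hyle with heq | hyx
    · rw [heq] at hfy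
      rw [hfy] at hlt; exact absurd hlt (lt_irrefl x)
    · have := IH y hyx
      rw [hfy] at this
      exact absurd (lt_of_le_of_lt this hyx) (lt_irrefl x)

lemma initial_pre {f : Ordinal.{u} → Ordinal.{u}} (hf : IsInitialFun f) {c ρ : Ordinal.{u}}
    (h : c < f ρ) : ∃ μ < ρ, f μ = c := by
  obtain ⟨o', himg⟩ := hf ρ
  obtain ⟨o'', himg'⟩ := hf (ρ + 1)
  by_contra hno
  push_neg at hno
  have hcnot : c ∉ f '' Iio ρ := by
    rintro ⟨y, hy, hfy⟩
    exact (hno y hy) hfy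
  have hle : o' ≤ c := by
    by_contra hlt
    push_neg at hlt
    have hmem : c ∈ Iio o' := hlt
    rw [← himg] at hmem
    exact hcnot hmem
  have hfmem : f ρ ∈ Iio o'' := himg' ▸ ⟨ρ, lt_add_one ρ, rfl⟩
  have hcmem : c ∈ Iio o'' := lt_trans h hfmem
  rw [← himg'] at hcmem
  obtain ⟨y, hy, hfy⟩ := hcmem
  have hyle : y ≤ ρ := by
    rw [mem_Iio, Ordinal.add_one_eq_succ, Order.lt_succ_iff] at hy
    exact hy
  rcases eq_or_lt_of_le hyle with heq | hyx
  · rw [heq] at hfy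
    rw [hfy] at h; exact absurd h (lt_irrefl c)
  · exact (hno y hyx) hfy

lemma initial_comp {f g : Ordinal.{u} → Ordinal.{u}} (hf : IsInitialFun f)
    (hg : IsInitialFun g) : IsInitialFun (fun x => f (g x)) := by
  intro o
  obtain ⟨o', hg'⟩ := hg o
  obtain ⟨o'', hf'⟩ := hf o'
  refine ⟨o'', ?_⟩
  rw [← hf', ← hg', ← Set.image_comp]
  rfl

lemma ellFun_initial : IsInitialFun (ellFun : Ordinal.{u} → Ordinal.{u}) := by
  apply isInitialFun_of_dc
  intro o x hx c hc
  have hx0 : x ≠ 0 := by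
    rintro rfl
    rw [ellFun_zero] at hc
    exact absurd hc ((not_lt_zero : ¬ c < 0))
  obtain ⟨γ, hgd⟩ := exists_ellFun_decomp hx0
  refine ⟨γ + ω ^ c, ?_, ellFun_add_opow γ c⟩
  have h1 : γ + ω ^ c < γ + ω ^ ellFun x :=
    add_lt_add_right ((Ordinal.opow_lt_opow_iff_right one_lt_omega0).2 hc) γ
  rw [← hgd] at h1
  exact lt_trans h1 hx

/-! #### Basic consequences for a hyperlog family -/

variable {L : Ordinal.{u} → Ordinal.{u} → Ordinal.{u}}

lemma L_initial (hL : IsHyperlogFamily L) (a : Ordinal.{u}) : IsInitialFun (L a) := hL.1 a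

lemma L_one (hL : IsHyperlogFamily L) (x : Ordinal.{u}) : L 1 x = ellFun x := by
  rw [hL.2.1]

lemma L_law (hL : IsHyperlogFamily L) (a b x : Ordinal.{u}) :
    L (a + b) x = L b (L a x) := congrFun (hL.2.2.1 a b) x

lemma L_le_self (hL : IsHyperlogFamily L) (a x : Ordinal.{u}) : L a x ≤ x :=
  initial_le_self (hL.1 a) x

lemma L_zero_arg (hL : IsHyperlogFamily L) (a : Ordinal.{u}) : L a 0 = 0 :=
  initial_zero (hL.1 a)

lemma L_zero (hL : IsHyperlogFamily L) (x : Ordinal.{u}) : L 0 x = x := by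
  have h1 : ∀ y : Ordinal.{u}, L 0 (ellFun y) = ellFun y := by
    intro y
    have h := L_law hL 1 0 y
    rw [add_zero, L_one hL] at h
    rw [← h]
  have := h1 (ω ^ x)
  rwa [ellFun_opow] at this

lemma L_antitone_level (hL : IsHyperlogFamily L) {a b : Ordinal.{u}} (h : a ≤ b)
    (x : Ordinal.{u}) : L b x ≤ L a x := by
  have hb : a + (b - a) = b := Ordinal.add_sub_cancel_of_le h
  rw [← hb, L_law hL]
  exact L_le_self hL _ _

lemma L_absorb (hL : IsHyperlogFamily L) {ξ lam : Ordinal.{u}} (h : ξ + lam = lam)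
    (x : Ordinal.{u}) : L lam (L ξ x) = L lam x := by
  rw [← L_law hL, h]

lemma L_pre (hL : IsHyperlogFamily L) {a c ρ : Ordinal.{u}} (h : c < L a ρ) :
    ∃ μ < ρ, L a μ = c := initial_pre (hL.1 a) h

end IcardAux

namespace IcardAux

/-! #### The collapse (index) machinery -/

def idx (S : Set Ordinal.{u}) (z : Ordinal.{u}) : Ordinal.{u} :=
  ⨆ w : {w : Ordinal.{u} // w ∈ S ∧ w ≠ 0 ∧ w < z}, idx S w.1 + 1
termination_by z
decreasing_by exact w.2.2.2

lemma idx_small (S : Set Ordinal.{u}) (z : Ordinal.{u}) :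
    Small.{u} {w : Ordinal.{u} // w ∈ S ∧ w ≠ 0 ∧ w < z} := by
  apply small_of_injective (β := Iio z) (f := fun w => ⟨w.1, w.2.2.2⟩)
  intro a b hab
  exact Subtype.ext (by simpa using congrArg Subtype.val hab)

lemma idx_bdd (S : Set Ordinal.{u}) (z : Ordinal.{u}) :
    BddAbove (range (fun w : {w : Ordinal.{u} // w ∈ S ∧ w ≠ 0 ∧ w < z} => idx S w.1 + 1)) := by
  haveI := idx_small S z
  haveI : Small.{u} (range (fun w : {w : Ordinal.{u} // w ∈ S ∧ w ≠ 0 ∧ w < z} =>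
      idx S w.1 + 1)) := by
    apply small_of_surjective
      (f := fun w : {w : Ordinal.{u} // w ∈ S ∧ w ≠ 0 ∧ w < z} =>
        (⟨idx S w.1 + 1, w, rfl⟩ : range (fun w : {w : Ordinal.{u} // w ∈ S ∧ w ≠ 0 ∧ w < z} => idx S w.1 + 1)))
    rintro ⟨y, w, rfl⟩
    exact ⟨w, rfl⟩
  exact Ordinal.bddAbove_of_small

lemma idx_lt_idx {S : Set Ordinal.{u}} {w z : Ordinal.{u}} (hw : w ∈ S) (hw0 : w ≠ 0)
    (hwz : w < z) : idx S w < idx S z := by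
  conv_rhs => rw [idx]
  have := le_ciSup (idx_bdd S z) ⟨w, hw, hw0, hwz⟩
  exact lt_of_lt_of_le (lt_add_one _) this

lemma idx_le_self (S : Set Ordinal.{u}) : ∀ z, idx S z ≤ z := by
  intro z
  induction z using Ordinal.induction with
  | _ z IH =>
    rw [idx]
    apply ciSup_le'
    intro w
    have h1 : idx S w.1 ≤ w.1 := IH w.1 w.2.2.2
    have h2 : idx S w.1 + 1 ≤ w.1 + 1 := by
      have := add_le_add_left h1 1
      exact this
    exact le_trans h2 (Order.add_one_le_of_lt w.2.2.2)

lemma idx_enum {S : Set Ordinal.{u}} : ∀ z, z ∈ S → z ≠ 0 →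
    ∀ c ≤ idx S z, ∃ w, w ∈ S ∧ w ≠ 0 ∧ w ≤ z ∧ idx S w = c := by
  intro z
  induction z using Ordinal.induction with
  | _ z IH =>
    intro hz hz0 c hc
    rcases eq_or_lt_of_le hc with heq | hlt
    · exact ⟨z, hz, hz0, le_refl z, heq.symm⟩
    · rw [idx] at hlt
      haveI := idx_small S z
      obtain ⟨w, hw⟩ := Ordinal.lt_iSup_iff.1 hlt
      have hcw : c ≤ idx S w.1 := by
        rw [Ordinal.add_one_eq_succ, Order.lt_succ_iff] at hw
        exact hw
      obtain ⟨w', h1, h2, h3, h4⟩ := IH w.1 w.2.2.2 w.2.1 w.2.2.1 c hcw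
      exact ⟨w', h1, h2, le_trans h3 w.2.2.2.le, h4⟩

/-! #### Stabilization -/

def netSet (F : Ordinal.{u} → Ordinal.{u} → Ordinal.{u}) (e : Ordinal.{u})
    (x : Ordinal.{u}) : Set Ordinal.{u} := {y | ∃ ζ < (ω : Ordinal.{u}) ^ e, y = F ζ x}

def FixSet (F : Ordinal.{u} → Ordinal.{u} → Ordinal.{u}) (e : Ordinal.{u}) :
    Set Ordinal.{u} := {z | ∀ ζ < (ω : Ordinal.{u}) ^ e, F ζ z = z}

def stabVal (F : Ordinal.{u} → Ordinal.{u} → Ordinal.{u}) (e : Ordinal.{u})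
    (x : Ordinal.{u}) : Ordinal.{u} := sInf (netSet F e x)

def collapse (F : Ordinal.{u} → Ordinal.{u} → Ordinal.{u}) (e : Ordinal.{u})
    (x : Ordinal.{u}) : Ordinal.{u} :=
  if stabVal F e x = 0 then 0 else 1 + idx (FixSet F e) (stabVal F e x)

def gfun (F : Ordinal.{u} → Ordinal.{u} → Ordinal.{u}) (e : Ordinal.{u}) :
    Ordinal.{u} → Ordinal.{u} :=
  if e = 0 then ellFun else collapse F e

/-- The hypotheses needed about the partial family below `ω^e`. -/
structure CollapseHyp (F : Ordinal.{u} → Ordinal.{u} → Ordinal.{u}) (e : Ordinal.{u}) :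
    Prop where
  he : e ≠ 0
  law : ∀ ζ δ x, ζ < (ω:Ordinal.{u}) ^ e → δ < (ω:Ordinal.{u}) ^ e →
    F (ζ + δ) x = F δ (F ζ x)
  le_self : ∀ ζ x, ζ < (ω:Ordinal.{u}) ^ e → F ζ x ≤ x
  zero_arg : ∀ ζ, ζ < (ω:Ordinal.{u}) ^ e → F ζ 0 = 0
  one_eq : ∀ x, F 1 x = ellFun x

namespace CollapseHyp

set_option linter.unusedSectionVars false

variable {F : Ordinal.{u} → Ordinal.{u} → Ordinal.{u}} {e : Ordinal.{u}}
  (h : CollapseHyp F e)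

include h

lemma opow_pos' : (0 : Ordinal.{u}) < ω ^ e := Ordinal.opow_pos e omega0_pos

lemma one_lt_opow : (1 : Ordinal.{u}) < ω ^ e := by
  calc (1:Ordinal.{u}) < ω := one_lt_omega0
  _ = ω ^ (1:Ordinal.{u}) := (Ordinal.opow_one ω).symm
  _ ≤ ω ^ e := Ordinal.opow_le_opow_right omega0_pos (Ordinal.one_le_iff_ne_zero.2 h.he)

lemma add_lt_opow {ζ δ : Ordinal.{u}} (h1 : ζ < (ω:Ordinal.{u}) ^ e)
    (h2 : δ < (ω:Ordinal.{u}) ^ e) : ζ + δ < (ω:Ordinal.{u}) ^ e :=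
  Ordinal.principal_add_omega0_opow e h1 h2

lemma netSet_nonempty (x : Ordinal.{u}) : (netSet F e x).Nonempty :=
  ⟨F 0 x, 0, h.opow_pos', rfl⟩

lemma stab_mem_net (x : Ordinal.{u}) : stabVal F e x ∈ netSet F e x :=
  csInf_mem (h.netSet_nonempty x)

lemma stab_le_net {x y : Ordinal.{u}} (hy : y ∈ netSet F e x) : stabVal F e x ≤ y :=
  csInf_le (OrderBot.bddBelow _) hy

lemma exists_stab_index (x : Ordinal.{u}) :
    ∃ ξ₀ < (ω:Ordinal.{u}) ^ e, F ξ₀ x = stabVal F e x := by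
  obtain ⟨ξ₀, hξ, hval⟩ := h.stab_mem_net x
  exact ⟨ξ₀, hξ, hval.symm⟩

lemma stab_stable (x : Ordinal.{u}) :
    ∀ ζ < (ω:Ordinal.{u}) ^ e, F ζ (stabVal F e x) = stabVal F e x := by
  intro ζ hζ
  obtain ⟨ξ₀, hξ, hval⟩ := h.exists_stab_index x
  apply le_antisymm
  · exact h.le_self ζ _ hζ
  · apply h.stab_le_net
    refine ⟨ξ₀ + ζ, h.add_lt_opow hξ hζ, ?_⟩
    rw [h.law ξ₀ ζ x hξ hζ, hval]

lemma stab_mem_fix (x : Ordinal.{u}) : stabVal F e x ∈ FixSet F e := h.stab_stable x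

lemma stab_le_self (x : Ordinal.{u}) : stabVal F e x ≤ x :=
  le_trans (h.stab_le_net ⟨0, h.opow_pos', rfl⟩) (h.le_self 0 x h.opow_pos')

lemma stab_of_fix {z : Ordinal.{u}} (hz : z ∈ FixSet F e) : stabVal F e z = z := by
  obtain ⟨ξ₀, hξ, hval⟩ := h.exists_stab_index z
  rw [← hval, hz ξ₀ hξ]

lemma stab_invar {ζ : Ordinal.{u}} (hζ : ζ < (ω:Ordinal.{u}) ^ e) (x : Ordinal.{u}) :
    stabVal F e (F ζ x) = stabVal F e x := by
  apply le_antisymm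
  · obtain ⟨ξ₀, hξ, hval⟩ := h.exists_stab_index x
    apply h.stab_le_net
    refine ⟨ξ₀, hξ, ?_⟩
    have h1 : F (ζ + ξ₀) x = F ξ₀ (F ζ x) := h.law ζ ξ₀ x hζ hξ
    have hle : ξ₀ ≤ ζ + ξ₀ := (le_add_self : ξ₀ ≤ ζ + ξ₀)
    have h2 : ξ₀ + ((ζ + ξ₀) - ξ₀) = ζ + ξ₀ := Ordinal.add_sub_cancel_of_le hle
    have hlt : (ζ + ξ₀) - ξ₀ < (ω:Ordinal.{u}) ^ e :=
      lt_of_le_of_lt (Ordinal.sub_le_self _ _) (h.add_lt_opow hζ hξ)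
    have h3 : F (ξ₀ + ((ζ + ξ₀) - ξ₀)) x = F ((ζ + ξ₀) - ξ₀) (F ξ₀ x) :=
      h.law ξ₀ _ x hξ hlt
    rw [h2] at h3
    rw [← h1, h3, hval, h.stab_stable x _ hlt]
  · apply le_csInf (h.netSet_nonempty _)
    rintro y ⟨δ, hδ, rfl⟩
    apply h.stab_le_net
    refine ⟨ζ + δ, h.add_lt_opow hζ hδ, ?_⟩
    rw [h.law ζ δ x hζ hδ]

lemma stab_zero : stabVal F e 0 = 0 := by
  apply le_antisymm
  · apply h.stab_le_net
    exact ⟨0, h.opow_pos', (h.zero_arg 0 h.opow_pos').symm⟩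
  · exact zero_le

lemma collapse_zero : collapse F e 0 = 0 := by
  rw [collapse, h.stab_zero, if_pos rfl]

lemma collapse_invar {ζ : Ordinal.{u}} (hζ : ζ < (ω:Ordinal.{u}) ^ e) (x : Ordinal.{u}) :
    collapse F e (F ζ x) = collapse F e x := by
  rw [collapse, collapse, h.stab_invar hζ]

lemma collapse_of_fix {z : Ordinal.{u}} (hz : z ∈ FixSet F e) :
    collapse F e z = if z = 0 then 0 else 1 + idx (FixSet F e) z := by
  rw [collapse, h.stab_of_fix hz]

lemma fix_ge_omega {z : Ordinal.{u}} (hz : z ∈ FixSet F e) (hz0 : z ≠ 0) : ω ≤ z := by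
  have h1 : F 1 z = z := hz 1 h.one_lt_opow
  rw [h.one_eq] at h1
  exact ellFun_eq_self_iff_ge_omega hz0 h1

lemma one_add_fix {z : Ordinal.{u}} (hz : z ∈ FixSet F e) (hz0 : z ≠ 0) : 1 + z = z := by
  have := h.fix_ge_omega hz hz0
  exact Ordinal.one_add_of_omega0_le this

lemma collapse_le_self (x : Ordinal.{u}) : collapse F e x ≤ x := by
  rw [collapse]
  split
  · exact (zero_le : 0 ≤ x)
  · next hs =>
    have h1 : idx (FixSet F e) (stabVal F e x) ≤ stabVal F e x := idx_le_self _ _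
    have h2 : 1 + idx (FixSet F e) (stabVal F e x) ≤ 1 + stabVal F e x :=
      add_le_add_right h1 1
    rw [h.one_add_fix (h.stab_mem_fix x) hs] at h2
    exact le_trans h2 (h.stab_le_self x)

lemma collapse_pos_of {x : Ordinal.{u}} (hs : stabVal F e x ≠ 0) :
    0 < collapse F e x := by
  rw [collapse, if_neg hs]
  exact lt_of_lt_of_le zero_lt_one le_self_add

lemma collapse_initial : IsInitialFun (collapse F e) := by
  apply isInitialFun_of_dc
  intro o x hx c hc
  by_cases hc0 : c = 0
  · refine ⟨0, lt_of_le_of_lt ((zero_le : 0 ≤ x)) hx, ?_⟩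
    rw [hc0]; exact h.collapse_zero
  · have hs : stabVal F e x ≠ 0 := by
      intro h0
      rw [collapse, if_pos h0] at hc
      exact absurd hc ((not_lt_zero : ¬ c < 0))
    rw [collapse, if_neg hs] at hc
    have h1c : 1 ≤ c := Ordinal.one_le_iff_ne_zero.2 hc0
    have hd : 1 + (c - 1) = c := Ordinal.add_sub_cancel_of_le h1c
    have hdlt : c - 1 < idx (FixSet F e) (stabVal F e x) := by
      by_contra hge
      push_neg at hge
      have := add_le_add_right hge 1
      rw [hd] at this
      exact absurd hc (not_lt.2 this)
    obtain ⟨w, hwS, hw0, hws, hwidx⟩ :=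
      idx_enum _ (h.stab_mem_fix x) hs (c - 1) hdlt.le
    refine ⟨w, ?_, ?_⟩
    · exact lt_of_le_of_lt (le_trans hws (h.stab_le_self x)) hx
    · rw [collapse, h.stab_of_fix hwS, if_neg hw0, hwidx, hd]

lemma collapse_bound {f : Ordinal.{u} → Ordinal.{u}} (hf : IsInitialFun f)
    (hinv : ∀ ζ < (ω:Ordinal.{u}) ^ e, ∀ x, f (F ζ x) = f x) :
    ∀ x, f x ≤ collapse F e x := by
  have claim : ∀ z, z ∈ FixSet F e → f z ≤ collapse F e z := by
    intro z
    induction z using Ordinal.induction with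
    | _ z IH =>
      intro hz
      by_cases hz0 : z = 0
      · rw [hz0, initial_zero hf]; exact zero_le
      · rw [collapse, h.stab_of_fix hz, if_neg hz0]
        apply le_of_forall_lt
        intro c hcf
        obtain ⟨y, hy, hfy⟩ := initial_pre hf hcf
        obtain ⟨ξ₀, hξ, hval⟩ := h.exists_stab_index y
        have hcy : c = f (stabVal F e y) := by
          rw [← hval, hinv ξ₀ hξ y, hfy]
        have hsy : stabVal F e y ≤ y := h.stab_le_self y
        by_cases hsy0 : stabVal F e y = 0
        · rw [hsy0, initial_zero hf] at hcy
          rw [hcy]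
          exact lt_of_lt_of_le zero_lt_one le_self_add
        · have hc2 : c ≤ collapse F e (stabVal F e y) :=
            hcy ▸ IH _ (lt_of_le_of_lt hsy hy) (h.stab_mem_fix y)
          rw [collapse, h.stab_of_fix (h.stab_mem_fix y), if_neg hsy0] at hc2
          have hlt : idx (FixSet F e) (stabVal F e y) < idx (FixSet F e) z :=
            idx_lt_idx (h.stab_mem_fix y) hsy0 (lt_of_le_of_lt hsy hy)
          exact lt_of_le_of_lt hc2 (add_lt_add_right hlt 1)
  intro x
  obtain ⟨ξ₀, hξ, hval⟩ := h.exists_stab_index x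
  have h1 : f x = f (stabVal F e x) := by rw [← hval, hinv ξ₀ hξ x]
  have h2 : collapse F e (stabVal F e x) = collapse F e x := by
    rw [← hval, h.collapse_invar hξ]
  rw [h1, ← h2]
  exact claim _ (h.stab_mem_fix x)

lemma collapse_strict {ρ μ : Ordinal.{u}} (hρ : ρ ∈ FixSet F e) (hρ0 : ρ ≠ 0)
    (hμ : μ < ρ) : collapse F e μ < collapse F e ρ := by
  have hρc : collapse F e ρ = 1 + idx (FixSet F e) ρ := by
    rw [collapse, h.stab_of_fix hρ, if_neg hρ0]
  rw [hρc, collapse]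
  split
  · exact lt_of_lt_of_le zero_lt_one le_self_add
  · next hs =>
    apply add_lt_add_right
    exact idx_lt_idx (h.stab_mem_fix μ) hs (lt_of_le_of_lt (h.stab_le_self μ) hμ)

end CollapseHyp

end IcardAux

namespace IcardAux

/-! #### The canonical family -/

def headOf (x : Ordinal.{u}) : Ordinal.{u} :=
  if hx : x = 0 then 0 else Classical.choose (exists_ellFun_decomp hx)

lemma headOf_spec {x : Ordinal.{u}} (hx : x ≠ 0) : headOf x + ω ^ ellFun x = x := by
  rw [headOf, dif_neg hx]
  exact (Classical.choose_spec (exists_ellFun_decomp hx)).symm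

lemma headOf_lt {x : Ordinal.{u}} (hx : x ≠ 0) : headOf x < x := by
  conv_rhs => rw [← headOf_spec hx]
  have := add_lt_add_right (Ordinal.opow_pos (ellFun x) omega0_pos) (headOf x)
  simpa using this

def Vfam : Ordinal.{u} → Ordinal.{u} → Ordinal.{u} := fun a =>
  if ha : a = 0 then id
  else fun x => gfun (fun ζ y => if _ : ζ < a then Vfam ζ y else y) (ellFun a)
    (Vfam (headOf a) x)
termination_by a => a
decreasing_by
  · assumption
  · exact headOf_lt ha

lemma netSet_congr {F G : Ordinal.{u} → Ordinal.{u} → Ordinal.{u}} {e : Ordinal.{u}}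
    (hFG : ∀ ζ < (ω:Ordinal.{u}) ^ e, ∀ y, F ζ y = G ζ y) (x : Ordinal.{u}) :
    netSet F e x = netSet G e x := by
  ext y
  constructor
  · rintro ⟨ζ, hζ, rfl⟩; exact ⟨ζ, hζ, (hFG ζ hζ x)⟩
  · rintro ⟨ζ, hζ, rfl⟩; exact ⟨ζ, hζ, (hFG ζ hζ x).symm⟩

lemma fixSet_congr {F G : Ordinal.{u} → Ordinal.{u} → Ordinal.{u}} {e : Ordinal.{u}}
    (hFG : ∀ ζ < (ω:Ordinal.{u}) ^ e, ∀ y, F ζ y = G ζ y) :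
    FixSet F e = FixSet G e := by
  ext z
  constructor
  · intro hz ζ hζ; rw [← hFG ζ hζ z]; exact hz ζ hζ
  · intro hz ζ hζ; rw [hFG ζ hζ z]; exact hz ζ hζ

lemma collapse_congr {F G : Ordinal.{u} → Ordinal.{u} → Ordinal.{u}} {e : Ordinal.{u}}
    (hFG : ∀ ζ < (ω:Ordinal.{u}) ^ e, ∀ y, F ζ y = G ζ y) (x : Ordinal.{u}) :
    collapse F e x = collapse G e x := by
  rw [collapse, collapse, stabVal, stabVal, netSet_congr hFG, fixSet_congr hFG]

lemma gfun_congr {F G : Ordinal.{u} → Ordinal.{u} → Ordinal.{u}} {e : Ordinal.{u}}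
    (hFG : ∀ ζ < (ω:Ordinal.{u}) ^ e, ∀ y, F ζ y = G ζ y) (x : Ordinal.{u}) :
    gfun F e x = gfun G e x := by
  rw [gfun, gfun]
  split
  · rfl
  · exact collapse_congr hFG x

lemma Vfam_zero (x : Ordinal.{u}) : Vfam 0 x = x := by
  rw [Vfam]
  simp

lemma Vfam_unfold {a : Ordinal.{u}} (ha : a ≠ 0) (x : Ordinal.{u}) :
    Vfam a x = gfun Vfam (ellFun a) (Vfam (headOf a) x) := by
  conv_lhs => rw [Vfam]
  rw [dif_neg ha]
  apply gfun_congr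
  intro ζ hζ y
  rw [dif_pos (lt_of_lt_of_le hζ (opow_ellFun_le ha))]

lemma ellFun_one : ellFun (1 : Ordinal.{u}) = 0 := by
  have := ellFun_succ (0 : Ordinal.{u})
  rwa [zero_add] at this

lemma headOf_one : headOf (1 : Ordinal.{u}) = 0 := by
  have hs := headOf_spec (one_ne_zero : (1:Ordinal.{u}) ≠ 0)
  rw [ellFun_one, Ordinal.opow_zero] at hs
  have : headOf (1:Ordinal.{u}) < 1 := by
    conv_rhs => rw [← hs]
    exact lt_add_one _
  exact Ordinal.lt_one_iff_zero.1 this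

lemma Vfam_one (x : Ordinal.{u}) : Vfam 1 x = ellFun x := by
  rw [Vfam_unfold (one_ne_zero : (1:Ordinal.{u}) ≠ 0), ellFun_one, headOf_one, gfun,
    if_pos rfl, Vfam_zero]

lemma Vfam_main : ∀ b : Ordinal.{u},
    (∀ x, Vfam b x ≤ x) ∧ (∀ a x, Vfam (a + b) x = Vfam b (Vfam a x)) := by
  intro b
  induction b using Ordinal.induction with
  | _ b IH =>
    by_cases hb : b = 0
    · subst hb
      constructor
      · intro x; rw [Vfam_zero]
      · intro a x; rw [add_zero, Vfam_zero]
    · have hω : (ω:Ordinal.{u}) ^ ellFun b ≤ b := opow_ellFun_le hb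
      have hch : ellFun b ≠ 0 → CollapseHyp Vfam (ellFun b) := by
        intro he
        refine ⟨he, ?_, ?_, ?_, Vfam_one⟩
        · intro ζ δ x hζ hδ
          exact (IH δ (lt_of_lt_of_le hδ hω)).2 ζ x
        · intro ζ x hζ
          exact (IH ζ (lt_of_lt_of_le hζ hω)).1 x
        · intro ζ hζ
          exact le_antisymm ((IH ζ (lt_of_lt_of_le hζ hω)).1 0) (zero_le)
      have hgle : ∀ y, gfun Vfam (ellFun b) y ≤ y := by
        intro y
        rw [gfun]
        split
        · exact ellFun_le_self y
        · next he => exact (hch he).collapse_le_self y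
      have hle : ∀ x, Vfam b x ≤ x := by
        intro x
        rw [Vfam_unfold hb]
        exact le_trans (hgle _) ((IH _ (headOf_lt hb)).1 x)
      refine ⟨hle, ?_⟩
      intro a x
      have hab : a + b ≠ 0 := by
        intro h0
        exact hb (le_antisymm (le_trans ((le_add_self : b ≤ a + b)) h0.le) ((zero_le : 0 ≤ b)))
      have hell : ellFun (a + b) = ellFun b := ellFun_add a hb
      have htw : ∀ γ γ' : Ordinal.{u}, γ + ω ^ ellFun b = γ' + ω ^ ellFun b →
          gfun Vfam (ellFun b) (Vfam γ x) = gfun Vfam (ellFun b) (Vfam γ' x) := by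
        have hside : ∀ γ γ' : Ordinal.{u}, γ ≤ γ' → γ + ω ^ ellFun b = γ' + ω ^ ellFun b →
            gfun Vfam (ellFun b) (Vfam γ x) = gfun Vfam (ellFun b) (Vfam γ' x) := by
          intro γ γ' hle' heq
          obtain ⟨δ, rfl⟩ : ∃ δ, γ' = γ + δ :=
            ⟨γ' - γ, (Ordinal.add_sub_cancel_of_le hle').symm⟩
          rw [add_assoc] at heq
          have hδω : δ + ω ^ ellFun b = ω ^ ellFun b := (add_right_inj γ).1 heq.symm
          have hδ : δ < (ω:Ordinal.{u}) ^ ellFun b := by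
            by_contra hge
            push_neg at hge
            have h1 : (ω:Ordinal.{u}) ^ ellFun b + ω ^ ellFun b ≤ δ + ω ^ ellFun b :=
              add_le_add_left hge _
            have h2 : (ω:Ordinal.{u}) ^ ellFun b < ω ^ ellFun b + ω ^ ellFun b := by
              have := add_lt_add_right (Ordinal.opow_pos (ellFun b) omega0_pos)
                ((ω:Ordinal.{u}) ^ ellFun b)
              simpa using this
            rw [hδω] at h1
            exact absurd (lt_of_lt_of_le h2 h1) (lt_irrefl _)
          have hv : Vfam (γ + δ) x = Vfam δ (Vfam γ x) :=
            (IH δ (lt_of_lt_of_le hδ hω)).2 γ x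
          rw [hv]
          by_cases he : ellFun b = 0
          · have hδ0 : δ = 0 := by
              rw [he, Ordinal.opow_zero] at hδ
              exact Ordinal.lt_one_iff_zero.1 hδ
            rw [hδ0, Vfam_zero]
          · rw [gfun, if_neg he]
            exact ((hch he).collapse_invar hδ (Vfam γ x)).symm
        intro γ γ' heq
        rcases le_total γ γ' with h0 | h0
        · exact hside γ γ' h0 heq
        · exact (hside γ' γ h0 heq.symm).symm
      have hu1 : Vfam (a + b) x = gfun Vfam (ellFun b) (Vfam (headOf (a + b)) x) := by
        rw [Vfam_unfold hab, hell]
      have hd1 : headOf (a + b) + ω ^ ellFun b = a + b := by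
        have := headOf_spec hab
        rwa [hell] at this
      have hd2 : (a + headOf b) + ω ^ ellFun b = a + b := by
        rw [add_assoc, headOf_spec hb]
      have hu2 : Vfam b (Vfam a x) = gfun Vfam (ellFun b) (Vfam (headOf b) (Vfam a x)) :=
        Vfam_unfold hb _
      have hv2 : Vfam (headOf b) (Vfam a x) = Vfam (a + headOf b) x :=
        ((IH (headOf b) (headOf_lt hb)).2 a x).symm
      rw [hu1, hu2, hv2]
      exact htw _ _ (by rw [hd1, hd2])

lemma Vfam_le_self (b x : Ordinal.{u}) : Vfam b x ≤ x := (Vfam_main b).1 x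

lemma Vfam_law (a b x : Ordinal.{u}) : Vfam (a + b) x = Vfam b (Vfam a x) :=
  (Vfam_main b).2 a x

lemma Vfam_zero_arg (a : Ordinal.{u}) : Vfam a 0 = 0 :=
  le_antisymm (Vfam_le_self a 0) (zero_le)

lemma Vfam_hyp {e : Ordinal.{u}} (he : e ≠ 0) : CollapseHyp Vfam e :=
  ⟨he, fun ζ δ x _ _ => Vfam_law ζ δ x, fun ζ x _ => Vfam_le_self ζ x,
    fun ζ _ => Vfam_zero_arg ζ, Vfam_one⟩

lemma Vfam_initial : ∀ a : Ordinal.{u}, IsInitialFun (Vfam a) := by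
  intro a
  induction a using Ordinal.induction with
  | _ a IH =>
    by_cases ha : a = 0
    · subst ha
      have : Vfam (0:Ordinal.{u}) = fun x => x := funext Vfam_zero
      rw [this]
      intro o
      exact ⟨o, by simp⟩
    · have hg : IsInitialFun (gfun Vfam (ellFun a)) := by
        rw [gfun]
        split
        · exact ellFun_initial
        · next he => exact (Vfam_hyp he).collapse_initial
      have hcomp : IsInitialFun (fun x => gfun Vfam (ellFun a) (Vfam (headOf a) x)) :=
        initial_comp hg (IH (headOf a) (headOf_lt ha))
      have heq : Vfam a = fun x => gfun Vfam (ellFun a) (Vfam (headOf a) x) :=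
        funext (Vfam_unfold ha)
      rw [heq]
      exact hcomp

variable {L : Ordinal.{u} → Ordinal.{u} → Ordinal.{u}}

lemma Vfam_le_L (hL : IsHyperlogFamily L) (a b : Ordinal.{u}) : Vfam a b ≤ L a b :=
  hL.2.2.2 Vfam Vfam_initial (funext Vfam_one)
    (fun a b => funext fun x => Vfam_law a b x) a b

lemma Vfam_opow_eq_gfun {e : Ordinal.{u}} (he : e ≠ 0) (y : Ordinal.{u}) :
    Vfam (ω ^ e) y = gfun Vfam e y := by
  have hne : (ω:Ordinal.{u}) ^ e ≠ 0 := (Ordinal.opow_pos e omega0_pos).ne'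
  rw [Vfam_unfold hne, ellFun_opow]
  have hγ : headOf ((ω:Ordinal.{u}) ^ e) < ω ^ e := headOf_lt hne
  unfold gfun
  rw [if_neg he]
  exact (Vfam_hyp he).collapse_invar hγ y

lemma L_eq_Vfam (hL : IsHyperlogFamily L) : ∀ a x : Ordinal.{u}, L a x = Vfam a x := by
  intro a
  induction a using Ordinal.induction with
  | _ a IH =>
    intro x
    by_cases ha : a = 0
    · subst ha; rw [L_zero hL, Vfam_zero]
    · have hω : (ω:Ordinal.{u}) ^ ellFun a ≤ a := opow_ellFun_le ha
      have hkey : ∀ y, L (ω ^ ellFun a) y = gfun Vfam (ellFun a) y := by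
        by_cases he : ellFun a = 0
        · intro y
          rw [he, Ordinal.opow_zero, gfun, if_pos rfl, L_one hL]
        · intro y
          have hc := Vfam_hyp he
          have hgc : gfun Vfam (ellFun a) y = collapse Vfam (ellFun a) y := by
            rw [gfun, if_neg he]
          rw [hgc]
          apply le_antisymm
          · refine hc.collapse_bound (hL.1 _) ?_ y
            intro ζ hζ z
            rw [← IH ζ (lt_of_lt_of_le hζ hω) z]
            exact L_absorb hL (Ordinal.add_omega0_opow hζ) z
          · have h1 := Vfam_opow_eq_gfun he y
            rw [hgc] at h1
            rw [← h1]
            exact Vfam_le_L hL _ _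
      have hdecomp : headOf a + ω ^ ellFun a = a := headOf_spec ha
      have hstep : L a x = L (ω ^ ellFun a) (L (headOf a) x) := by
        conv_lhs => rw [← hdecomp]
        rw [L_law hL]
      rw [hstep, hkey, IH (headOf a) (headOf_lt ha) x, ← Vfam_unfold ha]

/-! #### Exported interface on `L` -/

lemma L_hyp (hL : IsHyperlogFamily L) {e : Ordinal.{u}} (he : e ≠ 0) : CollapseHyp L e :=
  ⟨he, fun ζ δ x _ _ => L_law hL ζ δ x, fun ζ x _ => L_le_self hL ζ x,
    fun ζ _ => L_zero_arg hL ζ, L_one hL⟩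

lemma L_opow_eq_collapse (hL : IsHyperlogFamily L) {e : Ordinal.{u}} (he : e ≠ 0)
    (x : Ordinal.{u}) : L (ω ^ e) x = collapse L e x := by
  have h1 : L (ω ^ e) x = gfun Vfam e x := by
    rw [L_eq_Vfam hL, Vfam_opow_eq_gfun he]
  rw [h1, gfun, if_neg he]
  exact collapse_congr (fun ζ _ y => (L_eq_Vfam hL ζ y).symm) x

lemma L_strict_on_stable (hL : IsHyperlogFamily L) {e ρ μ : Ordinal.{u}} (he : e ≠ 0)
    (hρ : ρ ∈ FixSet L e) (hρ0 : ρ ≠ 0) (hμ : μ < ρ) :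
    L (ω ^ e) μ < L (ω ^ e) ρ := by
  rw [L_opow_eq_collapse hL he, L_opow_eq_collapse hL he]
  exact (L_hyp hL he).collapse_strict hρ hρ0 hμ

end IcardAux

namespace IcardAux

/-! #### Constraint windows -/

/-- A constraint `(ξ, a?, b)`: `L ξ v ≤ b`, and `a < L ξ v` if `a? = some a`. -/
abbrev Constr : Type (u+1) := Ordinal.{u} × Option Ordinal.{u} × Ordinal.{u}

def CSat (L : Ordinal.{u} → Ordinal.{u} → Ordinal.{u}) (c : Constr.{u})
    (v : Ordinal.{u}) : Prop :=
  L c.1 v ≤ c.2.2 ∧ ∀ a, c.2.1 = some a → a < L c.1 v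

def WSat (L : Ordinal.{u} → Ordinal.{u} → Ordinal.{u}) (W : List Constr.{u})
    (v : Ordinal.{u}) : Prop := ∀ c ∈ W, CSat L c v

lemma WSat_nil (L : Ordinal.{u} → Ordinal.{u} → Ordinal.{u}) (v : Ordinal.{u}) :
    WSat L [] v := fun c hc => absurd hc (List.not_mem_nil)

lemma WSat_append {L : Ordinal.{u} → Ordinal.{u} → Ordinal.{u}} {W₁ W₂ : List Constr.{u}}
    {v : Ordinal.{u}} :
    WSat L (W₁ ++ W₂) v ↔ WSat L W₁ v ∧ WSat L W₂ v := by
  constructor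
  · intro h
    exact ⟨fun c hc => h c (List.mem_append_left _ hc),
      fun c hc => h c (List.mem_append_right _ hc)⟩
  · rintro ⟨h1, h2⟩ c hc
    rcases List.mem_append.1 hc with h | h
    · exact h1 c h
    · exact h2 c h

def shiftW (ξ : Ordinal.{u}) (W : List Constr.{u}) : List Constr.{u} :=
  W.map (fun c => (ξ + c.1, c.2))

def unshiftW (ξ : Ordinal.{u}) (W : List Constr.{u}) : List Constr.{u} :=
  W.map (fun c => (c.1 - ξ, c.2))

lemma CSat_level_congr {L : Ordinal.{u} → Ordinal.{u} → Ordinal.{u}}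
    {ξ' : Ordinal.{u}} {c : Constr.{u}} {z v : Ordinal.{u}}
    (hval : L ξ' v = L c.1 z) : CSat L (ξ', c.2) v ↔ CSat L c z := by
  unfold CSat
  rw [show (ξ', c.2).1 = ξ' from rfl, show (ξ', c.2).2 = c.2 from rfl, hval]

lemma WSat_shift {L : Ordinal.{u} → Ordinal.{u} → Ordinal.{u}}
    (hL : IsHyperlogFamily L) {ξ : Ordinal.{u}} {W : List Constr.{u}} {z : Ordinal.{u}} :
    WSat L (shiftW ξ W) z ↔ WSat L W (L ξ z) := by
  constructor
  · intro h c hc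
    have hm : (ξ + c.1, c.2) ∈ shiftW ξ W := List.mem_map_of_mem hc
    have := h _ hm
    exact (CSat_level_congr (c := c) (by rw [L_law hL] : L (ξ + c.1) z = L c.1 (L ξ z))).1 this
  · intro h c hc
    obtain ⟨c', hc', rfl⟩ := List.mem_map.1 hc
    exact (CSat_level_congr (c := c') (by rw [L_law hL] : L (ξ + c'.1) z = L c'.1 (L ξ z))).2
      (h c' hc')

def splitLt (ξ : Ordinal.{u}) : List Constr.{u} → List Constr.{u} × List Constr.{u}
  | [] => ([], [])
  | c :: W =>
    if c.1 < ξ then ((c :: (splitLt ξ W).1), (splitLt ξ W).2)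
    else ((splitLt ξ W).1, (c :: (splitLt ξ W).2))

lemma splitLt_spec (ξ : Ordinal.{u}) : ∀ W : List Constr.{u},
    (∀ c ∈ (splitLt ξ W).1, c ∈ W ∧ c.1 < ξ) ∧
    (∀ c ∈ (splitLt ξ W).2, c ∈ W ∧ ¬ c.1 < ξ) ∧
    (∀ c ∈ W, c ∈ (splitLt ξ W).1 ∨ c ∈ (splitLt ξ W).2) := by
  intro W
  induction W with
  | nil => simp [splitLt]
  | cons c W IH =>
    by_cases hc : c.1 < ξ
    · refine ⟨?_, ?_, ?_⟩
      · intro d hd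
        rw [splitLt, if_pos hc] at hd
        rcases List.mem_cons.1 hd with rfl | hd
        · exact ⟨List.mem_cons_self, hc⟩
        · exact ⟨List.mem_cons_of_mem _ (IH.1 d hd).1, (IH.1 d hd).2⟩
      · intro d hd
        rw [splitLt, if_pos hc] at hd
        exact ⟨List.mem_cons_of_mem _ (IH.2.1 d hd).1, (IH.2.1 d hd).2⟩
      · intro d hd
        rcases List.mem_cons.1 hd with rfl | hd
        · left; rw [splitLt, if_pos hc]; exact List.mem_cons_self
        · rcases IH.2.2 d hd with h | h
          · left; rw [splitLt, if_pos hc]; exact List.mem_cons_of_mem _ h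
          · right; rw [splitLt, if_pos hc]; exact h
    · refine ⟨?_, ?_, ?_⟩
      · intro d hd
        rw [splitLt, if_neg hc] at hd
        exact ⟨List.mem_cons_of_mem _ (IH.1 d hd).1, (IH.1 d hd).2⟩
      · intro d hd
        rw [splitLt, if_neg hc] at hd
        rcases List.mem_cons.1 hd with rfl | hd
        · exact ⟨List.mem_cons_self, hc⟩
        · exact ⟨List.mem_cons_of_mem _ (IH.2.1 d hd).1, (IH.2.1 d hd).2⟩
      · intro d hd
        rcases List.mem_cons.1 hd with rfl | hd
        · right; rw [splitLt, if_neg hc]; exact List.mem_cons_self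
        · rcases IH.2.2 d hd with h | h
          · left; rw [splitLt, if_neg hc]; exact h
          · right; rw [splitLt, if_neg hc]; exact List.mem_cons_of_mem _ h

def lvlMax : List Constr.{u} → Ordinal.{u}
  | [] => 0
  | c :: W => max c.1 (lvlMax W)

lemma lvlMax_ge : ∀ (W : List Constr.{u}), ∀ c ∈ W, c.1 ≤ lvlMax W := by
  intro W
  induction W with
  | nil => intro c hc; exact absurd hc (List.not_mem_nil)
  | cons d W IH =>
    intro c hc
    rcases List.mem_cons.1 hc with rfl | hc
    · exact le_max_left _ _
    · exact le_trans (IH c hc) (le_max_right _ _)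

lemma lvlMax_lt {lam : Ordinal.{u}} (h0 : 0 < lam) :
    ∀ (W : List Constr.{u}), (∀ c ∈ W, c.1 < lam) → lvlMax W < lam := by
  intro W
  induction W with
  | nil => intro _; exact h0
  | cons d W IH =>
    intro h
    rw [lvlMax]
    exact max_lt (h d (List.mem_cons_self))
      (IH fun c hc => h c (List.mem_cons_of_mem _ hc))

def lbMax : List Constr.{u} → Ordinal.{u}
  | [] => 0
  | c :: W => max (c.2.1.getD 0) (lbMax W)

lemma lbMax_ge : ∀ (W : List Constr.{u}), ∀ c ∈ W, ∀ a, c.2.1 = some a → a ≤ lbMax W := by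
  intro W
  induction W with
  | nil => intro c hc; exact absurd hc (List.not_mem_nil)
  | cons d W IH =>
    intro c hc a ha
    rcases List.mem_cons.1 hc with rfl | hc
    · rw [lbMax]
      refine le_trans ?_ (le_max_left _ _)
      rw [ha]
      rfl
    · exact le_trans (IH c hc a ha) (le_max_right _ _)

lemma lbMax_lt {v : Ordinal.{u}} (h0 : 0 < v) :
    ∀ (W : List Constr.{u}), (∀ c ∈ W, ∀ a, c.2.1 = some a → a < v) → lbMax W < v := by
  intro W
  induction W with
  | nil => intro _; exact h0
  | cons d W IH =>
    intro h
    rw [lbMax]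
    apply max_lt _ (IH fun c hc => h c (List.mem_cons_of_mem _ hc))
    rcases hd : d.2.1 with _ | a
    · simpa [hd] using h0
    · have := h d (List.mem_cons_self) a hd
      simpa [hd] using this

/-- The joint statement `(O1) ∧ (O2)`. -/
def Oprop (L : Ordinal.{u} → Ordinal.{u} → Ordinal.{u}) (lam ρ : Ordinal.{u}) : Prop :=
  (∃ W : List Constr.{u}, (∀ c ∈ W, c.1 < lam) ∧ WSat L W ρ ∧
     ∀ μ < ρ, WSat L W μ → L lam μ < L lam ρ) ∧
  (∀ W : List Constr.{u}, (∀ c ∈ W, c.1 < lam) → WSat L W ρ →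
     ∀ η < L lam ρ, ∃ μ, μ < ρ ∧ WSat L W μ ∧ L lam μ = η)

end IcardAux

namespace IcardAux

variable {L : Ordinal.{u} → Ordinal.{u} → Ordinal.{u}}

lemma preimage_lt (hL : IsHyperlogFamily L) {ξ ρ w : Ordinal.{u}}
    (hfix : L ξ ρ = ρ) (hw : w < ρ) : ∃ μ, μ < ρ ∧ L ξ μ = w := by
  obtain ⟨o'', himg⟩ := hL.1 ξ (ρ + 1)
  have hρmem : L ξ ρ ∈ Iio o'' := himg ▸ ⟨ρ, lt_add_one ρ, rfl⟩
  rw [hfix] at hρmem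
  have hwmem : w ∈ Iio o'' := lt_trans hw hρmem
  rw [← himg] at hwmem
  obtain ⟨μ, hμ, hval⟩ := hwmem
  have hμle : μ ≤ ρ := by
    rw [mem_Iio, Ordinal.add_one_eq_succ, Order.lt_succ_iff] at hμ
    exact hμ
  rcases eq_or_lt_of_le hμle with heq | hlt
  · rw [heq, hfix] at hval
    exact absurd (hval ▸ hw) (lt_irrefl ρ)
  · exact ⟨μ, hlt, hval⟩

theorem Oprop_all (hL : IsHyperlogFamily L) : ∀ lam ρ : Ordinal.{u}, Oprop L lam ρ := by
  intro lam
  induction lam using Ordinal.induction with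
  | _ lam IH1 =>
    intro ρ
    induction ρ using Ordinal.induction with
    | _ ρ IH2 =>
      by_cases hlam0 : lam = 0
      · -- λ = 0
        subst hlam0
        constructor
        · refine ⟨[], fun c hc => absurd hc (List.not_mem_nil), WSat_nil L ρ, ?_⟩
          intro μ hμ _
          rw [L_zero hL, L_zero hL]
          exact hμ
        · intro W hlvl hsat η hη
          rw [L_zero hL] at hη
          exact ⟨η, hη, fun c hc => absurd (hlvl c hc) not_lt_zero, L_zero hL η⟩
      · by_cases he : ellFun lam = 0
        · -- λ successor
          have hsucc : headOf lam + 1 = lam := by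
            have := headOf_spec hlam0
            rwa [he, Ordinal.opow_zero] at this
          have hξlam : headOf lam < lam := headOf_lt hlam0
          have hcompS : ∀ z, L lam z = ellFun (L (headOf lam) z) := by
            intro z
            rw [← L_one hL, ← L_law hL, hsucc]
          constructor
          · -- (O1)
            obtain ⟨W₀, hlvl₀, hsat₀, hprop₀⟩ := (IH1 (headOf lam) hξlam ρ).1
            by_cases hv : L (headOf lam) ρ = 0
            · refine ⟨W₀, fun c hc => lt_trans (hlvl₀ c hc) hξlam, hsat₀, ?_⟩
              intro μ hμ hsatμ
              have := hprop₀ μ hμ hsatμ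
              rw [hv] at this
              exact absurd this not_lt_zero
            · refine ⟨(headOf lam, some (headOf (L (headOf lam) ρ)), L (headOf lam) ρ) :: W₀,
                ?_, ?_, ?_⟩
              · intro c hc
                rcases List.mem_cons.1 hc with rfl | hc
                · exact hξlam
                · exact lt_trans (hlvl₀ c hc) hξlam
              · intro c hc
                rcases List.mem_cons.1 hc with rfl | hc
                · refine ⟨le_refl _, ?_⟩
                  intro a ha
                  have ha2 : headOf (L (headOf lam) ρ) = a := by injection ha
                  rw [← ha2]
                  exact headOf_lt hv
                · exact hsat₀ c hc
              · intro μ hμ hsatμ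
                have hhead := hsatμ _ (List.mem_cons_self)
                have hrest : WSat L W₀ μ := fun c hc => hsatμ c (List.mem_cons_of_mem _ hc)
                have hu_lt : L (headOf lam) μ < L (headOf lam) ρ := hprop₀ μ hμ hrest
                have hγu : headOf (L (headOf lam) ρ) < L (headOf lam) μ := hhead.2 _ rfl
                have hz : headOf (L (headOf lam) ρ) +
                    (L (headOf lam) μ - headOf (L (headOf lam) ρ)) = L (headOf lam) μ :=
                  Ordinal.add_sub_cancel_of_le hγu.le
                have hz0 : L (headOf lam) μ - headOf (L (headOf lam) ρ) ≠ 0 := by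
                  intro h0
                  rw [h0, add_zero] at hz
                  exact absurd (hz ▸ hγu) (lt_irrefl _)
                have hzlt : L (headOf lam) μ - headOf (L (headOf lam) ρ) <
                    ω ^ ellFun (L (headOf lam) ρ) := by
                  by_contra hge
                  push_neg at hge
                  have h1 := add_le_add_right hge (headOf (L (headOf lam) ρ))
                  rw [hz, headOf_spec hv] at h1
                  exact absurd hu_lt (not_lt.2 h1)
                rw [hcompS μ, hcompS ρ, ← hz, ellFun_add _ hz0]
                exact ellFun_lt_of_lt_opow hz0 hzlt
          · -- (O2)
            intro W hlvl hsat η hη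
            rw [hcompS ρ] at hη
            have hv : L (headOf lam) ρ ≠ 0 := by
              intro h0
              rw [h0, ellFun_zero] at hη
              exact absurd hη ((not_lt_zero : ¬ η < 0))
            have hspec := splitLt_spec (headOf lam) W
            have hhieq : ∀ c ∈ (splitLt (headOf lam) W).2, c.1 = headOf lam := by
              intro c hc
              have h1 : c.1 < lam := hlvl c (hspec.2.1 c hc).1
              rw [← hsucc, Ordinal.add_one_eq_succ, Order.lt_succ_iff] at h1
              exact le_antisymm h1 (not_lt.1 (hspec.2.1 c hc).2)
            have ha' : lbMax (splitLt (headOf lam) W).2 < L (headOf lam) ρ := by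
              apply lbMax_lt (pos_iff_ne_zero.2 hv)
              intro c hc a ha
              have := (hsat c (hspec.2.1 c hc).1).2 a ha
              rwa [hhieq c hc] at this
            have hγv : headOf (L (headOf lam) ρ) + ω ^ ellFun (L (headOf lam) ρ) =
                L (headOf lam) ρ := headOf_spec hv
            have hwv : max (headOf (L (headOf lam) ρ)) (lbMax (splitLt (headOf lam) W).2) +
                ω ^ η < L (headOf lam) ρ := by
              rcases le_total (lbMax (splitLt (headOf lam) W).2) (headOf (L (headOf lam) ρ))
                with hle' | hle'
              · rw [max_eq_left hle']
                calc headOf (L (headOf lam) ρ) + ω ^ η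
                    < headOf (L (headOf lam) ρ) + ω ^ ellFun (L (headOf lam) ρ) :=
                      add_lt_add_right ((Ordinal.opow_lt_opow_iff_right one_lt_omega0).2 hη) _
                _ = L (headOf lam) ρ := hγv
              · rw [max_eq_right hle']
                have hs : headOf (L (headOf lam) ρ) +
                    (lbMax (splitLt (headOf lam) W).2 - headOf (L (headOf lam) ρ)) =
                    lbMax (splitLt (headOf lam) W).2 :=
                  Ordinal.add_sub_cancel_of_le hle'
                have hslt : lbMax (splitLt (headOf lam) W).2 - headOf (L (headOf lam) ρ) <
                    ω ^ ellFun (L (headOf lam) ρ) := by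
                  by_contra hge
                  push_neg at hge
                  have h1 := add_le_add_right hge (headOf (L (headOf lam) ρ))
                  rw [hs, hγv] at h1
                  exact absurd ha' (not_lt.2 h1)
                have hsum : (lbMax (splitLt (headOf lam) W).2 - headOf (L (headOf lam) ρ)) +
                    ω ^ η < ω ^ ellFun (L (headOf lam) ρ) :=
                  Ordinal.principal_add_omega0_opow _ hslt
                    ((Ordinal.opow_lt_opow_iff_right one_lt_omega0).2 hη)
                calc lbMax (splitLt (headOf lam) W).2 + ω ^ η
                    = headOf (L (headOf lam) ρ) +
                      ((lbMax (splitLt (headOf lam) W).2 - headOf (L (headOf lam) ρ)) + ω ^ η) := by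
                      rw [← add_assoc, hs]
                _ < headOf (L (headOf lam) ρ) + ω ^ ellFun (L (headOf lam) ρ) :=
                      add_lt_add_right hsum _
                _ = L (headOf lam) ρ := hγv
            obtain ⟨μ, hμρ, hμlo, hμval⟩ := (IH1 (headOf lam) hξlam ρ).2
              (splitLt (headOf lam) W).1
              (fun c hc => (hspec.1 c hc).2)
              (fun c hc => hsat c (hspec.1 c hc).1)
              _ hwv
            refine ⟨μ, hμρ, ?_, ?_⟩
            · intro c hc
              rcases hspec.2.2 c hc with hmem | hmem
              · exact hμlo c hmem
              · have hceq := hhieq c hmem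
                constructor
                · rw [hceq, hμval]
                  have h4 := (hsat c hc).1
                  rw [hceq] at h4
                  exact le_trans hwv.le h4
                · intro a ha
                  rw [hceq, hμval]
                  have h1 : a ≤ lbMax (splitLt (headOf lam) W).2 := lbMax_ge _ c hmem a ha
                  have h2 : lbMax (splitLt (headOf lam) W).2 ≤
                      max (headOf (L (headOf lam) ρ)) (lbMax (splitLt (headOf lam) W).2) :=
                    le_max_right _ _
                  have h3 : max (headOf (L (headOf lam) ρ)) (lbMax (splitLt (headOf lam) W).2) <
                      max (headOf (L (headOf lam) ρ)) (lbMax (splitLt (headOf lam) W).2) + ω ^ η := by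
                    have := add_lt_add_right (Ordinal.opow_pos η omega0_pos)
                      (max (headOf (L (headOf lam) ρ)) (lbMax (splitLt (headOf lam) W).2))
                    simpa using this
                  exact lt_of_le_of_lt (le_trans h1 h2) h3
            · rw [hcompS μ, hμval, ellFun_add_opow]
        · -- λ limit
          have he_lam : (ω:Ordinal.{u}) ^ ellFun lam ≤ lam := opow_ellFun_le hlam0
          by_cases hind : (ω:Ordinal.{u}) ^ ellFun lam = lam
          · -- additively indecomposable limit
            have hch : CollapseHyp L (ellFun lam) := L_hyp hL he
            have habsorb : ∀ ζ, ζ < lam → ζ + lam = lam := by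
              intro ζ hζ
              rw [← hind] at hζ ⊢
              exact Ordinal.add_omega0_opow hζ
            have habs : ∀ ζ, ζ < lam → ∀ z, L lam (L ζ z) = L lam z :=
              fun ζ hζ z => L_absorb hL (habsorb ζ hζ) z
            have hωlam : ω ≤ lam := by
              rw [← hind]
              calc (ω:Ordinal.{u}) = ω ^ (1:Ordinal.{u}) := (Ordinal.opow_one ω).symm
              _ ≤ ω ^ ellFun lam :=
                Ordinal.opow_le_opow_right omega0_pos (Ordinal.one_le_iff_ne_zero.2 he)
            have h1lam : (1:Ordinal.{u}) < lam := lt_of_lt_of_le one_lt_omega0 hωlam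
            have h0lam : (0:Ordinal.{u}) < lam := lt_trans zero_lt_one h1lam
            have hprinlam : ∀ a b : Ordinal.{u}, a < lam → b < lam → a + b < lam := by
              intro a b ha hb
              rw [← hind] at ha hb ⊢
              exact Ordinal.principal_add_omega0_opow _ ha hb
            have habs1 : ∀ z, L lam (ellFun z) = L lam z := by
              intro z
              have h := L_absorb hL (Ordinal.one_add_of_omega0_le hωlam) z
              rwa [L_one hL] at h
            by_cases hstab : stabVal L (ellFun lam) ρ = ρ
            · -- ρ is λ-stable
              have hfixρ : ρ ∈ FixSet L (ellFun lam) := hstab ▸ hch.stab_mem_fix ρ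
              constructor
              · -- (O1)
                refine ⟨[], fun c hc => absurd hc (List.not_mem_nil), WSat_nil L ρ, ?_⟩
                intro μ hμ _
                have hρ0 : ρ ≠ 0 := by
                  intro h0
                  rw [h0] at hμ
                  exact absurd hμ ((not_lt_zero : ¬ μ < 0))
                rw [← hind]
                exact L_strict_on_stable hL he hfixρ hρ0 hμ
              · -- (O2)
                intro W hlvl hsat η hη
                have hρ0 : ρ ≠ 0 := by
                  intro h0
                  rw [h0, L_zero_arg hL] at hη
                  exact absurd hη ((not_lt_zero : ¬ η < 0))
                have hellρ : ellFun ρ = ρ := by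
                  have h1 : L 1 ρ = ρ := hfixρ 1 (by rw [hind]; exact h1lam)
                  rwa [L_one hL] at h1
                have hρomega : ω ≤ ρ := ellFun_eq_self_iff_ge_omega hρ0 hellρ
                have h1ρ : (1:Ordinal.{u}) < ρ := lt_of_lt_of_le one_lt_omega0 hρomega
                have hρpow : ρ = ω ^ ρ := by
                  obtain ⟨γ, hγ⟩ := exists_ellFun_decomp hρ0
                  rw [hellρ] at hγ
                  have h1 : ω ^ ρ ≤ ρ := by
                    conv_rhs => rw [hγ]
                    exact (le_add_self : _ ≤ γ + _)
                  exact le_antisymm (Ordinal.right_le_opow ρ one_lt_omega0) h1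
                have hprinρ : ∀ a b : Ordinal.{u}, a < ρ → b < ρ → a + b < ρ := by
                  intro a b ha hb
                  rw [hρpow] at ha hb ⊢
                  exact Ordinal.principal_add_omega0_opow _ ha hb
                have hfixlevels : ∀ ζ, ζ < lam → L ζ ρ = ρ := by
                  intro ζ hζ
                  exact hfixρ ζ (by rwa [hind])
                -- pick z with L lam z = η, z ≠ 0, z < ρ
                obtain ⟨z, hz0, hzρ, hzval⟩ :
                    ∃ z : Ordinal.{u}, z ≠ 0 ∧ z < ρ ∧ L lam z = η := by
                  by_cases hη0 : η = 0
                  · refine ⟨1, one_ne_zero, h1ρ, ?_⟩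
                    rw [← habs1 1, ellFun_one, L_zero_arg hL, hη0]
                  · obtain ⟨z, hzρ, hzval⟩ := L_pre hL hη
                    refine ⟨z, ?_, hzρ, hzval⟩
                    intro h0
                    rw [h0, L_zero_arg hL] at hzval
                    exact hη0 hzval.symm
                have haS : lbMax W < ρ := by
                  apply lbMax_lt (pos_iff_ne_zero.2 hρ0)
                  intro c hc a ha
                  have h1 := (hsat c hc).2 a ha
                  rwa [hfixlevels c.1 (hlvl c hc)] at h1
                have haS1 : lbMax W + 1 < ρ := hprinρ _ _ haS h1ρ
                have hwρ : (lbMax W + 1) + z < ρ := hprinρ _ _ haS1 hzρ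
                have hwval : L lam ((lbMax W + 1) + z) = η := by
                  rw [← habs1 ((lbMax W + 1) + z), ellFun_add _ hz0, habs1 z]
                  exact hzval
                have hξS : lvlMax W < lam := lvlMax_lt h0lam W hlvl
                obtain ⟨μ, hμρ, hμval⟩ := preimage_lt hL (hfixlevels _ hξS) hwρ
                refine ⟨μ, hμρ, ?_, ?_⟩
                · intro c hc
                  constructor
                  · have h1 : L c.1 μ ≤ μ := L_le_self hL _ _
                    have h2 : L c.1 ρ ≤ c.2.2 := (hsat c hc).1
                    rw [hfixlevels c.1 (hlvl c hc)] at h2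
                    exact le_trans h1 (le_trans (le_of_lt hμρ) h2)
                  · intro a ha
                    have h1 : a ≤ lbMax W := lbMax_ge _ c hc a ha
                    have h2 : lbMax W < (lbMax W + 1) + z := by
                      have : lbMax W < lbMax W + 1 := lt_add_one _
                      exact lt_of_lt_of_le this ((le_self_add : _ ≤ _ + _))
                    have h3 : L (lvlMax W) μ ≤ L c.1 μ :=
                      L_antitone_level hL (lvlMax_ge W c hc) μ
                    rw [hμval] at h3
                    exact lt_of_le_of_lt h1 (lt_of_lt_of_le h2 h3)
                · rw [← habs _ hξS μ, hμval]
                  exact hwval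
            · -- ρ is not λ-stable
              have hsρ : stabVal L (ellFun lam) ρ < ρ :=
                lt_of_le_of_ne (hch.stab_le_self ρ) hstab
              obtain ⟨ξs, hξs, hξsval⟩ := hch.exists_stab_index ρ
              have hξslam : ξs < lam := by rwa [hind] at hξs
              have hbeyond : ∀ ξ, ξs ≤ ξ → ξ < lam → L ξ ρ = stabVal L (ellFun lam) ρ := by
                intro ξ hge hlt
                have hd : ξs + (ξ - ξs) = ξ := Ordinal.add_sub_cancel_of_le hge
                have hsub : ξ - ξs < (ω:Ordinal.{u}) ^ ellFun lam := by
                  rw [hind]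
                  exact lt_of_le_of_lt (Ordinal.sub_le_self _ _) hlt
                rw [← hd, L_law hL, hξsval]
                exact hch.stab_stable ρ _ hsub
              have habsρ : L lam ρ = L lam (stabVal L (ellFun lam) ρ) := by
                rw [← hξsval, habs ξs hξslam]
              constructor
              · -- (O1)
                obtain ⟨W₁, h₁lvl, h₁sat, h₁prop⟩ :=
                  (IH2 (stabVal L (ellFun lam) ρ) hsρ).1
                obtain ⟨W₀, h₀lvl, h₀sat, h₀prop⟩ := (IH1 ξs hξslam ρ).1
                refine ⟨W₀ ++ shiftW ξs W₁, ?_, ?_, ?_⟩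
                · intro c hc
                  rcases List.mem_append.1 hc with hc | hc
                  · exact lt_trans (h₀lvl c hc) hξslam
                  · obtain ⟨c', hc', rfl⟩ := List.mem_map.1 hc
                    exact hprinlam _ _ hξslam (h₁lvl c' hc')
                · rw [WSat_append]
                  refine ⟨h₀sat, (WSat_shift hL).2 ?_⟩
                  rw [hξsval]
                  exact h₁sat
                · intro μ hμ hsatμ
                  rw [WSat_append] at hsatμ
                  have hu : L ξs μ < stabVal L (ellFun lam) ρ := by
                    have := h₀prop μ hμ hsatμ.1
                    rwa [hξsval] at this
                  have husat : WSat L W₁ (L ξs μ) := (WSat_shift hL).1 hsatμ.2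
                  have := h₁prop _ hu husat
                  rw [← habs ξs hξslam μ, habsρ]
                  exact this
              · -- (O2)
                intro W hlvl hsat η hη
                rw [habsρ] at hη
                obtain ⟨u, hus, _, huval⟩ :=
                  (IH2 (stabVal L (ellFun lam) ρ) hsρ).2 []
                    (fun c hc => absurd hc (List.not_mem_nil)) (WSat_nil L _) η hη
                have hξ₀lam : max ξs (lvlMax W + 1) < lam := by
                  apply max_lt hξslam
                  exact hprinlam _ _ (lvlMax_lt h0lam W hlvl) h1lam
                have hξ₀ρ : L (max ξs (lvlMax W + 1)) ρ = stabVal L (ellFun lam) ρ :=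
                  hbeyond _ (le_max_left _ _) hξ₀lam
                obtain ⟨μ, hμρ, hμsat, hμval⟩ := (IH1 _ hξ₀lam ρ).2 W
                  (fun c hc => lt_of_lt_of_le
                    (lt_of_le_of_lt (lvlMax_ge W c hc) (lt_add_one _))
                    (le_max_right _ _))
                  hsat u (by rw [hξ₀ρ]; exact hus)
                refine ⟨μ, hμρ, hμsat, ?_⟩
                rw [← habs _ hξ₀lam μ, hμval, huval]
          · -- decomposable limit
            have hd : headOf lam + ω ^ ellFun lam = lam := headOf_spec hlam0
            have hl1 : headOf lam < lam := headOf_lt hlam0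
            have hωlt : (ω:Ordinal.{u}) ^ ellFun lam < lam := lt_of_le_of_ne he_lam hind
            have hcomp : ∀ z, L lam z = L (ω ^ ellFun lam) (L (headOf lam) z) := by
              intro z
              rw [← L_law hL, hd]
            constructor
            · -- (O1)
              obtain ⟨W₁, h₁lvl, h₁sat, h₁prop⟩ := (IH1 (headOf lam) hl1 ρ).1
              obtain ⟨W₂, h₂lvl, h₂sat, h₂prop⟩ :=
                (IH1 (ω ^ ellFun lam) hωlt (L (headOf lam) ρ)).1
              refine ⟨W₁ ++ shiftW (headOf lam) W₂, ?_, ?_, ?_⟩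
              · intro c hc
                rcases List.mem_append.1 hc with hc | hc
                · exact lt_trans (h₁lvl c hc) hl1
                · obtain ⟨c', hc', rfl⟩ := List.mem_map.1 hc
                  have h2 : headOf lam + c'.1 < headOf lam + ω ^ ellFun lam :=
                    add_lt_add_right (h₂lvl c' hc') _
                  rwa [hd] at h2
              · rw [WSat_append]
                exact ⟨h₁sat, (WSat_shift hL).2 h₂sat⟩
              · intro μ hμ hsatμ
                rw [WSat_append] at hsatμ
                have hu : L (headOf lam) μ < L (headOf lam) ρ := h₁prop μ hμ hsatμ.1
                have husat : WSat L W₂ (L (headOf lam) μ) := (WSat_shift hL).1 hsatμ.2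
                rw [hcomp μ, hcomp ρ]
                exact h₂prop _ hu husat
            · -- (O2)
              intro W hlvl hsat η hη
              have hspec := splitLt_spec (headOf lam) W
              have hhile : ∀ c ∈ (splitLt (headOf lam) W).2, headOf lam ≤ c.1 :=
                fun c hc => not_lt.1 (hspec.2.1 c hc).2
              have hcsub : ∀ (c : Constr.{u}), c ∈ (splitLt (headOf lam) W).2 → ∀ z,
                  (CSat L (c.1 - headOf lam, c.2) (L (headOf lam) z) ↔ CSat L c z) := by
                intro c hc z
                apply CSat_level_congr
                rw [← L_law hL, Ordinal.add_sub_cancel_of_le (hhile c hc)]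
              have hη' : η < L (ω ^ ellFun lam) (L (headOf lam) ρ) := by
                rwa [hcomp ρ] at hη
              obtain ⟨u, huv, husat, huval⟩ :=
                (IH1 (ω ^ ellFun lam) hωlt (L (headOf lam) ρ)).2
                  (unshiftW (headOf lam) (splitLt (headOf lam) W).2)
                  (by
                    intro c hc
                    obtain ⟨c', hc', rfl⟩ := List.mem_map.1 hc
                    have h1 : c'.1 < lam := hlvl c' (hspec.2.1 c' hc').1
                    show c'.1 - headOf lam < ω ^ ellFun lam
                    by_contra hge
                    push_neg at hge
                    have h2 := add_le_add_right hge (headOf lam)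
                    rw [Ordinal.add_sub_cancel_of_le (hhile c' hc'), hd] at h2
                    exact absurd h1 (not_lt.2 h2))
                  (by
                    intro c hc
                    obtain ⟨c', hc', rfl⟩ := List.mem_map.1 hc
                    exact (hcsub c' hc' ρ).2 (hsat c' (hspec.2.1 c' hc').1))
                  η hη'
              obtain ⟨μ, hμρ, hμlo, hμval⟩ := (IH1 (headOf lam) hl1 ρ).2
                (splitLt (headOf lam) W).1
                (fun c hc => (hspec.1 c hc).2)
                (fun c hc => hsat c (hspec.1 c hc).1)
                u huv
              refine ⟨μ, hμρ, ?_, ?_⟩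
              · intro c hc
                rcases hspec.2.2 c hc with hmem | hmem
                · exact hμlo c hmem
                · refine (hcsub c hmem μ).1 ?_
                  rw [hμval]
                  exact husat _ (List.mem_map_of_mem hmem)
              · rw [hcomp μ, hμval, huval]

end IcardAux

namespace IcardAux

/-! #### Cantor–Bendixson theory for explicit topologies -/

variable {X : Type u}

lemma isOpenT_of_nbhds (t : TopologicalSpace X) {A : Set X}
    (h : ∀ x ∈ A, ∃ U, t.IsOpen U ∧ x ∈ U ∧ U ⊆ A) : t.IsOpen A := by
  have hA : A = ⋃₀ {U | t.IsOpen U ∧ U ⊆ A} := by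
    ext x
    constructor
    · intro hx
      obtain ⟨U, h1, h2, h3⟩ := h x hx
      exact ⟨U, ⟨h1, h3⟩, h2⟩
    · rintro ⟨U, ⟨_, hUA⟩, hxU⟩
      exact hUA hxU
  rw [hA]
  exact t.isOpen_sUnion _ (fun U hU => hU.1)

lemma dSet_mono (t : TopologicalSpace X) {A B : Set X} (h : A ⊆ B) :
    dSet t A ⊆ dSet t B := by
  intro x hx U hU hxU
  obtain ⟨y, hy, hyx⟩ := hx U hU hxU
  exact ⟨y, ⟨hy.1, h hy.2⟩, hyx⟩

/-- `A` is closed w.r.t. the explicit topology `t`. -/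
def ClosedT (t : TopologicalSpace X) (A : Set X) : Prop := t.IsOpen Aᶜ

lemma closedT_univ (t : TopologicalSpace X) : ClosedT t (univ : Set X) := by
  have h : (univ : Set X)ᶜ = ⋃₀ (∅ : Set (Set X)) := by simp
  rw [ClosedT, h]
  exact t.isOpen_sUnion _ (fun U hU => absurd hU (notMem_empty U))

lemma dSet_subset_closed (t : TopologicalSpace X) {A : Set X} (hA : ClosedT t A) :
    dSet t A ⊆ A := by
  intro x hx
  by_contra hxA
  obtain ⟨y, hy, _⟩ := hx Aᶜ hA hxA
  exact hy.1 hy.2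

lemma not_mem_dSet_iff {t : TopologicalSpace X} {A : Set X} {x : X} :
    x ∉ dSet t A ↔ ∃ U, t.IsOpen U ∧ x ∈ U ∧ ∀ y ∈ U ∩ A, y = x := by
  constructor
  · intro hx
    simp only [dSet, mem_setOf_eq, not_forall] at hx
    obtain ⟨U, hU, hxU, hno⟩ := hx
    push_neg at hno
    exact ⟨U, hU, hxU, hno⟩
  · rintro ⟨U, hU, hxU, hno⟩ hx
    obtain ⟨y, hy, hyx⟩ := hx U hU hxU
    exact hyx (hno y hy)

lemma dSet_closed (t : TopologicalSpace X) {A : Set X} (hA : ClosedT t A) :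
    ClosedT t (dSet t A) := by
  apply isOpenT_of_nbhds
  intro x hx
  rw [mem_compl_iff, not_mem_dSet_iff] at hx
  obtain ⟨U, hU, hxU, hno⟩ := hx
  refine ⟨U, hU, hxU, ?_⟩
  intro y hyU
  rw [mem_compl_iff]
  intro hyd
  have hyA : y ∈ A := dSet_subset_closed t hA hyd
  have hyx : y = x := hno y ⟨hyU, hyA⟩
  rw [hyx] at hyd
  exact not_mem_dSet_iff.2 ⟨U, hU, hxU, hno⟩ hyd

lemma dIter_zero (t : TopologicalSpace X) : dIter t 0 = (univ : Set X) :=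
  Ordinal.limitRecOn_zero _ _ _

lemma dIter_succ (t : TopologicalSpace X) (o : Ordinal.{u}) :
    dIter t (o + 1) = dSet t (dIter t o) :=
  Ordinal.limitRecOn_succ _ _ _ _

lemma dIter_limit (t : TopologicalSpace X) {o : Ordinal.{u}} (ho : Order.IsSuccLimit o) :
    dIter t o = ⋂ (o' : Ordinal.{u}) (_ : o' < o), dIter t o' :=
  Ordinal.limitRecOn_limit _ _ _ _ ho

lemma dIter_pack (t : TopologicalSpace X) : ∀ ξ : Ordinal.{u},
    ClosedT t (dIter t ξ) ∧ ∀ ζ ≤ ξ, dIter t ξ ⊆ dIter t ζ := by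
  intro ξ
  induction ξ using Ordinal.induction with
  | _ ξ IH =>
    rcases Ordinal.zero_or_succ_or_isSuccLimit ξ with rfl | ⟨a, rfl⟩ | hlim
    · constructor
      · rw [dIter_zero]; exact closedT_univ t
      · intro ζ hζ
        have : ζ = 0 := le_antisymm hζ ((zero_le : 0 ≤ ζ))
        rw [this]
    · have ha : a < a + 1 := lt_add_one a
      rw [show Order.succ a = a + 1 from (Ordinal.add_one_eq_succ a).symm] at IH ⊢
      constructor
      · rw [dIter_succ]
        exact dSet_closed t (IH a ha).1
      · intro ζ hζ
        rcases eq_or_lt_of_le hζ with rfl | hlt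
        · exact subset_rfl
        · have hζa : ζ ≤ a := by
            rw [Ordinal.add_one_eq_succ, Order.lt_succ_iff] at hlt
            exact hlt
          rw [dIter_succ]
          exact subset_trans (dSet_subset_closed t (IH a ha).1) ((IH a ha).2 ζ hζa)
    · constructor
      · rw [dIter_limit t hlim]
        apply isOpenT_of_nbhds
        intro x hx
        rw [mem_compl_iff] at hx
        simp only [mem_iInter, not_forall] at hx
        obtain ⟨ζ, hζ, hxζ⟩ := hx
        refine ⟨(dIter t ζ)ᶜ, (IH ζ hζ).1, hxζ, ?_⟩
        intro y hy
        rw [mem_compl_iff] at hy ⊢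
        simp only [mem_iInter, not_forall]
        exact ⟨ζ, hζ, hy⟩
      · intro ζ hζ
        rcases eq_or_lt_of_le hζ with rfl | hlt
        · exact subset_rfl
        · rw [dIter_limit t hlim]
          intro y hy
          simp only [mem_iInter] at hy
          exact hy ζ hlt

lemma dIter_anti (t : TopologicalSpace X) {ζ ξ : Ordinal.{u}} (h : ζ ≤ ξ) :
    dIter t ξ ⊆ dIter t ζ := (dIter_pack t ξ).2 ζ h

lemma exists_dIter_stab (t : TopologicalSpace X) :
    ∃ ξ : Ordinal.{u}, dIter t (ξ + 1) = dIter t ξ := by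
  by_contra hno
  push_neg at hno
  have hstrict : ∀ ξ ζ : Ordinal.{u}, ξ < ζ → dIter t ζ ≠ dIter t ξ := by
    intro ξ ζ h heq
    have h1 : dIter t ζ ⊆ dIter t (ξ + 1) := dIter_anti t (Order.add_one_le_of_lt h)
    have h2 : dIter t (ξ + 1) ⊆ dIter t ξ := dIter_anti t (le_of_lt (lt_add_one ξ))
    apply hno ξ
    apply le_antisymm h2
    rw [← heq]
    exact h1
  have hinj : Function.Injective (fun ξ : Ordinal.{u} => dIter t ξ) := by
    intro a b hab
    rcases lt_trichotomy a b with h | h | h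
    · exact absurd hab.symm (hstrict a b h)
    · exact h
    · exact absurd hab (hstrict b a h)
  exact not_small_ordinal.{u} (small_of_injective hinj)

variable {t : TopologicalSpace X}

lemma dIter_stab_empty (hscat : IsScattered t) {ξ : Ordinal.{u}}
    (h : dIter t (ξ + 1) = dIter t ξ) : dIter t ξ = ∅ := by
  by_contra hne
  obtain ⟨x, hx, U, hU, hUA⟩ := hscat _ (nonempty_iff_ne_empty.2 hne)
  have hxd : x ∈ dSet t (dIter t ξ) := by
    rw [← dIter_succ, h]
    exact hx
  have hxU : x ∈ U := by
    have : x ∈ U ∩ dIter t ξ := by rw [hUA]; rfl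
    exact this.1
  obtain ⟨y, hy, hyx⟩ := hxd U hU hxU
  apply hyx
  rw [← mem_singleton_iff, ← hUA]
  exact hy

lemma rank_set_nonempty (hscat : IsScattered t) (x : X) :
    {ξ : Ordinal.{u} | x ∉ dIter t (ξ + 1)}.Nonempty := by
  obtain ⟨ξ, hξ⟩ := exists_dIter_stab t
  refine ⟨ξ, ?_⟩
  show x ∉ dIter t (ξ + 1)
  rw [hξ, dIter_stab_empty hscat hξ]
  exact notMem_empty x

lemma ptRank_spec (hscat : IsScattered t) (x : X) : x ∉ dIter t (ptRank t x + 1) :=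
  csInf_mem (rank_set_nonempty hscat x)

lemma mem_dIter_of_lt_rank {x : X} {ξ : Ordinal.{u}} (h : ξ < ptRank t x) :
    x ∈ dIter t (ξ + 1) := by
  by_contra hx
  exact absurd (csInf_le (OrderBot.bddBelow _) hx : ptRank t x ≤ ξ) (not_le.2 h)

lemma mem_dIter_rank (x : X) : x ∈ dIter t (ptRank t x) := by
  rcases Ordinal.zero_or_succ_or_isSuccLimit (ptRank t x) with h0 | ⟨a, ha⟩ | hlim
  · rw [h0, dIter_zero]; exact mem_univ x
  · rw [← ha, show Order.succ a = a + 1 from (Ordinal.add_one_eq_succ a).symm]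
    exact mem_dIter_of_lt_rank (by
      rw [← ha]
      exact Order.lt_succ_iff.2 (le_refl a))
  · rw [dIter_limit t hlim]
    simp only [mem_iInter]
    intro ζ hζ
    exact dIter_anti t (le_of_lt (lt_add_one ζ)) (mem_dIter_of_lt_rank hζ)

lemma dIter_eq_rank (hscat : IsScattered t) (ξ : Ordinal.{u}) :
    dIter t ξ = {x : X | ξ ≤ ptRank t x} := by
  ext x
  constructor
  · intro hx
    by_contra hlt
    rw [mem_setOf_eq, not_le] at hlt
    have h1 : ptRank t x + 1 ≤ ξ := Order.add_one_le_of_lt hlt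
    exact ptRank_spec hscat x (dIter_anti t h1 hx)
  · intro hx
    exact dIter_anti t hx (mem_dIter_rank x)

lemma isolating (hscat : IsScattered t) (x : X) :
    ∃ U, t.IsOpen U ∧ x ∈ U ∧ ∀ y ∈ U, y = x ∨ ptRank t y < ptRank t x := by
  have h1 : x ∉ dSet t (dIter t (ptRank t x)) := by
    rw [← dIter_succ]
    exact ptRank_spec hscat x
  rw [not_mem_dSet_iff] at h1
  obtain ⟨U, hU, hxU, hno⟩ := h1
  refine ⟨U, hU, hxU, fun y hy => ?_⟩
  by_cases hyr : ptRank t x ≤ ptRank t y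
  · left
    apply hno y
    refine ⟨hy, ?_⟩
    rw [dIter_eq_rank hscat]
    exact hyr
  · right
    exact not_le.1 hyr

lemma exact_rank_points (hscat : IsScattered t) (x : X) {U : Set X} (hU : t.IsOpen U)
    (hxU : x ∈ U) {μ : Ordinal.{u}} (hμ : μ < ptRank t x) :
    ∃ y ∈ U, y ≠ x ∧ ptRank t y = μ := by
  obtain ⟨U₀, hU₀, hxU₀, hiso⟩ := isolating hscat x
  have hVopen : t.IsOpen (U ∩ U₀) := t.isOpen_inter _ _ hU hU₀
  have hxV : x ∈ U ∩ U₀ := ⟨hxU, hxU₀⟩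
  have hAne : ∃ y, (y ∈ U ∩ U₀ ∧ y ≠ x ∧ μ ≤ ptRank t y) := by
    have hxd : x ∈ dSet t (dIter t μ) := by
      rw [← dIter_succ]
      exact mem_dIter_of_lt_rank hμ
    obtain ⟨y, hy, hyx⟩ := hxd _ hVopen hxV
    have : μ ≤ ptRank t y := by
      have := hy.2
      rwa [dIter_eq_rank hscat] at this
    exact ⟨y, hy.1, hyx, this⟩
  set A := {y : X | y ∈ U ∩ U₀ ∧ y ≠ x ∧ μ ≤ ptRank t y} with hAdef
  have hAne' : A.Nonempty := hAne
  have hRne : (ptRank t '' A).Nonempty := hAne'.image _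
  obtain ⟨z, hzA, hzval⟩ := csInf_mem hRne
  have hzmin : ∀ y ∈ A, ptRank t z ≤ ptRank t y := by
    intro y hy
    rw [hzval]
    exact csInf_le (OrderBot.bddBelow _) ⟨y, hy, rfl⟩
  rcases eq_or_lt_of_le hzA.2.2 with heq | hlt
  · exact ⟨z, hzA.1.1, hzA.2.1, heq.symm⟩
  · exfalso
    have hz1 : z ∈ dSet t (dIter t μ) := by
      rw [← dIter_succ]
      exact mem_dIter_of_lt_rank hlt
    obtain ⟨Uz, hUz, hzUz, hisoz⟩ := isolating hscat z
    have hWopen : t.IsOpen ((U ∩ U₀) ∩ Uz) := t.isOpen_inter _ _ hVopen hUz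
    obtain ⟨y, hyy, hyz⟩ := hz1 _ hWopen ⟨hzA.1, hzUz⟩
    have hry : μ ≤ ptRank t y := by
      have := hyy.2
      rwa [dIter_eq_rank hscat] at this
    have hylt : ptRank t y < ptRank t z := (hisoz y hyy.1.2).resolve_left hyz
    rcases hiso y hyy.1.1.2 with heq2 | hyx
    · have hzlt : ptRank t z < ptRank t x := (hiso z hzA.1.2).resolve_left hzA.2.1
      rw [heq2] at hylt
      exact absurd (lt_trans hylt hzlt) (lt_irrefl _)
    · have hyneq : y ≠ x := by
        intro h0
        rw [h0] at hyx
        exact absurd hyx (lt_irrefl _)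
      exact absurd (hzmin y ⟨hyy.1.1, hyneq, hry⟩) (not_le.2 hylt)

end IcardAux

namespace IcardAux

variable {X : Type u}

lemma isOpenT_empty (t : TopologicalSpace X) : t.IsOpen (∅ : Set X) := by
  have h : (∅ : Set X) = ⋃₀ (∅ : Set (Set X)) := by simp
  rw [h]
  exact t.isOpen_sUnion _ (fun U hU => absurd hU (notMem_empty U))

lemma rank_criterion {s : TopologicalSpace X} {f : X → Ordinal.{u}}
    (ha : ∀ x, ∃ U, s.IsOpen U ∧ x ∈ U ∧ ∀ y ∈ U, y ≠ x → f y < f x)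
    (hb : ∀ x, ∀ η < f x, ∀ U, s.IsOpen U → x ∈ U → ∃ y ∈ U, y ≠ x ∧ η ≤ f y) :
    IsScattered s ∧ ∀ x, ptRank s x = f x := by
  have hscat : IsScattered s := by
    intro A hA
    have hRne : (f '' A).Nonempty := hA.image f
    obtain ⟨x, hxA, hxval⟩ := csInf_mem hRne
    have hxmin : ∀ y ∈ A, f x ≤ f y := by
      intro y hy
      rw [hxval]
      exact csInf_le (OrderBot.bddBelow _) ⟨y, hy, rfl⟩
    obtain ⟨U, hU, hxU, hprop⟩ := ha x
    refine ⟨x, hxA, U, hU, ?_⟩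
    ext y
    constructor
    · rintro ⟨hyU, hyA⟩
      rw [mem_singleton_iff]
      by_contra hyx
      exact absurd (hxmin y hyA) (not_le.2 (hprop y hyU hyx))
    · intro hy
      rw [mem_singleton_iff] at hy
      rw [hy]
      exact ⟨hxU, hxA⟩
  have hupper : ∀ ξ : Ordinal.{u}, dIter s ξ ⊆ {x : X | ξ ≤ f x} := by
    intro ξ
    induction ξ using Ordinal.induction with
    | _ ξ IH =>
      rcases Ordinal.zero_or_succ_or_isSuccLimit ξ with rfl | ⟨a, rfl⟩ | hlim
      · intro y _
        exact (zero_le : (0 : Ordinal.{u}) ≤ _)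
      · rw [show Order.succ a = a + 1 from (Ordinal.add_one_eq_succ a).symm] at IH ⊢
        rw [dIter_succ]
        intro y hy
        obtain ⟨U, hU, hyU, hprop⟩ := ha y
        obtain ⟨z, hz, hzy⟩ := hy U hU hyU
        have hz1 : a ≤ f z := IH a (lt_add_one a) hz.2
        have hz2 : f z < f y := hprop z hz.1 hzy
        exact Order.add_one_le_of_lt (lt_of_le_of_lt hz1 hz2)
      · rw [dIter_limit s hlim]
        intro y hy
        simp only [mem_iInter] at hy
        show ξ ≤ f y
        apply le_of_forall_lt
        intro c hc
        have h1 : c + 1 < ξ := by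
          rw [Ordinal.add_one_eq_succ]
          exact hlim.succ_lt hc
        have h2 := IH (c + 1) h1 (hy (c + 1) h1)
        exact lt_of_lt_of_le (lt_add_one c) h2
  have hlower : ∀ ξ : Ordinal.{u}, ∀ x, ξ ≤ f x → x ∈ dIter s ξ := by
    intro ξ
    induction ξ using Ordinal.induction with
    | _ ξ IH =>
      intro x hx
      rcases Ordinal.zero_or_succ_or_isSuccLimit ξ with rfl | ⟨a, rfl⟩ | hlim
      · rw [dIter_zero]
        exact mem_univ x
      · rw [show Order.succ a = a + 1 from (Ordinal.add_one_eq_succ a).symm] at IH hx ⊢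
        rw [dIter_succ]
        intro U hU hxU
        have ha' : a < f x := lt_of_lt_of_le (lt_add_one a) hx
        obtain ⟨y, hyU, hyx, hyf⟩ := hb x a ha' U hU hxU
        exact ⟨y, ⟨hyU, IH a (lt_add_one a) y hyf⟩, hyx⟩
      · rw [dIter_limit s hlim]
        simp only [mem_iInter]
        intro ζ hζ
        exact IH ζ hζ x (le_trans hζ.le hx)
  refine ⟨hscat, fun x => ?_⟩
  have hnotin : x ∉ dIter s (f x + 1) := by
    intro hmem
    exact absurd (hupper (f x + 1) hmem) (not_le.2 (lt_add_one (f x)))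
  apply le_antisymm
  · exact csInf_le (OrderBot.bddBelow _) hnotin
  · by_contra hlt
    push_neg at hlt
    have h1 : ptRank s x + 1 ≤ f x := Order.add_one_le_of_lt hlt
    have h2 : x ∈ dIter s (ptRank s x + 1) := hlower _ x h1
    have h3 : x ∉ dIter s (ptRank s x + 1) :=
      csInf_mem (⟨f x, hnotin⟩ : {ξ : Ordinal.{u} | x ∉ dIter s (ξ + 1)}.Nonempty)
    exact h3 h2

/-! #### The Icard topology as a generated topology -/

variable (L : Ordinal.{u} → Ordinal.{u} → Ordinal.{u}) (t : TopologicalSpace X)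
  (lam : Ordinal.{u})

def icardGen : Set (Set X) :=
  {U : Set X | t.IsOpen U} ∪
    {S : Set X | ∃ ξ < lam,
      (∃ b : Ordinal.{u}, S = {x | L ξ (ptRank t x) ≤ b}) ∨
      (∃ a b : Ordinal.{u}, a < b ∧ S = {x | a < L ξ (ptRank t x) ∧ L ξ (ptRank t x) ≤ b})}

lemma icardTop_eq : IcardTop L t lam = TopologicalSpace.generateFrom (icardGen L t lam) := by
  have h2 : TopologicalSpace.generateFrom {U : Set X | t.IsOpen U} = t :=
    TopologicalSpace.generateFrom_setOf_isOpen t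
  rw [IcardTop, icardGen, generateFrom_union, h2]

lemma isOpen_icard_of_isOpenT {U : Set X} (hU : t.IsOpen U) :
    (IcardTop L t lam).IsOpen U := by
  rw [icardTop_eq]
  exact TopologicalSpace.isOpen_generateFrom_of_mem (Or.inl hU)

/-- The set of points whose rank satisfies a constraint. -/
def cSet (c : Constr.{u}) : Set X := {x | CSat L c (ptRank t x)}

lemma cSet_open {c : Constr.{u}} (hc : c.1 < lam) : (IcardTop L t lam).IsOpen (cSet L t c) := by
  rw [icardTop_eq]
  obtain ⟨ξ, a?, b⟩ := c
  rcases a? with _ | a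
  · apply TopologicalSpace.isOpen_generateFrom_of_mem
    refine Or.inr ⟨ξ, hc, Or.inl ⟨b, ?_⟩⟩
    ext x
    simp [cSet, CSat]
  · by_cases hab : a < b
    · apply TopologicalSpace.isOpen_generateFrom_of_mem
      refine Or.inr ⟨ξ, hc, Or.inr ⟨a, b, hab, ?_⟩⟩
      ext x
      simp only [cSet, CSat, mem_setOf_eq]
      constructor
      · rintro ⟨h1, h2⟩
        exact ⟨h2 a rfl, h1⟩
      · rintro ⟨h1, h2⟩
        refine ⟨h2, ?_⟩
        rintro a' ha'
        have : a = a' := by injection ha'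
        rw [← this]
        exact h1
    · have hempty : cSet L t (ξ, some a, b) = (∅ : Set X) := by
        ext x
        simp only [cSet, CSat, mem_setOf_eq, mem_empty_iff_false, iff_false, not_and]
        intro h1 h2
        exact hab (lt_of_lt_of_le (h2 a rfl) h1)
      rw [hempty]
      exact isOpenT_empty _

def wSet (W : List Constr.{u}) : Set X := {x | WSat L W (ptRank t x)}

lemma wSet_open {W : List Constr.{u}} (hW : ∀ c ∈ W, c.1 < lam) :
    (IcardTop L t lam).IsOpen (wSet L t W) := by
  induction W with
  | nil =>
    have h : wSet L t ([] : List Constr.{u}) = (univ : Set X) := by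
      ext x
      simp only [wSet, mem_setOf_eq, mem_univ, iff_true]
      exact WSat_nil L _
    rw [h]
    exact (IcardTop L t lam).isOpen_univ
  | cons c W IH =>
    have h : wSet L t (c :: W) = cSet L t c ∩ wSet L t W := by
      ext x
      simp only [wSet, cSet, WSat, mem_setOf_eq, mem_inter_iff]
      constructor
      · intro h
        exact ⟨h c (List.mem_cons_self), fun d hd => h d (List.mem_cons_of_mem _ hd)⟩
      · rintro ⟨h1, h2⟩ d hd
        rcases List.mem_cons.1 hd with rfl | hd
        · exact h1
        · exact h2 d hd
    rw [h]
    exact (IcardTop L t lam).isOpen_inter _ _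
      (cSet_open L t lam (hW c (List.mem_cons_self)))
      (IH (fun d hd => hW d (List.mem_cons_of_mem _ hd)))

lemma icard_nbhd {O : Set X} (hO : (IcardTop L t lam).IsOpen O) :
    ∀ x ∈ O, ∃ (U : Set X) (W : List Constr.{u}), t.IsOpen U ∧ x ∈ U ∧
      (∀ c ∈ W, c.1 < lam) ∧ WSat L W (ptRank t x) ∧
      U ∩ wSet L t W ⊆ O := by
  rw [icardTop_eq] at hO
  have hO' : TopologicalSpace.GenerateOpen (icardGen L t lam) O := hO
  clear hO
  induction hO' with
  | basic u hu =>
    intro x hx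
    rcases hu with hu | ⟨ξ, hξ, hform⟩
    · exact ⟨u, [], hu, hx, fun c hc => absurd hc (List.not_mem_nil), WSat_nil L _,
        fun y hy => hy.1⟩
    · rcases hform with ⟨b, rfl⟩ | ⟨a, b, hab, rfl⟩
      · refine ⟨univ, [(ξ, none, b)], t.isOpen_univ, mem_univ x, ?_, ?_, ?_⟩
        · intro c hc
          rcases List.mem_cons.1 hc with rfl | hc
          · exact hξ
          · exact absurd hc (List.not_mem_nil)
        · intro c hc
          rcases List.mem_cons.1 hc with rfl | hc
          · exact ⟨hx, fun a ha => by simp at ha⟩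
          · exact absurd hc (List.not_mem_nil)
        · rintro y ⟨-, hy⟩
          exact (hy (ξ, none, b) (List.mem_cons_self)).1
      · refine ⟨univ, [(ξ, some a, b)], t.isOpen_univ, mem_univ x, ?_, ?_, ?_⟩
        · intro c hc
          rcases List.mem_cons.1 hc with rfl | hc
          · exact hξ
          · exact absurd hc (List.not_mem_nil)
        · intro c hc
          rcases List.mem_cons.1 hc with rfl | hc
          · refine ⟨hx.2, ?_⟩
            intro a' ha'
            have : a = a' := by injection ha'
            rw [← this]
            exact hx.1
          · exact absurd hc (List.not_mem_nil)
        · rintro y ⟨-, hy⟩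
          have := hy (ξ, some a, b) (List.mem_cons_self)
          exact ⟨this.2 a rfl, this.1⟩
  | univ =>
    intro x _
    exact ⟨univ, [], t.isOpen_univ, mem_univ x, fun c hc => absurd hc (List.not_mem_nil),
      WSat_nil L _, fun y _ => mem_univ y⟩
  | inter u v hu hv IHu IHv =>
    intro x hx
    obtain ⟨U₁, W₁, hU₁, hxU₁, hlvl₁, hsat₁, hsub₁⟩ := IHu x hx.1
    obtain ⟨U₂, W₂, hU₂, hxU₂, hlvl₂, hsat₂, hsub₂⟩ := IHv x hx.2
    refine ⟨U₁ ∩ U₂, W₁ ++ W₂, t.isOpen_inter _ _ hU₁ hU₂, ⟨hxU₁, hxU₂⟩, ?_, ?_, ?_⟩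
    · intro c hc
      rcases List.mem_append.1 hc with hc | hc
      · exact hlvl₁ c hc
      · exact hlvl₂ c hc
    · exact WSat_append.2 ⟨hsat₁, hsat₂⟩
    · rintro y ⟨⟨hy1, hy2⟩, hyW⟩
      have hyW' := WSat_append.1 hyW
      exact ⟨hsub₁ ⟨hy1, hyW'.1⟩, hsub₂ ⟨hy2, hyW'.2⟩⟩
  | sUnion S hS IH =>
    intro x hx
    obtain ⟨s', hs', hxs'⟩ := hx
    obtain ⟨U, W, h1, h2, h3, h4, h5⟩ := IH s' hs' x hxs'
    exact ⟨U, W, h1, h2, h3, h4, fun y hy => ⟨s', hs', h5 hy⟩⟩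

end IcardAux
/-- For a scattered space `(X, τ)` and any ordinal `λ`, the space
`(X, τ_λ)` is scattered and its rank function is `ℓ^λ ∘ ρ_τ`. -/
theorem Icard_scattered_and_rank {X : Type u} (t : TopologicalSpace X)
    (hscat : IsScattered t)
    (L : Ordinal.{u} → Ordinal.{u} → Ordinal.{u}) (hL : IsHyperlogFamily L)
    (lam : Ordinal.{u}) :
    IsScattered (IcardTop L t lam) ∧
      ∀ x : X, ptRank (IcardTop L t lam) x = L lam (ptRank t x) := by
  have ha : ∀ x, ∃ U, (IcardTop L t lam).IsOpen U ∧ x ∈ U ∧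
      ∀ y ∈ U, y ≠ x → L lam (ptRank t y) < L lam (ptRank t x) := by
    intro x
    obtain ⟨W, hlvl, hsatρ, hprop⟩ := (IcardAux.Oprop_all hL lam (ptRank t x)).1
    obtain ⟨U₀, hU₀, hxU₀, hiso⟩ := IcardAux.isolating hscat x
    refine ⟨U₀ ∩ IcardAux.wSet L t W, (IcardTop L t lam).isOpen_inter _ _
      (IcardAux.isOpen_icard_of_isOpenT L t lam hU₀) (IcardAux.wSet_open L t lam hlvl),
      ⟨hxU₀, show IcardAux.WSat L W (ptRank t x) from hsatρ⟩, ?_⟩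
    rintro y ⟨hyU₀, hyW⟩ hyx
    have hlt : ptRank t y < ptRank t x := (hiso y hyU₀).resolve_left hyx
    exact hprop _ hlt hyW
  have hb : ∀ x, ∀ η < L lam (ptRank t x), ∀ U, (IcardTop L t lam).IsOpen U → x ∈ U →
      ∃ y ∈ U, y ≠ x ∧ η ≤ L lam (ptRank t y) := by
    intro x η hη O hO hxO
    obtain ⟨U, W, hU, hxU, hlvl, hxsat, hsub⟩ := IcardAux.icard_nbhd L t lam hO x hxO
    obtain ⟨μ, hμρ, hμsat, hμval⟩ :=
      (IcardAux.Oprop_all hL lam (ptRank t x)).2 W hlvl hxsat η hη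
    obtain ⟨y, hyU, hyx, hyrank⟩ := IcardAux.exact_rank_points hscat x hU hxU hμρ
    refine ⟨y, hsub ⟨hyU, ?_⟩, hyx, ?_⟩
    · show IcardAux.WSat L W (ptRank t y)
      rw [hyrank]
      exact hμsat
    · rw [hyrank, hμval]
  exact IcardAux.rank_criterion ha hb

end
end

section
/- For any scattered space (X, τ) and any ordinals λ and μ, the topologies satisfy (τ_λ)_μ = τ_{λ+μ}: the μ-th Icard topology based on (X, τ_λ) equals the (λ+μ)-th Icard topology based on (X, τ). -/
open Ordinal Set

noncomputable section

universe u

namespace AFD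

/-! ### Initial functions -/

lemma initial_id : IsInitialFun (id : Ordinal.{u} → Ordinal.{u}) :=
  fun o => ⟨o, Set.image_id _⟩

lemma initial_comp {f g : Ordinal.{u} → Ordinal.{u}} (hf : IsInitialFun f)
    (hg : IsInitialFun g) : IsInitialFun (f ∘ g) := by
  intro o
  obtain ⟨o', ho'⟩ := hg o
  obtain ⟨o'', ho''⟩ := hf o'
  exact ⟨o'', by rw [Set.image_comp, ho', ho'']⟩

lemma initial_le_self {f : Ordinal.{u} → Ordinal.{u}} (hf : IsInitialFun f)
    (x : Ordinal.{u}) : f x ≤ x := by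
  induction x using Ordinal.induction with
  | h x IH =>
    obtain ⟨o', ho'⟩ := hf (x + 1)
    have hfx : f x < o' := by
      rw [← Set.mem_Iio, ← ho']
      exact ⟨x, by simp [Order.lt_succ_iff], rfl⟩
    by_contra h
    push_neg at h
    have hx : x ∈ Set.Iio o' := lt_trans h hfx
    rw [← ho'] at hx
    obtain ⟨y, hy, hyx⟩ := hx
    have hy' : y ≤ x := by
      simpa [Order.lt_succ_iff] using hy
    rcases lt_or_eq_of_le hy' with h2 | rfl
    · exact absurd hyx (ne_of_lt (lt_of_le_of_lt (IH y h2) h2))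
    · exact absurd hyx (ne_of_gt h)

lemma initial_zero {f : Ordinal.{u} → Ordinal.{u}} (hf : IsInitialFun f) : f 0 = 0 :=
  le_antisymm (initial_le_self hf 0) ((zero_le (a := _)))

lemma initial_preimage {f : Ordinal.{u} → Ordinal.{u}} (hf : IsInitialFun f)
    {β v : Ordinal.{u}} (h : v < f β) : ∃ r < β, f r = v := by
  obtain ⟨o', ho'⟩ := hf (β + 1)
  have h1 : f β ∈ Set.Iio o' := by
    rw [← ho']
    exact ⟨β, by simp [Order.lt_succ_iff], rfl⟩
  have h2 : v ∈ Set.Iio o' := lt_trans h h1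
  rw [← ho'] at h2
  obtain ⟨r, hr, hrv⟩ := h2
  have hr' : r ≤ β := by simpa [Order.lt_succ_iff] using hr
  rcases lt_or_eq_of_le hr' with h3 | rfl
  · exact ⟨r, h3, hrv⟩
  · exact absurd hrv (ne_of_gt h)

/-! ### End-logarithm lemmas -/

lemma exists_add_opow {β : Ordinal.{u}} (hβ : β ≠ 0) :
    ∃ a b : Ordinal.{u}, β = a + ω ^ b := by
  induction β using Ordinal.induction with
  | h β IH =>
    have hb1 : (ω : Ordinal.{u}) ^ Ordinal.log ω β ≤ β := Ordinal.opow_log_le_self ω hβ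
    have hb2 : β < ω ^ (Ordinal.log ω β) * ω := by
      have h := Ordinal.lt_opow_succ_log_self one_lt_omega0 β
      rwa [Ordinal.opow_succ] at h
    set b := Ordinal.log ω β with hbdef
    have hpow0 : (ω : Ordinal.{u}) ^ b ≠ 0 := (Ordinal.opow_pos b omega0_pos).ne'
    have hq : β / ω ^ b < ω := (Ordinal.div_lt hpow0).2 hb2
    obtain ⟨n, hn⟩ := Ordinal.lt_omega0.1 hq
    have hq1 : 1 ≤ β / ω ^ b := by
      rw [Ordinal.le_div hpow0, mul_one]; exact hb1
    have hmod : β % ω ^ b < ω ^ b := Ordinal.mod_lt β hpow0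
    have hsum : ω ^ b * (β / ω ^ b) + β % ω ^ b = β := Ordinal.div_add_mod β (ω ^ b)
    by_cases hr : β % ω ^ b = 0
    · have hn0 : n ≠ 0 := by
        rintro rfl
        rw [hn] at hq1
        simp at hq1
      obtain ⟨m, rfl⟩ := Nat.exists_eq_succ_of_ne_zero hn0
      have hβeq : β = ω ^ b * m + ω ^ b := by
        conv_lhs => rw [← hsum]
        rw [hr, add_zero, hn]
        push_cast
        rw [mul_add, mul_one]
      exact ⟨ω ^ b * m, b, hβeq⟩
    · obtain ⟨a', b', h'⟩ := IH (β % ω ^ b) (lt_of_lt_of_le hmod hb1) hr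
      refine ⟨ω ^ b * (β / ω ^ b) + a', b', ?_⟩
      conv_lhs => rw [← hsum]
      rw [h', add_assoc]

lemma add_opow_le {β a c : Ordinal.{u}} (h : β = a + ω ^ c) {γ : Ordinal.{u}}
    (hγ : γ < β) : γ + ω ^ c ≤ β := by
  rcases le_or_gt γ a with h1 | h1
  · rw [h]; exact add_le_add_left h1 _
  · have hγa : γ = a + (γ - a) := (Ordinal.add_sub_cancel_of_le h1.le).symm
    have hδ : γ - a < ω ^ c := by
      have h2 : a + (γ - a) < a + ω ^ c := by rw [← hγa, ← h]; exact hγ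
      exact (add_lt_add_iff_left a).1 h2
    refine le_of_eq ?_
    calc γ + ω ^ c = a + ((γ - a) + ω ^ c) := by rw [← add_assoc, ← hγa]
      _ = a + ω ^ c := by rw [Ordinal.add_omega0_opow hδ]
      _ = β := h.symm

lemma add_opow_right_inj {β a₁ c₁ a₂ c₂ : Ordinal.{u}} (h₁ : β = a₁ + ω ^ c₁)
    (h₂ : β = a₂ + ω ^ c₂) : c₁ = c₂ := by
  have key : ∀ {a c a' c' : Ordinal.{u}}, β = a + ω ^ c → β = a' + ω ^ c' → c' ≤ c := by
    intro a c a' c' h h'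
    have hlt : a < β := by
      rw [h]
      exact lt_add_of_pos_right a (Ordinal.opow_pos c omega0_pos)
    have h2 : a + ω ^ c' ≤ a + ω ^ c := h ▸ add_opow_le h' hlt
    exact (Ordinal.opow_le_opow_iff_right one_lt_omega0).1 (le_of_add_le_add_left h2)
  exact le_antisymm (key h₂ h₁) (key h₁ h₂)

lemma ellFun_zero : ellFun (0 : Ordinal.{u}) = 0 := if_pos rfl

lemma ellFun_eq_of {β a b : Ordinal.{u}} (h : β = a + ω ^ b) : ellFun β = b := by
  have hβ : β ≠ 0 := by
    rw [h]
    exact (lt_of_lt_of_le (Ordinal.opow_pos b omega0_pos) ((le_add_self (a := _) (b := a)))).ne'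
  rw [ellFun, if_neg hβ]
  refine le_antisymm (csInf_le' ⟨a, h⟩) (le_csInf ⟨b, a, h⟩ ?_)
  rintro b' ⟨a', h'⟩
  rw [add_opow_right_inj h h']

lemma exists_ellFun_rep {β : Ordinal.{u}} (hβ : β ≠ 0) : ∃ a, β = a + ω ^ ellFun β := by
  obtain ⟨a, b, h⟩ := exists_add_opow hβ
  exact ⟨a, by rw [ellFun_eq_of h]; exact h⟩

lemma ellFun_lt_of_between {β a : Ordinal.{u}} (h : β = a + ω ^ ellFun β)
    {w : Ordinal.{u}} (h1 : a < w) (h2 : w < β) : ellFun w < ellFun β := by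
  set δ := w - a with hδdef
  have hw : w = a + δ := (Ordinal.add_sub_cancel_of_le h1.le).symm
  have hδ0 : δ ≠ 0 := by
    intro h0
    rw [h0, add_zero] at hw
    exact absurd hw.symm h1.ne
  have hδlt : δ < ω ^ ellFun β := by
    have h3 : a + δ < a + ω ^ ellFun β := by rw [← hw, ← h]; exact h2
    exact (add_lt_add_iff_left a).1 h3
  obtain ⟨c, hc⟩ := exists_ellFun_rep hδ0
  have hwrep : w = (a + c) + ω ^ ellFun δ := by rw [add_assoc, ← hc]; exact hw
  rw [ellFun_eq_of hwrep]
  have h4 : ω ^ ellFun δ ≤ δ := by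
    conv_rhs => rw [hc]
    exact (le_add_self (a := _) (b := c))
  exact (Ordinal.opow_lt_opow_iff_right one_lt_omega0).1 (lt_of_le_of_lt h4 hδlt)

lemma add_opow_lt {B a v : Ordinal.{u}} (haB : a < B) (hv : v < ellFun B) :
    a + ω ^ v < B := by
  have hB0 : B ≠ 0 := by
    rintro rfl
    rw [ellFun_zero] at hv
    exact (not_lt_zero (a := v)) hv
  obtain ⟨c, hc⟩ := exists_ellFun_rep hB0
  rcases le_or_gt a c with h1 | h1
  · calc a + ω ^ v ≤ c + ω ^ v := add_le_add_left h1 _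
      _ < c + ω ^ ellFun B :=
        add_lt_add_right ((Ordinal.opow_lt_opow_iff_right one_lt_omega0).2 hv) c
      _ = B := hc.symm
  · have ha : a = c + (a - c) := (Ordinal.add_sub_cancel_of_le h1.le).symm
    have hδ : a - c < ω ^ ellFun B := by
      have h2 : c + (a - c) < c + ω ^ ellFun B := by rw [← ha, ← hc]; exact haB
      exact (add_lt_add_iff_left c).1 h2
    have h3 : (a - c) + ω ^ v < ω ^ ellFun B :=
      Ordinal.principal_add_omega0_opow _ hδ
        ((Ordinal.opow_lt_opow_iff_right one_lt_omega0).2 hv)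
    calc a + ω ^ v = c + ((a - c) + ω ^ v) := by rw [← add_assoc, ← ha]
      _ < c + ω ^ ellFun B := add_lt_add_right h3 c
      _ = B := hc.symm

/-! ### Basic consequences of the hyperlogarithm family axioms -/

variable {L : Ordinal.{u} → Ordinal.{u} → Ordinal.{u}}

lemma hyperlog_defl (hL : IsHyperlogFamily L) (a b : Ordinal.{u}) : L a b ≤ b :=
  initial_le_self (hL.1 a) b

lemma hyperlog_zero (hL : IsHyperlogFamily L) : L 0 = id := by
  set M : Ordinal.{u} → Ordinal.{u} → Ordinal.{u} :=
    fun a => if a = 0 then id else L a with hM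
  have hMinit : ∀ a, IsInitialFun (M a) := by
    intro a
    by_cases h : a = 0 <;> simp only [hM, h, if_pos, if_neg, if_true, if_false]
    · exact initial_id
    · exact hL.1 a
  have hM1 : M 1 = ellFun := by
    simp only [hM, if_neg (one_ne_zero : (1 : Ordinal.{u}) ≠ 0)]
    exact hL.2.1
  have hMadd : ∀ a b, M (a + b) = M b ∘ M a := by
    intro a b
    by_cases ha : a = 0
    · subst ha
      simp [hM]
    · by_cases hb : b = 0
      · subst hb
        simp [hM, ha]
      · have hab : a + b ≠ 0 := fun h => ha (by simpa using nonpos_iff_eq_zero.1 (h ▸ (le_self_add (a := a) (b := b))))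
        simp only [hM, if_neg ha, if_neg hb, if_neg hab]
        exact hL.2.2.1 a b
  funext b
  have h1 : M 0 b ≤ L 0 b := hL.2.2.2 M hMinit hM1 hMadd 0 b
  have h2 : b ≤ L 0 b := by simpa [hM] using h1
  exact le_antisymm (initial_le_self (hL.1 0) b) h2

lemma hyperlog_sub (hL : IsHyperlogFamily L) {a c : Ordinal.{u}} (h : a ≤ c)
    (b : Ordinal.{u}) : L c b = L (c - a) (L a b) := by
  have h1 := hL.2.2.1 a (c - a)
  rw [Ordinal.add_sub_cancel_of_le h] at h1
  exact congrFun h1 b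

lemma hyperlog_anti (hL : IsHyperlogFamily L) {a c : Ordinal.{u}} (h : a ≤ c)
    (b : Ordinal.{u}) : L c b ≤ L a b := by
  rw [hyperlog_sub hL h b]
  exact initial_le_self (hL.1 _) _

lemma hyperlog_stab (hL : IsHyperlogFamily L) {lam : Ordinal.{u}} (h0 : 0 < lam)
    (β : Ordinal.{u}) : ∃ ξ₀, ξ₀ < lam ∧ ∀ ζ, ξ₀ ≤ ζ → ζ < lam → L ζ β = L ξ₀ β := by
  have hS : {o : Ordinal.{u} | ∃ ξ < lam, L ξ β = o}.Nonempty := ⟨L 0 β, 0, h0, rfl⟩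
  obtain ⟨ξ₀, hξ₀, hB⟩ := csInf_mem hS
  refine ⟨ξ₀, hξ₀, fun ζ h1 h2 => le_antisymm (hyperlog_anti hL h1 β) ?_⟩
  rw [hB]
  exact csInf_le' ⟨ζ, h2, rfl⟩

lemma initial_const_zero : IsInitialFun (fun _ => (0 : Ordinal.{u})) := by
  intro o
  rcases eq_or_lt_of_le ((zero_le (a := o))) with h | h
  · refine ⟨0, ?_⟩
    have he : Set.Iio o = (∅ : Set Ordinal.{u}) := by
      ext x
      simp only [Set.mem_Iio, Set.mem_empty_iff_false, iff_false, ← h]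
      exact (not_lt_zero (a := x))
    rw [he, Set.image_empty]
    ext x
    simp only [Set.mem_empty_iff_false, Set.mem_Iio, false_iff]
    exact (not_lt_zero (a := x))
  · refine ⟨1, ?_⟩
    ext u
    constructor
    · rintro ⟨w, _, rfl⟩
      exact Set.mem_Iio.2 zero_lt_one
    · intro hu
      exact ⟨0, h, (Ordinal.lt_one_iff_zero.1 hu).symm⟩

lemma initial_iterate {g : Ordinal.{u} → Ordinal.{u}} (hg : IsInitialFun g) :
    ∀ n : ℕ, IsInitialFun (g^[n]) := by
  intro n
  induction n with
  | zero => exact initial_id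
  | succ n ih => rw [Function.iterate_succ]; exact initial_comp ih hg

/-- The key isolation property at an additively indecomposable ordinal `lam`:
if `B` is fixed by all smaller hyperlogarithms, then `L lam` takes strictly smaller
values strictly below `B`. -/
lemma hyperlog_iso_plus (hL : IsHyperlogFamily L) {lam : Ordinal.{u}} (hlam1 : 1 < lam)
    (hind : ∀ s, s < lam → s + lam = lam) {B : Ordinal.{u}}
    (hfix : ∀ c, c < lam → L c B = B) : ∀ w, w < B → L lam w < L lam B := by
  by_contra hcon
  push_neg at hcon
  obtain ⟨w₀, hw₀B, hw₀⟩ := hcon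
  classical
  set η := L lam B with hη
  have hlam0 : (0 : Ordinal.{u}) < lam := lt_trans zero_lt_one hlam1
  have hB0 : (0 : Ordinal.{u}) < B := lt_of_le_of_lt ((zero_le (a := w₀))) hw₀B
  set F : Set Ordinal.{u} := {w | ∃ ξ, ξ < lam ∧ L ξ w = B} with hF
  have hBF : B ∈ F := ⟨0, hlam0, by rw [hyperlog_zero hL]; rfl⟩
  have hFge : ∀ w ∈ F, B ≤ w := by
    rintro w ⟨ξ, hξ, hw⟩
    exact hw ▸ hyperlog_defl hL ξ w
  have habs : ∀ c, c < lam → L lam ∘ L c = L lam := by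
    intro c hc
    have h1 := hL.2.2.1 c lam
    rw [hind c hc] at h1
    exact h1.symm
  have hFiff : ∀ c, c < lam → ∀ w, (L c w ∈ F ↔ w ∈ F) := by
    intro c hc w
    constructor
    · rintro ⟨ξ, hξ, h⟩
      refine ⟨c + ξ, ?_, ?_⟩
      · calc c + ξ < c + lam := add_lt_add_right hξ c
          _ = lam := hind c hc
      · rw [hL.2.2.1 c ξ]; exact h
    · rintro ⟨ξ, hξ, h⟩
      rcases le_or_gt c ξ with h1 | h1
      · refine ⟨ξ - c, lt_of_le_of_lt (Ordinal.sub_le.2 ((le_add_self (a := ξ) (b := c)))) hξ, ?_⟩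
        rw [← hyperlog_sub hL h1 w]; exact h
      · refine ⟨0, hlam0, ?_⟩
        rw [hyperlog_zero hL]
        show L c w = B
        rw [hyperlog_sub hL h1.le w, h]
        exact hfix (c - ξ) (lt_of_le_of_lt (Ordinal.sub_le.2 ((le_add_self (a := c) (b := ξ)))) hc)
  set g : Ordinal.{u} → Ordinal.{u} := fun w => if w ∈ F then η + 1 else L lam w with hg
  have hgF : ∀ w ∈ F, g w = η + 1 := fun w hw => if_pos hw
  have hgnF : ∀ w, w ∉ F → g w = L lam w := fun w hw => if_neg hw
  have hFval : ∀ w ∈ F, L lam w = η := by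
    rintro w ⟨ξ, hξ, hwB⟩
    rw [hη, ← hwB]
    exact (congrFun (habs ξ hξ) w).symm
  have hgLc : ∀ c, c < lam → ∀ w, g (L c w) = g w := by
    intro c hc w
    by_cases hw : w ∈ F
    · rw [hgF _ ((hFiff c hc w).2 hw), hgF _ hw]
    · rw [hgnF _ (fun h => hw ((hFiff c hc w).1 h)), hgnF _ hw]
      exact congrFun (habs c hc) w
  have hg0 : g 0 = 0 := by
    have h0F : (0 : Ordinal.{u}) ∉ F := fun h => absurd (hFge 0 h) (not_le.2 hB0)
    rw [hgnF _ h0F]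
    exact le_antisymm (hyperlog_defl hL lam 0) ((zero_le (a := _)))
  have hη_att : ∃ w₁, w₁ < B ∧ L lam w₁ = η := by
    rcases eq_or_lt_of_le hw₀ with h | h
    · exact ⟨w₀, hw₀B, h.symm⟩
    · obtain ⟨r, hr, hrv⟩ := initial_preimage (hL.1 lam) h
      exact ⟨r, lt_trans hr hw₀B, hrv⟩
  have hg_init : IsInitialFun g := by
    intro o
    rcases le_or_gt o B with ho | ho
    · obtain ⟨o', ho'⟩ := hL.1 lam o
      refine ⟨o', ?_⟩
      rw [← ho']
      apply Set.image_congr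
      intro w hw
      exact hgnF w fun hwF => absurd (lt_of_lt_of_le hw ho) (not_lt.2 (hFge w hwF))
    · obtain ⟨P, hP⟩ := hL.1 lam o
      have hηP : η < P := by
        have h1 : L lam w₀ ∈ Set.Iio P := hP ▸ ⟨w₀, lt_trans hw₀B ho, rfl⟩
        exact lt_of_le_of_lt hw₀ h1
      obtain ⟨w₁, hw₁B, hw₁⟩ := hη_att
      have hw₁F : w₁ ∉ F := fun h => absurd (hFge _ h) (not_le.2 hw₁B)
      have himg : g '' Set.Iio o = Set.Iio P ∪ {η + 1} := by
        apply Set.Subset.antisymm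
        · rintro _ ⟨w, hw, rfl⟩
          by_cases hwF : w ∈ F
          · rw [hgF _ hwF]; exact Or.inr rfl
          · rw [hgnF _ hwF]; exact Or.inl (hP ▸ ⟨w, hw, rfl⟩)
        · rintro u (hu | hu)
          · rw [← hP] at hu
            obtain ⟨w, hw, rfl⟩ := hu
            by_cases hwF : w ∈ F
            · refine ⟨w₁, lt_trans hw₁B ho, ?_⟩
              rw [hgnF _ hw₁F, hw₁, ← hFval w hwF]
            · exact ⟨w, hw, hgnF _ hwF⟩
          · rw [Set.mem_singleton_iff] at hu
            exact ⟨B, ho, by rw [hgF _ hBF, hu]⟩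
      have hsucc : η + 1 ≤ P := by
        rw [Ordinal.add_one_eq_succ]
        exact Order.succ_le_of_lt hηP
      rcases lt_or_eq_of_le hsucc with h1 | h1
      · refine ⟨P, ?_⟩
        rw [himg]
        exact Set.union_eq_self_of_subset_right (Set.singleton_subset_iff.2 h1)
      · refine ⟨P + 1, ?_⟩
        rw [himg, h1]
        ext u
        simp only [Set.mem_union, Set.mem_Iio, Set.mem_singleton_iff]
        constructor
        · rintro (h2 | h2)
          · exact lt_trans h2 (lt_add_of_pos_right P zero_lt_one)
          · rw [h2]; exact lt_add_of_pos_right P zero_lt_one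
        · intro h2
          rcases lt_or_eq_of_le (by rwa [Ordinal.add_one_eq_succ, Order.lt_succ_iff] at h2) with
            h3 | h3
          · exact Or.inl h3
          · exact Or.inr h3
  -- iterates of `g` kill everything below `lam`
  have hgiter : ∀ (k : ℕ) (c), c < lam → ∀ w, g^[k + 1] (L c w) = g^[k + 1] w := by
    intro k c hc w
    rw [Function.iterate_succ_apply, Function.iterate_succ_apply, hgLc c hc w]
  have hg0n : ∀ k : ℕ, g^[k] (0 : Ordinal.{u}) = 0 := by
    intro k
    induction k with
    | zero => rfl
    | succ k ih => rw [Function.iterate_succ_apply', ih, hg0]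
  -- a natural-number extractor
  set natOf : Ordinal.{u} → ℕ := fun q =>
    if h : q < ω then Classical.choose (Ordinal.lt_omega0.1 h) else 0 with hnatOf
  have hnatOf_cast : ∀ n : ℕ, natOf (n : Ordinal.{u}) = n := by
    intro n
    have hlt : (n : Ordinal.{u}) < ω := Ordinal.nat_lt_omega0 n
    rw [hnatOf]
    simp only [dif_pos hlt]
    have hspec := Classical.choose_spec (Ordinal.lt_omega0.1 hlt)
    exact (Nat.cast_inj.1 hspec).symm
  -- the bumped family
  set M : Ordinal.{u} → Ordinal.{u} → Ordinal.{u} := fun a b =>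
    if a < lam * ω then L (a % lam) (g^[natOf (a / lam)] b) else 0 with hM
  have hMrep : ∀ (n : ℕ) (s : Ordinal.{u}), s < lam →
      M (lam * n + s) = fun b => L s (g^[n] b) := by
    intro n s hs
    have hlt : lam * (n : Ordinal.{u}) + s < lam * ω := by
      have h1 : lam * (n : Ordinal.{u}) + s < lam * n + lam := add_lt_add_right hs _
      have h2 : lam * (n : Ordinal.{u}) + lam = lam * ((n : Ordinal.{u}) + 1) := by
        rw [mul_add, mul_one]
      have h3 : ((n : Ordinal.{u}) + 1) ≤ ω := by
        rw [← Nat.cast_one, ← Nat.cast_add]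
        exact (Ordinal.nat_lt_omega0 (n + 1)).le
      calc lam * (n : Ordinal.{u}) + s < lam * ((n : Ordinal.{u}) + 1) := h2 ▸ h1
        _ ≤ lam * ω := mul_le_mul_right h3 lam
    have hdiv : (lam * (n : Ordinal.{u}) + s) / lam = (n : Ordinal.{u}) := by
      rw [Ordinal.mul_add_div n hlam0.ne', Ordinal.div_eq_zero_of_lt hs, add_zero]
    have hmod : (lam * (n : Ordinal.{u}) + s) % lam = s := by
      rw [Ordinal.mul_add_mod_self, Ordinal.mod_eq_of_lt hs]
    funext b
    rw [hM]
    simp only [if_pos hlt]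
    rw [hdiv, hmod, hnatOf_cast]
  have hdecomp : ∀ a, a < lam * ω → ∃ (n : ℕ) (s : Ordinal.{u}), s < lam ∧
      a = lam * n + s := by
    intro a ha
    have h1 : a / lam < ω := (Ordinal.div_lt hlam0.ne').2 ha
    obtain ⟨n, hn⟩ := Ordinal.lt_omega0.1 h1
    refine ⟨n, a % lam, Ordinal.mod_lt a hlam0.ne', ?_⟩
    rw [← hn, Ordinal.div_add_mod]
  have hMlt : ∀ a, a < lam → M a = L a := by
    intro a ha
    have h := hMrep 0 a ha
    simpa using h
  have hMlam : M lam = g := by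
    have h := hMrep 1 0 hlam0
    simp only [Nat.cast_one, mul_one, add_zero] at h
    rw [h]
    funext b
    rw [Function.iterate_one, hyperlog_zero hL]
    rfl
  have hM1 : M 1 = ellFun := by rw [hMlt 1 hlam1]; exact hL.2.1
  have hMinit : ∀ a, IsInitialFun (M a) := by
    intro a
    by_cases ha : a < lam * ω
    · obtain ⟨n, s, hs, rfl⟩ := hdecomp a ha
      rw [hMrep n s hs]
      exact initial_comp (hL.1 s) (initial_iterate hg_init n)
    · have : M a = fun _ => (0 : Ordinal.{u}) := by
        funext b
        rw [hM]
        simp [if_neg ha]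
      rw [this]
      exact initial_const_zero
  have hMadd : ∀ a b, M (a + b) = M b ∘ M a := by
    intro a b
    by_cases hb : b < lam * ω
    · by_cases ha : a < lam * ω
      · obtain ⟨n, s, hs, rfl⟩ := hdecomp a ha
        obtain ⟨m, u, hu, rfl⟩ := hdecomp b hb
        cases m with
        | zero =>
          have hb' : lam * ((0 : ℕ) : Ordinal.{u}) + u = u := by simp
          have hsu : s + u < lam := by
            calc s + u < s + lam := add_lt_add_right hu s
              _ = lam := hind s hs
          have hsum : lam * (n : Ordinal.{u}) + s + (lam * ((0 : ℕ) : Ordinal.{u}) + u)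
              = lam * n + (s + u) := by
            rw [hb', add_assoc]
          rw [hsum, hMrep n (s + u) hsu, hb', hMlt u hu, hMrep n s hs]
          funext w
          show L (s + u) (g^[n] w) = L u (L s (g^[n] w))
          rw [hL.2.2.1 s u]
          rfl
        | succ m' =>
          have hcast : ((m' + 1 : ℕ) : Ordinal.{u}) = (m' : Ordinal.{u}) + 1 := by push_cast; rfl
          have h1m : (1 : Ordinal.{u}) + (m' : Ordinal.{u}) = ((m' : Ordinal.{u}) + 1) := by
            exact_mod_cast congrArg (Nat.cast : ℕ → Ordinal.{u}) (Nat.add_comm 1 m')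
          have hslam : s + lam * ((m' + 1 : ℕ) : Ordinal.{u}) = lam * ((m' + 1 : ℕ)) := by
            have e1 : lam * ((m' + 1 : ℕ) : Ordinal.{u}) = lam + lam * (m' : Ordinal.{u}) := by
              rw [hcast, ← h1m, mul_add, mul_one]
            rw [e1, ← add_assoc, hind s hs]
          have hsum : lam * (n : Ordinal.{u}) + s + (lam * ((m' + 1 : ℕ) : Ordinal.{u}) + u)
              = lam * ((n + (m' + 1) : ℕ) : Ordinal.{u}) + u := by
            rw [← add_assoc, add_assoc (lam * (n : Ordinal.{u})) s, hslam, ← mul_add,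
              ← Nat.cast_add]
          rw [hsum, hMrep (n + (m' + 1)) u hu, hMrep (m' + 1) u hu, hMrep n s hs]
          funext w
          show L u (g^[n + (m' + 1)] w) = L u (g^[m' + 1] (L s (g^[n] w)))
          rw [hgiter m' s hs, add_comm n (m' + 1), Function.iterate_add_apply]
      · have hab : ¬ (a + b < lam * ω) := fun h => ha (lt_of_le_of_lt ((le_self_add (a := a) (b := b))) h)
        obtain ⟨m, u, hu, rfl⟩ := hdecomp b hb
        have hMa : M a = fun _ => (0 : Ordinal.{u}) := by
          funext w
          rw [hM]; simp [if_neg ha]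
        have hMb0 : M (lam * (m : Ordinal.{u}) + u) 0 = 0 := by
          rw [hMrep m u hu]
          show L u (g^[m] 0) = 0
          rw [hg0n m]
          exact le_antisymm (hyperlog_defl hL u 0) ((zero_le (a := _)))
        funext w
        show M (a + (lam * (m : Ordinal.{u}) + u)) w = M (lam * m + u) (M a w)
        rw [hMa]
        show M (a + (lam * (m : Ordinal.{u}) + u)) w = M (lam * m + u) 0
        rw [hMb0, hM]
        simp [if_neg hab]
    · have hab : ¬ (a + b < lam * ω) := fun h => hb (lt_of_le_of_lt ((le_add_self (a := b) (b := a))) h)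
      funext w
      show M (a + b) w = M b (M a w)
      rw [hM]
      simp only [if_neg hab, if_neg hb]
  have hfinal := hL.2.2.2 M hMinit hM1 hMadd lam B
  rw [hMlam, hgF B hBF] at hfinal
  exact absurd hfinal (not_le.2 (lt_add_of_pos_right η zero_lt_one))

/-! ### Constraint systems -/

/-- A rank-interval constraint: a level, an optional strict lower bound, an upper bound. -/
abbrev Con : Type (u + 1) := Ordinal.{u} × Option Ordinal.{u} × Ordinal.{u}

/-- The constraint body, evaluated on a value `w`. -/
def conOK (p : Option Ordinal.{u} × Ordinal.{u}) (w : Ordinal.{u}) : Prop :=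
  (match p.1 with | none => True | some a => a < w) ∧ w ≤ p.2

/-- A constraint holds of an ordinal `v` (thought of as a rank). -/
def conHolds (L : Ordinal.{u} → Ordinal.{u} → Ordinal.{u}) (c : Con.{u})
    (v : Ordinal.{u}) : Prop :=
  conOK c.2 (L c.1 v)

lemma indecomp_or_decomp {lam : Ordinal.{u}} (h1 : 1 < lam) :
    (∀ s, s < lam → s + lam = lam) ∨
      ∃ l1 l2 : Ordinal.{u}, 0 < l1 ∧ l1 < lam ∧ 0 < l2 ∧ l2 < lam ∧ lam = l1 + l2 := by
  by_cases h : ∃ s, 0 < s ∧ s < lam ∧ s + lam ≠ lam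
  · obtain ⟨s, hs0, hslam, hne⟩ := h
    have heq : s + (lam - s) = lam := Ordinal.add_sub_cancel_of_le hslam.le
    have h2 : 0 < lam - s := by
      rcases eq_or_lt_of_le ((zero_le (a := (lam - s)))) with h0 | h0
      · rw [← h0, add_zero] at heq
        exact absurd heq hslam.ne
      · exact h0
    have h3 : lam - s < lam := by
      rcases lt_or_eq_of_le (le_of_le_of_eq ((le_add_self (a := (lam - s)) (b := s))) heq) with h0 | h0
      · exact h0
      · rw [h0] at heq
        exact absurd heq hne
    exact Or.inr ⟨s, lam - s, hs0, hslam, h2, h3, heq.symm⟩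
  · push_neg at h
    refine Or.inl fun s hs => ?_
    rcases eq_or_lt_of_le ((zero_le (a := s))) with h0 | h0
    · rw [← h0, zero_add]
    · exact h s h0 hs

lemma succ_lt_of_indecomp {lam : Ordinal.{u}} (h1 : 1 < lam)
    (hind : ∀ s, s < lam → s + lam = lam) {x : Ordinal.{u}} (hx : x < lam) :
    x + 1 < lam := by
  have hle : x + 1 ≤ lam := by
    rw [Ordinal.add_one_eq_succ]
    exact Order.succ_le_of_lt hx
  rcases lt_or_eq_of_le hle with h | h
  · exact h
  · exfalso
    rcases eq_or_lt_of_le ((zero_le (a := x))) with h0 | h0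
    · rw [← h0, zero_add] at h
      exact absurd (h ▸ h1) (lt_irrefl _)
    · have h2 : x + lam = x + 1 := (hind x hx).trans h.symm
      have h3 : lam = 1 := add_left_cancel_iff.1 h2
      exact absurd (h3 ▸ h1) (lt_irrefl _)

/-- Lower bounds appearing in a constraint. -/
def lbOf (c : Con.{u}) : Ordinal.{u} := match c.2.1 with | none => 0 | some a => a

/-- Maximum of the lower bounds of a list of constraints. -/
def maxLb (cs : List Con.{u}) : Ordinal.{u} := cs.foldr (fun c acc => max (lbOf c) acc) 0

lemma lb_le_maxLb {cs : List Con.{u}} {c : Con.{u}} (h : c ∈ cs) : lbOf c ≤ maxLb cs := by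
  induction cs with
  | nil => cases h
  | cons d ds ih =>
    rcases List.mem_cons.1 h with rfl | h'
    · exact le_max_left _ _
    · exact (ih h').trans (le_max_right _ _)

lemma maxLb_lt {cs : List Con.{u}} {β : Ordinal.{u}} (hβ : 0 < β)
    (h : ∀ c ∈ cs, lbOf c < β) : maxLb cs < β := by
  induction cs with
  | nil => exact hβ
  | cons d ds ih =>
    exact max_lt (h d List.mem_cons_self) (ih fun c hc => h c (List.mem_cons_of_mem d hc))

/-- Maximum of the levels of a list of constraints. -/
def maxLvl (cs : List Con.{u}) : Ordinal.{u} := cs.foldr (fun c acc => max c.1 acc) 0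

lemma lvl_le_maxLvl {cs : List Con.{u}} {c : Con.{u}} (h : c ∈ cs) : c.1 ≤ maxLvl cs := by
  induction cs with
  | nil => cases h
  | cons d ds ih =>
    rcases List.mem_cons.1 h with rfl | h'
    · exact le_max_left _ _
    · exact (ih h').trans (le_max_right _ _)

lemma maxLvl_lt {cs : List Con.{u}} {lam : Ordinal.{u}} (hlam : 0 < lam)
    (h : ∀ c ∈ cs, c.1 < lam) : maxLvl cs < lam := by
  induction cs with
  | nil => exact hlam
  | cons d ds ih =>
    exact max_lt (h d List.mem_cons_self) (ih fun c hc => h c (List.mem_cons_of_mem d hc))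

/-- The realization lemma: below any `β`, every smaller `L lam`-value is attained while
respecting finitely many lower-level interval constraints satisfied at `β`. -/
lemma hyperlog_realize (hL : IsHyperlogFamily L) :
    ∀ lam : Ordinal.{u}, ∀ β : Ordinal.{u}, ∀ cs : List Con.{u},
      (∀ c ∈ cs, c.1 < lam) → (∀ c ∈ cs, conHolds L c β) →
      ∀ v, v < L lam β → ∃ r, r < β ∧ L lam r = v ∧ ∀ c ∈ cs, conHolds L c r := by
  intro lam
  induction lam using Ordinal.induction with
  | h lam IH =>
    intro β cs hlvl holds v hv
    rcases eq_or_lt_of_le ((zero_le (a := lam))) with h0 | h0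
    · rw [← h0, hyperlog_zero hL] at hv
      refine ⟨v, hv, ?_, fun c hc => absurd (hlvl c hc) (by rw [← h0]; exact (not_lt_zero (a := _)))⟩
      rw [← h0, hyperlog_zero hL]
      rfl
    rcases eq_or_lt_of_le (Order.one_le_iff_pos.2 h0) with h1 | h1
    · -- lam = 1
      have hβ0 : (0 : Ordinal.{u}) < β :=
        lt_of_le_of_lt ((zero_le (a := v))) (lt_of_lt_of_le hv (hyperlog_defl hL lam β))
      have hℓ : L lam β = ellFun β := by rw [← h1, hL.2.1]
      have hβne : β ≠ 0 := hβ0.ne'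
      have hA : maxLb cs < β := by
        refine maxLb_lt hβ0 fun c hc => ?_
        have hc0 : c.1 = 0 := by
          have := hlvl c hc
          rw [← h1] at this
          exact Ordinal.lt_one_iff_zero.1 this
        have := holds c hc
        rw [conHolds, hc0, hyperlog_zero hL] at this
        rcases c with ⟨l, o, b⟩
        rcases o with _ | a
        · simpa [lbOf] using hβ0
        · simpa [lbOf] using this.1
      set r := maxLb cs + ω ^ v with hrdef
      have hrβ : r < β := by
        rw [hrdef]
        exact add_opow_lt hA (by rw [← hℓ]; exact hv)
      have hrv : ellFun r = v := ellFun_eq_of rfl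
      refine ⟨r, hrβ, by rw [← h1, hL.2.1]; exact hrv, ?_⟩
      intro c hc
      have hc0 : c.1 = 0 := by
        have := hlvl c hc
        rw [← h1] at this
        exact Ordinal.lt_one_iff_zero.1 this
      have hβc := holds c hc
      rw [conHolds, hc0, hyperlog_zero hL] at hβc ⊢
      constructor
      · rcases c with ⟨l, o, b⟩
        rcases o with _ | a
        · trivial
        · show a < r
          have ha : a ≤ maxLb cs := by
            have : lbOf (l, some a, b) = a := rfl
            exact this ▸ lb_le_maxLb hc
          exact lt_of_le_of_lt ha
            (lt_add_of_pos_right _ (Ordinal.opow_pos v omega0_pos))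
      · exact (le_of_lt hrβ).trans hβc.2
    · rcases indecomp_or_decomp h1 with hind | ⟨l1, l2, hl10, hl1, hl20, hl2, hdec⟩
      · -- additively indecomposable
        have hm : maxLvl cs < lam := maxLvl_lt h0 hlvl
        set ξ₀ := maxLvl cs + 1 with hξ₀def
        have hξ₀ : ξ₀ < lam := succ_lt_of_indecomp h1 hind hm
        have habs : L lam ∘ L ξ₀ = L lam := by
          have h2 := hL.2.2.1 ξ₀ lam
          rw [hind ξ₀ hξ₀] at h2
          exact h2.symm
        have hv' : v < L lam (L ξ₀ β) := lt_of_lt_of_eq hv (congrFun habs β).symm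
        obtain ⟨w, hw, hwv⟩ := initial_preimage (hL.1 lam) hv'
        obtain ⟨r, hrβ, hrw, hcs⟩ := IH ξ₀ hξ₀ β cs
          (fun c hc => lt_of_le_of_lt (lvl_le_maxLvl hc)
            (lt_add_of_pos_right _ zero_lt_one)) holds w hw
        refine ⟨r, hrβ, ?_, hcs⟩
        have e : L lam (L ξ₀ r) = v := by rw [hrw, hwv]
        exact (congrFun habs r).symm.trans e
      · -- decomposable: lam = l1 + l2
        classical
        have hcomp : ∀ x, L lam x = L l2 (L l1 x) := by
          intro x
          rw [hdec, hL.2.2.1 l1 l2]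
          rfl
        set csLo := cs.filter (fun c => decide (c.1 < l1)) with hcsLo
        set csHi := cs.filter (fun c => !decide (c.1 < l1)) with hcsHi
        set cs2 := csHi.map (fun c => ((c.1 - l1 : Ordinal.{u}), c.2)) with hcs2
        have hHi : ∀ c ∈ csHi, l1 ≤ c.1 ∧ c.1 < lam := by
          intro c hc
          rw [hcsHi, List.mem_filter] at hc
          refine ⟨?_, hlvl c hc.1⟩
          have := hc.2
          simp only [Bool.not_eq_true', decide_eq_false_iff_not, not_lt] at this
          exact this
        have hshift : ∀ c ∈ csHi, ∀ x, L (c.1 - l1) (L l1 x) = L c.1 x := by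
          intro c hc x
          exact (hyperlog_sub hL (hHi c hc).1 x).symm
        have side1 : ∀ c2 ∈ cs2, c2.1 < l2 := by
          intro c2 hc2
          rw [hcs2, List.mem_map] at hc2
          obtain ⟨c, hc, rfl⟩ := hc2
          show c.1 - l1 < l2
          have h2 : l1 + (c.1 - l1) = c.1 := Ordinal.add_sub_cancel_of_le (hHi c hc).1
          have h3 : c.1 < l1 + l2 := hdec ▸ (hHi c hc).2
          rw [← h2] at h3
          exact (add_lt_add_iff_left l1).1 h3
        have side2 : ∀ c2 ∈ cs2, conHolds L c2 (L l1 β) := by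
          intro c2 hc2
          rw [hcs2, List.mem_map] at hc2
          obtain ⟨c, hc, rfl⟩ := hc2
          show conOK c.2 (L (c.1 - l1) (L l1 β))
          rw [hshift c hc β]
          exact holds c (List.mem_of_mem_filter hc)
        have side3 : v < L l2 (L l1 β) := by
          rw [← hcomp β]
          exact hv
        obtain ⟨w, hwβ', hwv, hw2⟩ := IH l2 hl2 (L l1 β) cs2 side1 side2 v side3
        have side4 : ∀ c ∈ csLo, c.1 < l1 := by
          intro c hc
          rw [hcsLo, List.mem_filter] at hc
          have := hc.2
          simp only [decide_eq_true_eq] at this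
          exact this
        have side5 : ∀ c ∈ csLo, conHolds L c β := by
          intro c hc
          exact holds c (List.mem_of_mem_filter hc)
        obtain ⟨r, hrβ, hrw, h1s⟩ := IH l1 hl1 β csLo side4 side5 w hwβ'
        refine ⟨r, hrβ, ?_, ?_⟩
        · rw [hcomp r, hrw, hwv]
        · intro c hc
          by_cases hcl : c.1 < l1
          · refine h1s c ?_
            rw [hcsLo, List.mem_filter]
            exact ⟨hc, by simp [hcl]⟩
          · have hcHi : c ∈ csHi := by
              rw [hcsHi, List.mem_filter]
              exact ⟨hc, by simp [hcl]⟩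
            have h2 := hw2 ((c.1 - l1 : Ordinal.{u}), c.2) (by
              rw [hcs2, List.mem_map]
              exact ⟨c, hcHi, rfl⟩)
            show conOK c.2 (L c.1 r)
            have h3 : conOK c.2 (L (c.1 - l1) w) := h2
            rw [← hrw, hshift c hcHi r] at h3
            exact h3

/-- The isolation lemma: each point is separated from larger `L lam`-values by a
single lower-level threshold together with finitely many interval constraints. -/
lemma hyperlog_iso (hL : IsHyperlogFamily L) :
    ∀ lam : Ordinal.{u}, 0 < lam → ∀ β : Ordinal.{u},
      ∃ ξ, ξ < lam ∧ ∃ cs : List Con.{u}, (∀ c ∈ cs, c.1 < lam) ∧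
        (∀ c ∈ cs, conHolds L c β) ∧
        ∀ r, (∀ c ∈ cs, conHolds L c r) → L ξ r < L ξ β → L lam r < L lam β := by
  intro lam
  induction lam using Ordinal.induction with
  | h lam IH =>
    intro hlam0 β
    rcases eq_or_lt_of_le (Order.one_le_iff_pos.2 hlam0) with h1 | h1
    · -- lam = 1
      refine ⟨0, by rw [← h1]; exact zero_lt_one, ?_⟩
      by_cases hβ : β = 0
      · refine ⟨[], by simp, by simp, ?_⟩
        intro r _ hr
        rw [hyperlog_zero hL] at hr
        exact absurd (hβ ▸ hr) ((not_lt_zero (a := r)))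
      · obtain ⟨a, ha⟩ := exists_ellFun_rep hβ
        have haβ : a < β := by
          rw [ha]
          exact lt_add_of_pos_right a (Ordinal.opow_pos _ omega0_pos)
        refine ⟨[(0, some a, β)], ?_, ?_, ?_⟩
        · intro c hc
          rw [List.mem_singleton] at hc
          rw [hc, ← h1]
          exact zero_lt_one
        · intro c hc
          rw [List.mem_singleton] at hc
          rw [hc, conHolds, hyperlog_zero hL]
          exact ⟨haβ, le_rfl⟩
        · intro r hr hrβ
          rw [hyperlog_zero hL] at hrβ
          have hc := hr _ (List.mem_singleton_self _)
          rw [conHolds, hyperlog_zero hL] at hc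
          rw [← h1, hL.2.1]
          exact ellFun_lt_of_between ha hc.1 hrβ
    · rcases indecomp_or_decomp h1 with hind | ⟨l1, l2, hl10, hl1, hl20, hl2, hdec⟩
      · -- additively indecomposable
        obtain ⟨ξ₀, hξ₀, hstab⟩ := hyperlog_stab hL hlam0 β
        set B := L ξ₀ β with hB
        have habs : L lam ∘ L ξ₀ = L lam := by
          have h2 := hL.2.2.1 ξ₀ lam
          rw [hind ξ₀ hξ₀] at h2
          exact h2.symm
        have hfix : ∀ c, c < lam → L c B = B := by
          intro c hc
          have hcl : ξ₀ + c < lam := by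
            calc ξ₀ + c < ξ₀ + lam := add_lt_add_right hc ξ₀
              _ = lam := hind ξ₀ hξ₀
          have h2 : L (ξ₀ + c) β = L ξ₀ β :=
            hstab (ξ₀ + c) ((le_self_add (a := ξ₀) (b := c))) hcl
          have h3 : L (ξ₀ + c) β = L c (L ξ₀ β) := by
            rw [hL.2.2.1 ξ₀ c]
            rfl
          rw [hB, ← h3]
          exact h2
        refine ⟨ξ₀, hξ₀, [(ξ₀, none, B)], ?_, ?_, ?_⟩
        · intro c hc
          rw [List.mem_singleton] at hc
          rw [hc]
          exact hξ₀
        · intro c hc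
          rw [List.mem_singleton] at hc
          rw [hc, conHolds]
          exact ⟨trivial, le_rfl⟩
        · intro r _ hrB
          have h2 : L ξ₀ r < B := hrB
          have h3 := hyperlog_iso_plus hL h1 hind hfix (L ξ₀ r) h2
          exact lt_of_eq_of_lt (congrFun habs r).symm (lt_of_lt_of_eq h3 (congrFun habs β))
      · -- decomposable
        obtain ⟨ξ₂, hξ₂, cs₂, hlvl₂, hold₂, hcond₂⟩ := IH l2 hl2 hl20 (L l1 β)
        have hcomp : ∀ x, L lam x = L l2 (L l1 x) := by
          intro x
          rw [hdec, hL.2.2.1 l1 l2]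
          rfl
        have hcomp' : ∀ (ζ : Ordinal.{u}) (x : Ordinal.{u}), L (l1 + ζ) x = L ζ (L l1 x) := by
          intro ζ x
          rw [hL.2.2.1 l1 ζ]
          rfl
        refine ⟨l1 + ξ₂, ?_, cs₂.map (fun c => ((l1 + c.1 : Ordinal.{u}), c.2)), ?_, ?_, ?_⟩
        · rw [hdec]
          exact add_lt_add_right hξ₂ l1
        · intro c hc
          rw [List.mem_map] at hc
          obtain ⟨c2, hc2, rfl⟩ := hc
          show l1 + c2.1 < lam
          rw [hdec]
          exact add_lt_add_right (hlvl₂ c2 hc2) l1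
        · intro c hc
          rw [List.mem_map] at hc
          obtain ⟨c2, hc2, rfl⟩ := hc
          show conOK c2.2 (L (l1 + c2.1) β)
          rw [hcomp' c2.1 β]
          exact hold₂ c2 hc2
        · intro r hr hrξ
          have hr2 : ∀ c2 ∈ cs₂, conHolds L c2 (L l1 r) := by
            intro c2 hc2
            have := hr ((l1 + c2.1 : Ordinal.{u}), c2.2) (by
              rw [List.mem_map]
              exact ⟨c2, hc2, rfl⟩)
            show conOK c2.2 (L c2.1 (L l1 r))
            rw [← hcomp' c2.1 r]
            exact this
          rw [hcomp' ξ₂ r, hcomp' ξ₂ β] at hrξ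
          have := hcond₂ (L l1 r) hr2 hrξ
          rw [hcomp r, hcomp β]
          exact this

/-! ### Derived sets and ranks -/

section Topo

variable {X : Type u}

lemma dIter_zero (t : TopologicalSpace X) : dIter t 0 = Set.univ :=
  Ordinal.limitRecOn_zero _ _ _

lemma dIter_succ (t : TopologicalSpace X) (o : Ordinal.{u}) :
    dIter t (o + 1) = dSet t (dIter t o) := by
  rw [dIter, Ordinal.add_one_eq_succ, Ordinal.limitRecOn_succ]
  rfl

lemma dIter_limit (t : TopologicalSpace X) {o : Ordinal.{u}} (ho : Order.IsSuccLimit o) :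
    dIter t o = ⋂ (o' : Ordinal.{u}) (_ : o' < o), dIter t o' := by
  rw [dIter, Ordinal.limitRecOn_limit _ _ _ _ ho]
  rfl

lemma dSet_mono (t : TopologicalSpace X) {A B : Set X} (h : A ⊆ B) :
    dSet t A ⊆ dSet t B := by
  intro x hx U hU hxU
  obtain ⟨y, ⟨hyU, hyA⟩, hyx⟩ := hx U hU hxU
  exact ⟨y, ⟨hyU, h hyA⟩, hyx⟩

lemma dSet_dIter_subset (t : TopologicalSpace X) :
    ∀ o : Ordinal.{u}, dSet t (dIter t o) ⊆ dIter t o := by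
  intro o
  induction o using Ordinal.induction with
  | h o IH =>
    rcases Ordinal.zero_or_succ_or_isSuccLimit o with rfl | ⟨a, rfl⟩ | ho
    · rw [dIter_zero]; exact Set.subset_univ _
    · rw [← Ordinal.add_one_eq_succ, dIter_succ]
      exact dSet_mono t (IH a (Order.lt_succ a))
    · intro x hx
      rw [dIter_limit t ho]
      refine Set.mem_iInter₂.2 fun o' ho' => ?_
      refine IH o' ho' (dSet_mono t ?_ hx)
      rw [dIter_limit t ho]
      exact Set.iInter₂_subset o' ho'

lemma dIter_antitone (t : TopologicalSpace X) :
    ∀ {o o' : Ordinal.{u}}, o ≤ o' → dIter t o' ⊆ dIter t o := by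
  intro o o' h
  induction o' using Ordinal.induction with
  | h o' IH =>
    rcases eq_or_lt_of_le h with rfl | hlt
    · exact subset_rfl
    rcases Ordinal.zero_or_succ_or_isSuccLimit o' with rfl | ⟨a, rfl⟩ | ho
    · exact absurd hlt ((not_lt_zero (a := o)))
    · have ha : o ≤ a := Order.lt_succ_iff.1 hlt
      have h1 : dIter t (Order.succ a) ⊆ dIter t a := by
        rw [← Ordinal.add_one_eq_succ, dIter_succ]
        exact dSet_dIter_subset t a
      exact h1.trans (IH a (Order.lt_succ a) ha)
    · rw [dIter_limit t ho]
      exact Set.iInter₂_subset o hlt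

variable {t : TopologicalSpace X}

lemma exists_dIter_empty (hs : IsScattered t) : ∃ ξ : Ordinal.{u}, dIter t ξ = ∅ := by
  by_contra h
  push_neg at h
  by_cases hstab : ∃ ξ : Ordinal.{u}, dIter t (ξ + 1) = dIter t ξ
  · obtain ⟨ξ, hξ⟩ := hstab
    have hD : dSet t (dIter t ξ) = dIter t ξ := by rw [← dIter_succ]; exact hξ
    obtain ⟨x, hx, U, hU, hUx⟩ := hs (dIter t ξ) (h ξ)
    have hxU : x ∈ U := by
      have : x ∈ U ∩ dIter t ξ := by rw [hUx]; exact rfl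
      exact this.1
    have hx' : x ∈ dSet t (dIter t ξ) := hD.symm ▸ hx
    obtain ⟨y, hy, hyx⟩ := hx' U hU hxU
    have : y = x := by
      have : y ∈ ({x} : Set X) := hUx ▸ hy
      exact this
    exact hyx this
  · push_neg at hstab
    have key : ∀ a b : Ordinal.{u}, a < b → dIter t b ≠ dIter t a := by
      intro a b hab heq
      apply hstab a
      refine Set.Subset.antisymm (dIter_antitone t (le_of_lt (lt_add_of_pos_right a zero_lt_one)))
        ?_
      calc dIter t a = dIter t b := heq.symm
        _ ⊆ dIter t (a + 1) := dIter_antitone t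
          (by rw [Ordinal.add_one_eq_succ]; exact Order.succ_le_of_lt hab)
    have hinj : Function.Injective (fun ξ : Ordinal.{u} => dIter t ξ) := by
      intro a b hab
      rcases lt_trichotomy a b with h1 | h1 | h1
      · exact absurd hab.symm (key a b h1)
      · exact h1
      · exact absurd hab (key b a h1)
    exact not_small_ordinal.{u, u} (small_of_injective hinj)

lemma rank_set_nonempty (hs : IsScattered t) (x : X) :
    {ξ : Ordinal.{u} | x ∉ dIter t (ξ + 1)}.Nonempty := by
  obtain ⟨ξ, hξ⟩ := exists_dIter_empty hs
  refine ⟨ξ, fun h => ?_⟩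
  rw [dIter_succ] at h
  have := dSet_dIter_subset t ξ h
  rw [hξ] at this
  exact this

lemma notin_dIter_rank_succ (hs : IsScattered t) (x : X) :
    x ∉ dIter t (ptRank t x + 1) :=
  csInf_mem (rank_set_nonempty hs x)

lemma mem_dIter_iff (hs : IsScattered t) {x : X} {ξ : Ordinal.{u}} :
    x ∈ dIter t ξ ↔ ξ ≤ ptRank t x := by
  constructor
  · intro hx
    by_contra hlt
    push_neg at hlt
    refine notin_dIter_rank_succ hs x (dIter_antitone t ?_ hx)
    rw [Ordinal.add_one_eq_succ]
    exact Order.succ_le_of_lt hlt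
  · intro hξ
    induction ξ using Ordinal.induction with
    | h ξ IH =>
      rcases Ordinal.zero_or_succ_or_isSuccLimit ξ with rfl | ⟨a, rfl⟩ | ho
      · rw [dIter_zero]; trivial
      · have ha : a < ptRank t x := Order.succ_le_iff.1 hξ
        have h2 := notMem_of_lt_csInf' ha
        rw [Set.mem_setOf_eq, not_not] at h2
        rw [← Ordinal.add_one_eq_succ]
        exact h2
      · rw [dIter_limit t ho]
        exact Set.mem_iInter₂.2 fun o' ho' =>
          IH o' ho' (le_of_lt (lt_of_lt_of_le ho' hξ))

lemma exists_isolating (hs : IsScattered t) (x : X) :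
    ∃ U : Set X, t.IsOpen U ∧ x ∈ U ∧ ∀ y ∈ U, ptRank t x ≤ ptRank t y → y = x := by
  have hx : x ∉ dSet t (dIter t (ptRank t x)) := by
    rw [← dIter_succ]
    exact notin_dIter_rank_succ hs x
  rw [dSet, Set.mem_setOf_eq] at hx
  push_neg at hx
  obtain ⟨U, hU, hxU, hU2⟩ := hx
  exact ⟨U, hU, hxU, fun y hyU hrank =>
    hU2 y ⟨hyU, (mem_dIter_iff hs).2 hrank⟩⟩

lemma exists_rank_in_open (hs : IsScattered t) {U : Set X} (hU : t.IsOpen U) {x : X}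
    (hxU : x ∈ U) {r : Ordinal.{u}} (hr : r < ptRank t x) : ∃ y ∈ U, ptRank t y = r := by
  have hx : x ∈ dIter t (r + 1) := (mem_dIter_iff hs).2
    (by rw [Ordinal.add_one_eq_succ]; exact Order.succ_le_of_lt hr)
  rw [dIter_succ] at hx
  obtain ⟨y₀, hy₀, _⟩ := hx U hU hxU
  obtain ⟨z, hz, W, hW, hWz⟩ := hs (U ∩ dIter t r) ⟨y₀, hy₀⟩
  refine ⟨z, hz.1, ?_⟩
  have hzr : r ≤ ptRank t z := (mem_dIter_iff hs).1 hz.2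
  rcases eq_or_lt_of_le hzr with h | h
  · exact h.symm
  · exfalso
    have hz2 : z ∈ dSet t (dIter t r) := by
      have h2 : z ∈ dIter t (r + 1) := (mem_dIter_iff hs).2
        (by rw [Ordinal.add_one_eq_succ]; exact Order.succ_le_of_lt h)
      rwa [dIter_succ] at h2
    have hzW : z ∈ W ∩ (U ∩ dIter t r) := by rw [hWz]; exact rfl
    obtain ⟨w, hw, hwz⟩ := hz2 (U ∩ W) (t.isOpen_inter U W hU hW) ⟨hz.1, hzW.1⟩
    have : w ∈ W ∩ (U ∩ dIter t r) := ⟨hw.1.2, hw.1.1, hw.2⟩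
    rw [hWz] at this
    exact hwz this

lemma scattered_mono {t' : TopologicalSpace X} (h : t' ≤ t) (hs : IsScattered t) :
    IsScattered t' := by
  intro A hA
  obtain ⟨x, hx, U, hU, hUx⟩ := hs A hA
  exact ⟨x, hx, U, TopologicalSpace.le_def.1 h U hU, hUx⟩

end Topo

/-! ### The Icard topology: subbasis and basis lemmas -/

section Icard

variable {X : Type u} {L : Ordinal.{u} → Ordinal.{u} → Ordinal.{u}}
variable {t : TopologicalSpace X} {lam : Ordinal.{u}}

/-- The generating family of the Icard topology. -/
def icardGen (L : Ordinal.{u} → Ordinal.{u} → Ordinal.{u}) (t : TopologicalSpace X)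
    (lam : Ordinal.{u}) : Set (Set X) :=
  {S : Set X | ∃ ξ < lam,
      (∃ b : Ordinal.{u}, S = {x | L ξ (ptRank t x) ≤ b}) ∨
      (∃ a b : Ordinal.{u}, a < b ∧ S = {x | a < L ξ (ptRank t x) ∧ L ξ (ptRank t x) ≤ b})}

lemma icard_def : IcardTop L t lam = t ⊓ TopologicalSpace.generateFrom (icardGen L t lam) :=
  rfl

lemma icard_eq_generateFrom : IcardTop L t lam =
    TopologicalSpace.generateFrom ({U | @IsOpen X t U} ∪ icardGen L t lam) := by
  rw [icard_def, generateFrom_union, TopologicalSpace.generateFrom_setOf_isOpen]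

lemma icard_le_base : IcardTop L t lam ≤ t := inf_le_left

lemma icard_mono {ξ : Ordinal.{u}} (h : ξ ≤ lam) : IcardTop L t lam ≤ IcardTop L t ξ := by
  rw [icard_def, icard_def]
  refine inf_le_inf_left t (TopologicalSpace.generateFrom_anti ?_)
  rintro S ⟨ζ, hζ, hsh⟩
  exact ⟨ζ, lt_of_lt_of_le hζ h, hsh⟩

lemma isOpen_conHolds {c : Con.{u}} (hc : c.1 < lam) :
    (IcardTop L t lam).IsOpen {y | conHolds L c (ptRank t y)} := by
  obtain ⟨ξ, o, b⟩ := c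
  have hgen : ∀ S ∈ icardGen L t lam, (IcardTop L t lam).IsOpen S := by
    intro S hS
    exact TopologicalSpace.le_def.1 inf_le_right S
      (TopologicalSpace.isOpen_generateFrom_of_mem hS)
  rcases o with _ | a
  · refine hgen _ ⟨ξ, hc, Or.inl ⟨b, ?_⟩⟩
    ext y
    exact ⟨fun h => h.2, fun h => ⟨trivial, h⟩⟩
  · rcases lt_or_ge a b with hab | hab
    · refine hgen _ ⟨ξ, hc, Or.inr ⟨a, b, hab, ?_⟩⟩
      ext y
      exact ⟨fun h => ⟨h.1, h.2⟩, fun h => ⟨h.1, h.2⟩⟩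
    · have he : {y | conHolds L (ξ, some a, b) (ptRank t y)} = (∅ : Set X) := by
        ext y
        simp only [Set.mem_empty_iff_false, iff_false]
        rintro ⟨h1, h2⟩
        exact absurd (lt_of_lt_of_le h1 h2) (not_lt.2 hab)
      rw [he]
      have h2 : (IcardTop L t lam).IsOpen (⋃₀ ∅) :=
        (IcardTop L t lam).isOpen_sUnion ∅ (by simp)
      simpa using h2

lemma isOpen_conInter {cs : List Con.{u}} (hcs : ∀ c ∈ cs, c.1 < lam) :
    (IcardTop L t lam).IsOpen {y | ∀ c ∈ cs, conHolds L c (ptRank t y)} := by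
  induction cs with
  | nil =>
    have he : {y : X | ∀ c ∈ ([] : List Con.{u}), conHolds L c (ptRank t y)} = Set.univ := by
      ext y; simp
    rw [he]
    exact (IcardTop L t lam).isOpen_univ
  | cons d ds ih =>
    have he : {y | ∀ c ∈ d :: ds, conHolds L c (ptRank t y)}
        = {y | conHolds L d (ptRank t y)} ∩ {y | ∀ c ∈ ds, conHolds L c (ptRank t y)} := by
      ext y
      simp only [Set.mem_inter_iff, Set.mem_setOf_eq, List.mem_cons]
      constructor
      · intro h
        exact ⟨h d (Or.inl rfl), fun c hc => h c (Or.inr hc)⟩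
      · rintro ⟨h1, h2⟩ c (rfl | hc)
        · exact h1
        · exact h2 c hc
    rw [he]
    exact (IcardTop L t lam).isOpen_inter _ _
      (isOpen_conHolds (hcs d List.mem_cons_self))
      (ih fun c hc => hcs c (List.mem_cons_of_mem d hc))

lemma exists_basic {V : Set X} (hV : (IcardTop L t lam).IsOpen V) {x : X} (hx : x ∈ V) :
    ∃ (U : Set X) (cs : List Con.{u}), t.IsOpen U ∧ x ∈ U ∧ (∀ c ∈ cs, c.1 < lam) ∧
      (∀ c ∈ cs, conHolds L c (ptRank t x)) ∧
      ∀ y, y ∈ U → (∀ c ∈ cs, conHolds L c (ptRank t y)) → y ∈ V := by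
  letI τ := IcardTop L t lam
  have hgen : τ = TopologicalSpace.generateFrom ({U | @IsOpen X t U} ∪ icardGen L t lam) :=
    icard_eq_generateFrom
  have hbasis := TopologicalSpace.isTopologicalBasis_of_subbasis hgen
  obtain ⟨W, hWmem, hxW, hWV⟩ := hbasis.exists_subset_of_mem_open hx hV
  obtain ⟨f, ⟨hffin, hfsub⟩, rfl⟩ := hWmem
  have main : ∀ g : Set (Set X), g.Finite →
      g ⊆ ({U | @IsOpen X t U} ∪ icardGen L t lam) →
      ∃ (U : Set X) (cs : List Con.{u}), t.IsOpen U ∧ (∀ c ∈ cs, c.1 < lam) ∧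
        ⋂₀ g = U ∩ {y | ∀ c ∈ cs, conHolds L c (ptRank t y)} := by
    intro g hg
    refine Set.Finite.induction_on _ hg ?_ ?_
    · intro _
      refine ⟨Set.univ, [], t.isOpen_univ, by simp, ?_⟩
      ext y
      simp
    · intro A s _ _ IH hsub
      obtain ⟨U, cs, hU, hlvl, heq⟩ := IH fun B hB => hsub (Set.mem_insert_of_mem A hB)
      rcases hsub (Set.mem_insert A s) with hAopen | ⟨ξ, hξ, hsh⟩
      · refine ⟨A ∩ U, cs, t.isOpen_inter _ _ hAopen hU, hlvl, ?_⟩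
        rw [Set.sInter_insert, heq, Set.inter_assoc]
      · have main2 : ∀ c : Con.{u}, c.1 < lam →
            A = {y | conHolds L c (ptRank t y)} →
            ∃ (U' : Set X) (cs' : List Con.{u}), t.IsOpen U' ∧ (∀ c' ∈ cs', c'.1 < lam) ∧
              ⋂₀ insert A s = U' ∩ {y | ∀ c' ∈ cs', conHolds L c' (ptRank t y)} := by
          intro c hclt hceq
          refine ⟨U, c :: cs, hU, ?_, ?_⟩
          · intro c' hc'
            rcases List.mem_cons.1 hc' with rfl | hc''
            · exact hclt
            · exact hlvl c' hc''
          · rw [Set.sInter_insert, heq, hceq]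
            ext y
            simp only [Set.mem_inter_iff, Set.mem_setOf_eq, List.mem_cons]
            constructor
            · rintro ⟨h1, h2, h3⟩
              exact ⟨h2, fun c' hc' => by
                rcases hc' with rfl | hc''
                · exact h1
                · exact h3 c' hc''⟩
            · rintro ⟨h1, h2⟩
              exact ⟨h2 c (Or.inl rfl), h1, fun c' hc' => h2 c' (Or.inr hc')⟩
        rcases hsh with ⟨b, rfl⟩ | ⟨a, b, _, rfl⟩
        · refine main2 (ξ, none, b) hξ ?_
          ext y
          exact ⟨fun h => ⟨trivial, h⟩, fun h => h.2⟩
        · refine main2 (ξ, some a, b) hξ ?_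
          ext y
          exact ⟨fun h => ⟨h.1, h.2⟩, fun h => ⟨h.1, h.2⟩⟩
  obtain ⟨U, cs, hU, hlvl, heq⟩ := main f hffin hfsub
  have hx' : x ∈ U ∩ {y | ∀ c ∈ cs, conHolds L c (ptRank t y)} := heq ▸ hxW
  refine ⟨U, cs, hU, hx'.1, hlvl, hx'.2, fun y hyU hycs => hWV ?_⟩
  show y ∈ ⋂₀ f
  rw [heq]
  exact ⟨hyU, hycs⟩

end Icard

/-! ### The main rank computation -/

lemma ptRank_icard {X : Type u} {t : TopologicalSpace X} (hs : IsScattered t)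
    {L : Ordinal.{u} → Ordinal.{u} → Ordinal.{u}} (hL : IsHyperlogFamily L) :
    ∀ lam : Ordinal.{u}, ∀ x : X, ptRank (IcardTop L t lam) x = L lam (ptRank t x) := by
  intro lam
  induction lam using Ordinal.induction with
  | h lam IHlam =>
    intro x
    rcases eq_or_lt_of_le ((zero_le (a := lam))) with h0 | h0
    · -- `lam = 0`: the Icard topology is the original topology
      have hgen0 : icardGen L t lam = ∅ := by
        ext S
        simp only [icardGen, Set.mem_setOf_eq, Set.mem_empty_iff_false, iff_false]
        rintro ⟨ξ, hξ, _⟩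
        rw [← h0] at hξ
        exact (not_lt_zero (a := ξ)) hξ
      have htop : IcardTop L t lam = t := by
        rw [icard_def, hgen0]
        have hμ : TopologicalSpace.generateFrom (∅ : Set (Set X)) = ⊤ :=
          le_antisymm le_top
            (TopologicalSpace.le_generateFrom_iff_subset_isOpen.2 (Set.empty_subset _))
        rw [hμ, inf_top_eq]
      rw [htop, ← h0, hyperlog_zero hL]
      rfl
    -- `lam > 0`
    have key : ∀ η : Ordinal.{u},
        dIter (IcardTop L t lam) η = {y | η ≤ L lam (ptRank t y)} := by
      intro η
      induction η using Ordinal.induction with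
      | h η IHη =>
        rcases Ordinal.zero_or_succ_or_isSuccLimit η with rfl | ⟨ζ, rfl⟩ | hη
        · rw [dIter_zero]
          ext y
          simp [zero_le]
        · rw [← Ordinal.add_one_eq_succ, dIter_succ,
            IHη ζ (by rw [← Ordinal.add_one_eq_succ]; exact lt_add_of_pos_right ζ zero_lt_one)]
          ext z
          simp only [Set.mem_setOf_eq]
          constructor
          · intro hz
            by_contra hcon
            rw [Ordinal.add_one_eq_succ, Order.succ_le_iff, not_lt] at hcon
            obtain ⟨ξs, hξs, cs, hlvl, hβ, hcond⟩ := hyperlog_iso hL lam h0 (ptRank t z)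
            obtain ⟨U, hUopen, hzU, hUiso⟩ :=
              @exists_isolating X (IcardTop L t ξs)
                (scattered_mono icard_le_base hs) z
            have hVopen : (IcardTop L t lam).IsOpen
                (U ∩ {y | ∀ c ∈ cs, conHolds L c (ptRank t y)}) :=
              (IcardTop L t lam).isOpen_inter _ _
                (TopologicalSpace.le_def.1 (icard_mono hξs.le) U hUopen)
                (isOpen_conInter hlvl)
            have hzV : z ∈ U ∩ {y | ∀ c ∈ cs, conHolds L c (ptRank t y)} := ⟨hzU, hβ⟩
            obtain ⟨y, ⟨hyV, hyA⟩, hyz⟩ := hz _ hVopen hzV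
            rcases le_or_gt (ptRank (IcardTop L t ξs) z) (ptRank (IcardTop L t ξs) y) with
              hr | hr
            · exact hyz (hUiso y hyV.1 hr)
            · rw [IHlam ξs hξs y, IHlam ξs hξs z] at hr
              have hlt := hcond (ptRank t y) hyV.2 hr
              exact absurd hyA (not_le.2 (lt_of_lt_of_le hlt hcon))
          · intro hz
            rw [Ordinal.add_one_eq_succ, Order.succ_le_iff] at hz
            intro V hVopen hzV
            obtain ⟨U, cs, hUopen, hzU, hlvl, hcs, hsub⟩ := exists_basic hVopen hzV
            obtain ⟨r, hrβ, hrv, hrcs⟩ :=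
              hyperlog_realize hL lam (ptRank t z) cs hlvl hcs ζ hz
            obtain ⟨y, hyU, hyr⟩ := exists_rank_in_open hs hUopen hzU hrβ
            refine ⟨y, ⟨hsub y hyU ?_, ?_⟩, ?_⟩
            · intro c hc
              rw [hyr]
              exact hrcs c hc
            · show ζ ≤ L lam (ptRank t y)
              rw [hyr, hrv]
            · intro h
              rw [h] at hyr
              rw [← hyr] at hrβ
              exact lt_irrefl _ hrβ
        · rw [dIter_limit _ hη]
          ext z
          simp only [Set.mem_iInter, Set.mem_setOf_eq]
          constructor
          · intro hz
            by_contra hcon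
            push_neg at hcon
            have h2 : L lam (ptRank t z) + 1 < η := by
              rw [Ordinal.add_one_eq_succ]
              exact hη.succ_lt hcon
            have h3 := hz _ h2
            rw [IHη _ h2] at h3
            have h4 : L lam (ptRank t z) + 1 ≤ L lam (ptRank t z) := h3
            rw [Ordinal.add_one_eq_succ, Order.succ_le_iff] at h4
            exact lt_irrefl _ h4
          · intro hz o' ho'
            rw [IHη o' ho']
            exact le_trans (le_of_lt ho') hz
    have hset : {ξ : Ordinal.{u} | x ∉ dIter (IcardTop L t lam) (ξ + 1)}
        = {ξ | L lam (ptRank t x) ≤ ξ} := by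
      ext ξ
      simp only [Set.mem_setOf_eq]
      rw [key (ξ + 1)]
      simp only [Set.mem_setOf_eq, not_le]
      rw [Ordinal.add_one_eq_succ, Order.lt_succ_iff]
    show sInf {ξ : Ordinal.{u} | x ∉ dIter (IcardTop L t lam) (ξ + 1)}
      = L lam (ptRank t x)
    rw [hset]
    have hmem : L lam (ptRank t x) ∈ {ξ : Ordinal.{u} | L lam (ptRank t x) ≤ ξ} := Set.mem_setOf_eq.mpr le_rfl
    exact le_antisymm (csInf_le' hmem) (le_csInf ⟨_, hmem⟩ fun b hb => hb)

end AFD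

/-- The key rank identity: the Cantor–Bendixson rank of a point in the `λ`-th Icard topology is
the `λ`-th hyperlogarithm of its rank in the base topology. -/
lemma ptRank_IcardTop {X : Type u} (t : TopologicalSpace X) (hscat : IsScattered t)
    (L : Ordinal.{u} → Ordinal.{u} → Ordinal.{u}) (hL : IsHyperlogFamily L)
    (lam : Ordinal.{u}) (x : X) :
    ptRank (IcardTop L t lam) x = L lam (ptRank t x) :=
  AFD.ptRank_icard hscat hL lam x

/-- For a scattered space `(X, τ)` and ordinals `λ, μ`:
`(τ_λ)_μ = τ_{λ+μ}`. -/
theorem Icard_Icard_eq_Icard_add {X : Type u} (t : TopologicalSpace X)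
    (hscat : IsScattered t)
    (L : Ordinal.{u} → Ordinal.{u} → Ordinal.{u}) (hL : IsHyperlogFamily L)
    (lam mu : Ordinal.{u}) :
    IcardTop L (IcardTop L t lam) mu = IcardTop L t (lam + mu) := by
  have hcomp := hL.2.2.1
  have key : ∀ (ξ : Ordinal.{u}) (x : X),
      L ξ (ptRank (IcardTop L t lam) x) = L (lam + ξ) (ptRank t x) := by
    intro ξ x
    rw [ptRank_IcardTop t hscat L hL lam x, hcomp lam ξ, Function.comp_apply]
  -- the generator families
  set B1 : Set (Set X) := {S : Set X | ∃ ξ < lam,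
      (∃ b : Ordinal.{u}, S = {x | L ξ (ptRank t x) ≤ b}) ∨
      (∃ a b : Ordinal.{u}, a < b ∧ S = {x | a < L ξ (ptRank t x) ∧ L ξ (ptRank t x) ≤ b})}
    with hB1
  set B2 : Set (Set X) := {S : Set X | ∃ ξ < mu,
      (∃ b : Ordinal.{u}, S = {x | L ξ (ptRank (IcardTop L t lam) x) ≤ b}) ∨
      (∃ a b : Ordinal.{u}, a < b ∧
        S = {x | a < L ξ (ptRank (IcardTop L t lam) x) ∧
          L ξ (ptRank (IcardTop L t lam) x) ≤ b})} with hB2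
  set B3 : Set (Set X) := {S : Set X | ∃ ξ < lam + mu,
      (∃ b : Ordinal.{u}, S = {x | L ξ (ptRank t x) ≤ b}) ∨
      (∃ a b : Ordinal.{u}, a < b ∧ S = {x | a < L ξ (ptRank t x) ∧ L ξ (ptRank t x) ≤ b})}
    with hB3
  have hsets : B1 ∪ B2 = B3 := by
    ext S
    constructor
    · rintro (⟨ξ, hξ, hS⟩ | ⟨ξ, hξ, hS⟩)
      · exact ⟨ξ, hξ.trans_le ((le_self_add (a := lam) (b := mu))), hS⟩
      · refine ⟨lam + ξ, (add_lt_add_iff_left lam).mpr hξ, ?_⟩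
        rcases hS with ⟨b, rfl⟩ | ⟨a, b, hab, rfl⟩
        · exact Or.inl ⟨b, by ext x; simp [key ξ x]⟩
        · exact Or.inr ⟨a, b, hab, by ext x; simp [key ξ x]⟩
    · rintro ⟨ζ, hζ, hS⟩
      rcases lt_or_ge ζ lam with h1 | h1
      · exact Or.inl ⟨ζ, h1, hS⟩
      · refine Or.inr ⟨ζ - lam, ?_, ?_⟩
        · rw [← add_lt_add_iff_left lam, Ordinal.add_sub_cancel_of_le h1]
          exact hζ
        · have hz : lam + (ζ - lam) = ζ := Ordinal.add_sub_cancel_of_le h1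
          rcases hS with ⟨b, rfl⟩ | ⟨a, b, hab, rfl⟩
          · refine Or.inl ⟨b, ?_⟩
            ext x
            rw [Set.mem_setOf_eq, Set.mem_setOf_eq, key (ζ - lam) x, hz]
          · refine Or.inr ⟨a, b, hab, ?_⟩
            ext x
            rw [Set.mem_setOf_eq, Set.mem_setOf_eq, key (ζ - lam) x, hz]
  show (t ⊓ TopologicalSpace.generateFrom B1) ⊓ TopologicalSpace.generateFrom B2
      = t ⊓ TopologicalSpace.generateFrom B3
  rw [inf_assoc, ← generateFrom_union, hsets]

end
end
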